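/- arXiv:2604.25017 — 7 statements merged into one kernel-verified Lean document; each statement's English description precedes it below -/
import Mathlib

section
/- Let n ≥ 16 be an integer and p, q, r, s ∈ ℂ[x] polynomials with gcd(p,q,r,s) = 1, max{deg p, deg q, deg r, deg s} ≥ 1, and p^n + q^n = r^n + s^n ≠ 0. Then {p^n, q^n} = {r^n, s^n} (as multisets). -/
open Polynomial

namespace Taxicab


local notation "D" => Polynomial.derivative (R := ℂ)

noncomputable def w2 (x y : ℂ[X]) : ℂ[X] := x * D y - D x * y

noncomputable def w3 (x y z : ℂ[X]) : ℂ[X] :=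
    x * (D y * D (D z) - D (D y) * D z)
  - y * (D x * D (D z) - D (D x) * D z)
  + z * (D x * D (D y) - D (D x) * D y)

lemma natDegree_D_le (f : ℂ[X]) : (D f).natDegree ≤ f.natDegree :=
  (natDegree_derivative_le f).trans (Nat.sub_le _ _)

lemma natDegree_DD_le (f : ℂ[X]) : (D (D f)).natDegree ≤ f.natDegree :=
  (natDegree_D_le _).trans (natDegree_D_le f)

lemma dvd_D_of_pow_dvd {t f : ℂ[X]} {k : ℕ} (h : t ^ (k + 1) ∣ f) : t ^ k ∣ D f := by
  have := pow_sub_one_dvd_derivative_of_pow_dvd h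
  simpa using this

lemma w2_dvd {a b x y : ℂ[X]} (hx : a ∣ x) (hx1 : a ∣ D x) (hy : b ∣ y) (hy1 : b ∣ D y) :
    a * b ∣ w2 x y :=
  dvd_sub (mul_dvd_mul hx hy1) (mul_dvd_mul hx1 hy)

lemma w3_dvd {a b c x y z : ℂ[X]} (hx : a ∣ x) (hx1 : a ∣ D x) (hx2 : a ∣ D (D x))
    (hy : b ∣ y) (hy1 : b ∣ D y) (hy2 : b ∣ D (D y))
    (hz : c ∣ z) (hz1 : c ∣ D z) (hz2 : c ∣ D (D z)) :
    a * b * c ∣ w3 x y z := by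
  have e : w3 x y z =
      x * D y * D (D z) - x * D (D y) * D z
      - D x * y * D (D z) + D (D x) * y * D z
      + D x * D (D y) * z - D (D x) * D y * z := by
    unfold w3; ring
  rw [e]
  exact dvd_sub (dvd_add (dvd_add (dvd_sub (dvd_sub
    (mul_dvd_mul (mul_dvd_mul hx hy1) hz2)
    (mul_dvd_mul (mul_dvd_mul hx hy2) hz1))
    (mul_dvd_mul (mul_dvd_mul hx1 hy) hz2))
    (mul_dvd_mul (mul_dvd_mul hx2 hy) hz1))
    (mul_dvd_mul (mul_dvd_mul hx1 hy2) hz))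
    (mul_dvd_mul (mul_dvd_mul hx2 hy1) hz)

lemma natDegree_mul3_le (a b c : ℂ[X]) :
    (a * b * c).natDegree ≤ a.natDegree + b.natDegree + c.natDegree :=
  natDegree_mul_le.trans (add_le_add natDegree_mul_le le_rfl)

lemma natDegree_w2_le (x y : ℂ[X]) : (w2 x y).natDegree ≤ x.natDegree + y.natDegree := by
  refine (natDegree_sub_le _ _).trans (max_le ?_ ?_)
  · exact natDegree_mul_le.trans (add_le_add le_rfl (natDegree_D_le y))
  · exact natDegree_mul_le.trans (add_le_add (natDegree_D_le x) le_rfl)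

lemma natDegree_w3_le (x y z : ℂ[X]) :
    (w3 x y z).natDegree ≤ x.natDegree + y.natDegree + z.natDegree := by
  have e : w3 x y z =
      x * D y * D (D z) - x * D (D y) * D z
      - D x * y * D (D z) + D (D x) * y * D z
      + D x * D (D y) * z - D (D x) * D y * z := by
    unfold w3; ring
  rw [e]
  have B : ∀ u v w : ℂ[X], u.natDegree ≤ x.natDegree → v.natDegree ≤ y.natDegree →
      w.natDegree ≤ z.natDegree →
      (u * v * w).natDegree ≤ x.natDegree + y.natDegree + z.natDegree := fun u v w h1 h2 h3 =>
    (natDegree_mul3_le u v w).trans (by omega)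
  refine (natDegree_sub_le _ _).trans (max_le ((natDegree_add_le _ _).trans (max_le
    ((natDegree_add_le _ _).trans (max_le ((natDegree_sub_le _ _).trans (max_le
    ((natDegree_sub_le _ _).trans (max_le ?_ ?_)) ?_)) ?_)) ?_)) ?_)
  · exact B _ _ _ le_rfl (natDegree_D_le y) (natDegree_DD_le z)
  · exact B _ _ _ le_rfl (natDegree_DD_le y) (natDegree_D_le z)
  · exact B _ _ _ (natDegree_D_le x) le_rfl (natDegree_DD_le z)
  · exact B _ _ _ (natDegree_DD_le x) le_rfl (natDegree_D_le z)
  · exact B _ _ _ (natDegree_D_le x) (natDegree_DD_le y) le_rfl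
  · exact B _ _ _ (natDegree_DD_le x) (natDegree_D_le y) le_rfl

lemma w2_cycle {x y z : ℂ[X]} (h : x + y + z = 0) :
    w2 y z = w2 x y ∧ w2 x z = - w2 x y := by
  have hz : z = -x - y := by linear_combination h
  subst hz
  unfold w2
  simp only [derivative_sub, derivative_neg]
  constructor <;> ring

lemma w3_rel {x y z w : ℂ[X]} (h : x + y + z + w = 0) :
    w3 w y z = - w3 x y z ∧ w3 x w z = - w3 x y z ∧ w3 x y w = - w3 x y z := by
  have hw : w = -x - y - z := by linear_combination h
  subst hw
  unfold w3
  simp only [derivative_sub, derivative_neg]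
  refine ⟨by ring, by ring, by ring⟩

lemma frobenius_id (x y z : ℂ[X]) : w2 (w2 x y) (w2 x z) = x * w3 x y z := by
  unfold w2 w3
  simp only [derivative_sub, derivative_mul]
  ring

lemma w2_C_mul_right (x y : ℂ[X]) (μ : ℂ) : w2 x (C μ * y) = C μ * w2 x y := by
  unfold w2
  rw [derivative_C_mul]
  ring

lemma w2_sub_right (x y z : ℂ[X]) : w2 x (y - z) = w2 x y - w2 x z := by
  unfold w2
  rw [derivative_sub]
  ring

lemma w2_zero_right (x : ℂ[X]) : w2 x 0 = 0 := by
  unfold w2; simp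




lemma glue2 {Z W x y a b : ℂ[X]} {kx ky m : ℕ}
    (hx : Z ∣ W * x ^ kx) (hy : Z ∣ W * y ^ ky) (hm : kx + ky ≤ m + 1) :
    Z ∣ W * (a * x + b * y) ^ m := by
  rw [add_pow, Finset.mul_sum]
  refine Finset.dvd_sum fun i hi => ?_
  simp only [Finset.mem_range] at hi
  by_cases h : kx ≤ i
  · refine hx.trans (mul_dvd_mul_left W ?_)
    have h1 : x ^ kx ∣ (a * x) ^ i := by
      rw [mul_pow]
      exact ((pow_dvd_pow x h).trans (dvd_mul_left _ _))
    exact (h1.mul_right _).mul_right _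
  · have h2 : ky ≤ m - i := by omega
    refine hy.trans (mul_dvd_mul_left W ?_)
    have h1 : y ^ ky ∣ (b * y) ^ (m - i) := by
      rw [mul_pow]
      exact ((pow_dvd_pow y h2).trans (dvd_mul_left _ _))
    exact (h1.mul_left _).mul_right _

lemma glue3 {t1 t2 t3 W A1 A2 A3 : ℂ[X]} {k : ℕ}
    (h1 : (t2 * t3) ^ k ∣ W) (h2 : (t1 * t3) ^ k ∣ W) (h3 : (t1 * t2) ^ k ∣ W)
    (hB : A1 * t1 + A2 * t2 + A3 * t3 = 1) : (t1 * t2 * t3) ^ k ∣ W := by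
  have e1 : (t1 * t2 * t3) ^ k ∣ W * t1 ^ k := by
    have e : (t1 * t2 * t3) ^ k = (t2 * t3) ^ k * t1 ^ k := by ring
    rw [e]; exact mul_dvd_mul h1 dvd_rfl
  have e2 : (t1 * t2 * t3) ^ k ∣ W * t2 ^ k := by
    have e : (t1 * t2 * t3) ^ k = (t1 * t3) ^ k * t2 ^ k := by ring
    rw [e]; exact mul_dvd_mul h2 dvd_rfl
  have e3 : (t1 * t2 * t3) ^ k ∣ W * t3 ^ k := by
    have e : (t1 * t2 * t3) ^ k = (t1 * t2) ^ k * t3 ^ k := by ring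
    rw [e]; exact mul_dvd_mul h3 dvd_rfl
  have inner : (t1 * t2 * t3) ^ k ∣ W * (A2 * t2 + A3 * t3) ^ (2 * k) :=
    glue2 e2 e3 (by omega)
  have outer : (t1 * t2 * t3) ^ k ∣ W * (A1 * t1 + 1 * (A2 * t2 + A3 * t3)) ^ (3 * k) :=
    glue2 e1 inner (by omega)
  rw [show A1 * t1 + 1 * (A2 * t2 + A3 * t3) = (1 : ℂ[X]) by linear_combination hB,
    one_pow, mul_one] at outer
  exact outer

lemma glue4 {t1 t2 t3 t4 W A1 A2 A3 A4 : ℂ[X]} {k : ℕ}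
    (h1 : (t2 * t3 * t4) ^ k ∣ W) (h2 : (t1 * t3 * t4) ^ k ∣ W)
    (h3 : (t1 * t2 * t4) ^ k ∣ W) (h4 : (t1 * t2 * t3) ^ k ∣ W)
    (hB : A1 * t1 + A2 * t2 + A3 * t3 + A4 * t4 = 1) : (t1 * t2 * t3 * t4) ^ k ∣ W := by
  have e1 : (t1 * t2 * t3 * t4) ^ k ∣ W * t1 ^ k := by
    have e : (t1 * t2 * t3 * t4) ^ k = (t2 * t3 * t4) ^ k * t1 ^ k := by ring
    rw [e]; exact mul_dvd_mul h1 dvd_rfl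
  have e2 : (t1 * t2 * t3 * t4) ^ k ∣ W * t2 ^ k := by
    have e : (t1 * t2 * t3 * t4) ^ k = (t1 * t3 * t4) ^ k * t2 ^ k := by ring
    rw [e]; exact mul_dvd_mul h2 dvd_rfl
  have e3 : (t1 * t2 * t3 * t4) ^ k ∣ W * t3 ^ k := by
    have e : (t1 * t2 * t3 * t4) ^ k = (t1 * t2 * t4) ^ k * t3 ^ k := by ring
    rw [e]; exact mul_dvd_mul h3 dvd_rfl
  have e4 : (t1 * t2 * t3 * t4) ^ k ∣ W * t4 ^ k := by
    have e : (t1 * t2 * t3 * t4) ^ k = (t1 * t2 * t3) ^ k * t4 ^ k := by ring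
    rw [e]; exact mul_dvd_mul h4 dvd_rfl
  have innerL : (t1 * t2 * t3 * t4) ^ k ∣ W * (A1 * t1 + A2 * t2) ^ (2 * k) :=
    glue2 e1 e2 (by omega)
  have innerR : (t1 * t2 * t3 * t4) ^ k ∣ W * (A3 * t3 + A4 * t4) ^ (2 * k) :=
    glue2 e3 e4 (by omega)
  have outer : (t1 * t2 * t3 * t4) ^ k ∣
      W * (1 * (A1 * t1 + A2 * t2) + 1 * (A3 * t3 + A4 * t4)) ^ (4 * k) :=
    glue2 innerL innerR (by omega)
  rw [show 1 * (A1 * t1 + A2 * t2) + 1 * (A3 * t3 + A4 * t4) = (1 : ℂ[X]) by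
    linear_combination hB, one_pow, mul_one] at outer
  exact outer

lemma exists_prime_dvd {t : ℂ[X]} (h : t.natDegree ≠ 0) : ∃ π : ℂ[X], Prime π ∧ π ∣ t := by
  have h0 : t.degree ≠ 0 := degree_ne_of_natDegree_ne h
  obtain ⟨z, hz⟩ := Complex.isAlgClosed.exists_root t h0
  exact ⟨X - C z, prime_X_sub_C z, dvd_iff_isRoot.mpr hz⟩

lemma dvd_pow_of_dvd_C_mul {π t : ℂ[X]} {c : ℂ} {n : ℕ} (hc : c ≠ 0)
    (h : π ∣ C c * t ^ n) : π ∣ t ^ n := by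
  have e : t ^ n = C c⁻¹ * (C c * t ^ n) := by
    rw [← mul_assoc, ← C_mul, inv_mul_cancel₀ hc, C_1, one_mul]
  rw [e]
  exact h.mul_left _





lemma prop_of_w2_eq_zero {x y : ℂ[X]} (hx : x ≠ 0) (hy : y ≠ 0) (h : w2 x y = 0) :
    ∃ μ : ℂ, μ ≠ 0 ∧ y = C μ * x := by
  classical
  set g : ℂ[X] := GCDMonoid.gcd x y with hg
  have hgne : g ≠ 0 := gcd_ne_zero_of_left hx
  set x1 : ℂ[X] := x / g with hx1def
  set y1 : ℂ[X] := y / g with hy1def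
  have hx1 : x = g * x1 := (EuclideanDomain.mul_div_cancel' hgne (gcd_dvd_left x y)).symm
  have hy1 : y = g * y1 := (EuclideanDomain.mul_div_cancel' hgne (gcd_dvd_right x y)).symm
  have hco : IsCoprime x1 y1 := isCoprime_div_gcd_div_gcd hy
  have hx1ne : x1 ≠ 0 := fun h0 => hx (by rw [hx1, h0, mul_zero])
  have hy1ne : y1 ≠ 0 := fun h0 => hy (by rw [hy1, h0, mul_zero])
  have hrel : g * g * (x1 * D y1 - D x1 * y1) = 0 := by
    rw [← h]
    unfold w2
    rw [hx1, hy1]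
    simp only [derivative_mul]
    ring
  have h2 : x1 * D y1 - D x1 * y1 = 0 := by
    rcases mul_eq_zero.mp hrel with h' | h'
    · exact absurd h' (mul_ne_zero hgne hgne)
    · exact h'
  have hxd : x1 ∣ D x1 := by
    have hdd : x1 ∣ D x1 * y1 := ⟨D y1, by linear_combination -h2⟩
    exact hco.dvd_of_dvd_mul_right hdd
  have hDx1 : D x1 = 0 := by
    by_contra hd
    have hle : x1.natDegree ≤ (D x1).natDegree := natDegree_le_of_dvd hxd hd
    have hne0 : x1.natDegree ≠ 0 := by
      intro h0
      apply hd
      have := eq_C_of_natDegree_eq_zero h0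
      rw [this]
      simp
    exact absurd (natDegree_derivative_lt hne0) (not_lt.mpr hle)
  have hDy1 : D y1 = 0 := by
    have hxy : x1 * D y1 = 0 := by rw [hDx1] at h2; linear_combination h2
    rcases mul_eq_zero.mp hxy with h' | h'
    · exact absurd h' hx1ne
    · exact h'
  have hx1C : x1 = C (x1.coeff 0) :=
    eq_C_of_natDegree_eq_zero (natDegree_eq_zero_of_derivative_eq_zero hDx1)
  have hy1C : y1 = C (y1.coeff 0) :=
    eq_C_of_natDegree_eq_zero (natDegree_eq_zero_of_derivative_eq_zero hDy1)
  set a := x1.coeff 0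
  set b := y1.coeff 0
  have hane : a ≠ 0 := fun h0 => hx1ne (by rw [hx1C, h0, C_0])
  have hbne : b ≠ 0 := fun h0 => hy1ne (by rw [hy1C, h0, C_0])
  refine ⟨b * a⁻¹, mul_ne_zero hbne (inv_ne_zero hane), ?_⟩
  rw [hy1, hy1C, hx1, hx1C, C_mul]
  rw [show C b * C a⁻¹ * (g * C a) = g * C b * (C a⁻¹ * C a) by ring,
    ← C_mul, inv_mul_cancel₀ hane, C_1, mul_one]

lemma bezout3_of_prime_cond {ta tb tc : ℂ[X]} (hne : ta ≠ 0)
    (hprime : ∀ π : ℂ[X], Prime π → π ∣ ta → π ∣ tb → π ∣ tc → False) :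
    ∃ B1 B2 B3 : ℂ[X], B1 * ta + B2 * tb + B3 * tc = 1 := by
  classical
  set g1 : ℂ[X] := EuclideanDomain.gcd ta tb with hg1
  set g : ℂ[X] := EuclideanDomain.gcd g1 tc with hg
  have hga : g ∣ ta := (EuclideanDomain.gcd_dvd_left g1 tc).trans (EuclideanDomain.gcd_dvd_left ta tb)
  have hgb : g ∣ tb := (EuclideanDomain.gcd_dvd_left g1 tc).trans (EuclideanDomain.gcd_dvd_right ta tb)
  have hgc : g ∣ tc := EuclideanDomain.gcd_dvd_right g1 tc
  have hgne : g ≠ 0 := by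
    intro h0
    rw [hg] at h0
    obtain ⟨h1, -⟩ := EuclideanDomain.gcd_eq_zero_iff.mp h0
    rw [hg1] at h1
    obtain ⟨h2, -⟩ := EuclideanDomain.gcd_eq_zero_iff.mp h1
    exact hne h2
  have hu : IsUnit g := by
    by_contra hu
    have hdne : g.natDegree ≠ 0 := by
      intro h0
      apply hu
      have hC := eq_C_of_natDegree_eq_zero h0
      have : g.coeff 0 ≠ 0 := fun hc0 => hgne (by rw [hC, hc0, C_0])
      rw [hC]
      exact isUnit_C.mpr (this.isUnit)
    obtain ⟨π, hπ, hπg⟩ := exists_prime_dvd hdne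
    exact hprime π hπ (hπg.trans hga) (hπg.trans hgb) (hπg.trans hgc)
  obtain ⟨γ, hγ⟩ : ∃ γ : ℂ, g = C γ := by
    have := natDegree_eq_zero_of_isUnit hu
    exact ⟨g.coeff 0, eq_C_of_natDegree_eq_zero this⟩
  have hγne : γ ≠ 0 := fun h0 => hgne (by rw [hγ, h0, C_0])
  have comb : g = ta * (EuclideanDomain.gcdA ta tb * EuclideanDomain.gcdA g1 tc)
      + tb * (EuclideanDomain.gcdB ta tb * EuclideanDomain.gcdA g1 tc)
      + tc * EuclideanDomain.gcdB g1 tc := by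
    have e1 : g = g1 * EuclideanDomain.gcdA g1 tc + tc * EuclideanDomain.gcdB g1 tc :=
      EuclideanDomain.gcd_eq_gcd_ab g1 tc
    have e2 : g1 = ta * EuclideanDomain.gcdA ta tb + tb * EuclideanDomain.gcdB ta tb :=
      EuclideanDomain.gcd_eq_gcd_ab ta tb
    rw [e1, e2]; ring
  refine ⟨C γ⁻¹ * (EuclideanDomain.gcdA ta tb * EuclideanDomain.gcdA g1 tc),
    C γ⁻¹ * (EuclideanDomain.gcdB ta tb * EuclideanDomain.gcdA g1 tc),
    C γ⁻¹ * EuclideanDomain.gcdB g1 tc, ?_⟩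
  rw [hγ] at comb
  calc C γ⁻¹ * (EuclideanDomain.gcdA ta tb * EuclideanDomain.gcdA g1 tc) * ta
      + C γ⁻¹ * (EuclideanDomain.gcdB ta tb * EuclideanDomain.gcdA g1 tc) * tb
      + C γ⁻¹ * EuclideanDomain.gcdB g1 tc * tc
      = C γ⁻¹ * (ta * (EuclideanDomain.gcdA ta tb * EuclideanDomain.gcdA g1 tc)
        + tb * (EuclideanDomain.gcdB ta tb * EuclideanDomain.gcdA g1 tc)
        + tc * EuclideanDomain.gcdB g1 tc) := by ring
    _ = C γ⁻¹ * C γ := by rw [← comb]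
    _ = 1 := by rw [← C_mul, inv_mul_cancel₀ hγne, C_1]


lemma L2aux {n : ℕ} (hn : 1 ≤ n) {γ2 γ3 : ℂ} {t2 t3 : ℂ[X]} (h2 : γ2 ≠ 0) (h3 : γ3 ≠ 0)
    (hsum : C γ2 * t2 ^ n + C γ3 * t3 ^ n = 0) (hco : IsCoprime t2 t3) :
    t2.natDegree = 0 := by
  by_contra hd
  obtain ⟨π, hπ, hdvd⟩ := exists_prime_dvd hd
  have hπ3 : π ∣ t3 := by
    have h1 : π ∣ C γ3 * t3 ^ n := by
      have e : C γ3 * t3 ^ n = -(C γ2 * t2 ^ n) := by linear_combination hsum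
      rw [e, dvd_neg]
      exact (hdvd.trans (dvd_pow_self t2 (by omega))).mul_left _
    exact hπ.dvd_of_dvd_pow (dvd_pow_of_dvd_C_mul h3 h1)
  exact hπ.not_unit (hco.isUnit_of_dvd' hdvd hπ3)

lemma L2 {n : ℕ} (hn : 1 ≤ n) {γ2 γ3 : ℂ} {t2 t3 : ℂ[X]} (h2 : γ2 ≠ 0) (h3 : γ3 ≠ 0)
    (hsum : C γ2 * t2 ^ n + C γ3 * t3 ^ n = 0) (hco : IsCoprime t2 t3) :
    t2.natDegree = 0 ∧ t3.natDegree = 0 :=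
  ⟨L2aux hn h2 h3 hsum hco,
   L2aux hn h3 h2 (by linear_combination hsum) hco.symm⟩

lemma natDegree_C_mul_pow_le (c : ℂ) (t : ℂ[X]) (n : ℕ) :
    (C c * t ^ n).natDegree ≤ n * t.natDegree :=
  natDegree_mul_le.trans (by simp [natDegree_pow])

lemma pow_dvds {t : ℂ[X]} {c : ℂ} {n : ℕ} (hn : 2 ≤ n) :
    (t ^ (n - 1) ∣ C c * t ^ n ∧ t ^ (n - 1) ∣ D (C c * t ^ n)) ∧
    (t ^ (n - 2) ∣ C c * t ^ n ∧ t ^ (n - 2) ∣ D (C c * t ^ n) ∧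
      t ^ (n - 2) ∣ D (D (C c * t ^ n))) := by
  have h0 : t ^ n ∣ C c * t ^ n := dvd_mul_left _ _
  have hD : t ^ (n - 1) ∣ D (C c * t ^ n) := by
    apply dvd_D_of_pow_dvd
    rwa [show n - 1 + 1 = n by omega]
  have hDD : t ^ (n - 2) ∣ D (D (C c * t ^ n)) := by
    apply dvd_D_of_pow_dvd
    rwa [show n - 2 + 1 = n - 1 by omega]
  exact ⟨⟨(pow_dvd_pow t (by omega)).trans h0, hD⟩,
    ⟨(pow_dvd_pow t (by omega)).trans h0, (pow_dvd_pow t (by omega)).trans hD, hDD⟩⟩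

lemma L3 {n : ℕ} (hn : 16 ≤ n) {γ1 γ2 γ3 : ℂ} {t1 t2 t3 : ℂ[X]}
    (h1 : γ1 ≠ 0) (h2 : γ2 ≠ 0) (h3 : γ3 ≠ 0)
    (hsum : C γ1 * t1 ^ n + C γ2 * t2 ^ n + C γ3 * t3 ^ n = 0)
    (hB : ∃ A1 A2 A3 : ℂ[X], A1 * t1 + A2 * t2 + A3 * t3 = 1) :
    t1.natDegree = 0 ∧ t2.natDegree = 0 ∧ t3.natDegree = 0 := by
  obtain ⟨A1, A2, A3, hBe⟩ := hB
  by_cases ht1 : t1 = 0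
  · subst ht1
    have hsum' : C γ2 * t2 ^ n + C γ3 * t3 ^ n = 0 := by
      have e : (0 : ℂ[X]) ^ n = 0 := zero_pow (by omega)
      rw [e, mul_zero] at hsum
      linear_combination hsum
    have hco : IsCoprime t2 t3 := ⟨A2, A3, by linear_combination hBe⟩
    obtain ⟨hd2, hd3⟩ := L2 (by omega) h2 h3 hsum' hco
    exact ⟨natDegree_zero, hd2, hd3⟩
  by_cases ht2 : t2 = 0
  · subst ht2
    have hsum' : C γ1 * t1 ^ n + C γ3 * t3 ^ n = 0 := by
      have e : (0 : ℂ[X]) ^ n = 0 := zero_pow (by omega)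
      rw [e, mul_zero] at hsum
      linear_combination hsum
    have hco : IsCoprime t1 t3 := ⟨A1, A3, by linear_combination hBe⟩
    obtain ⟨hd1, hd3⟩ := L2 (by omega) h1 h3 hsum' hco
    exact ⟨hd1, natDegree_zero, hd3⟩
  by_cases ht3 : t3 = 0
  · subst ht3
    have hsum' : C γ1 * t1 ^ n + C γ2 * t2 ^ n = 0 := by
      have e : (0 : ℂ[X]) ^ n = 0 := zero_pow (by omega)
      rw [e, mul_zero] at hsum
      linear_combination hsum
    have hco : IsCoprime t1 t2 := ⟨A1, A2, by linear_combination hBe⟩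
    obtain ⟨hd1, hd2⟩ := L2 (by omega) h1 h2 hsum' hco
    exact ⟨hd1, hd2, natDegree_zero⟩
  -- all nonzero
  have hf1ne : C γ1 * t1 ^ n ≠ 0 := mul_ne_zero (C_ne_zero.mpr h1) (pow_ne_zero _ ht1)
  have hf2ne : C γ2 * t2 ^ n ≠ 0 := mul_ne_zero (C_ne_zero.mpr h2) (pow_ne_zero _ ht2)
  have hf3ne : C γ3 * t3 ^ n ≠ 0 := mul_ne_zero (C_ne_zero.mpr h3) (pow_ne_zero _ ht3)
  by_cases hW : w2 (C γ1 * t1 ^ n) (C γ2 * t2 ^ n) = 0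
  · -- proportional case
    obtain ⟨μ, hμ, hprop⟩ := prop_of_w2_eq_zero hf1ne hf2ne hW
    have hf3 : C γ3 * t3 ^ n = C (-(1 + μ)) * (C γ1 * t1 ^ n) := by
      rw [map_neg, C_add, C_1]
      linear_combination hsum - hprop
    have hμ1 : (1 : ℂ) + μ ≠ 0 := by
      intro h0
      apply hf3ne
      rw [hf3, h0, neg_zero, C_0, zero_mul]
    have hd1 : t1.natDegree = 0 := by
      by_contra hd
      obtain ⟨π, hπ, hdvd⟩ := exists_prime_dvd hd
      have hπt1n : π ∣ t1 ^ n := hdvd.trans (dvd_pow_self t1 (by omega))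
      have hπ2 : π ∣ t2 := by
        have : π ∣ C γ2 * t2 ^ n := by
          rw [hprop]
          exact (hπt1n.mul_left _).mul_left _
        exact hπ.dvd_of_dvd_pow (dvd_pow_of_dvd_C_mul h2 this)
      have hπ3 : π ∣ t3 := by
        have : π ∣ C γ3 * t3 ^ n := by
          rw [hf3]
          exact (hπt1n.mul_left _).mul_left _
        exact hπ.dvd_of_dvd_pow (dvd_pow_of_dvd_C_mul h3 this)
      have : π ∣ (1 : ℂ[X]) := by
        rw [← hBe]
        exact dvd_add (dvd_add (hdvd.mul_left A1) (hπ2.mul_left A2)) (hπ3.mul_left A3)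
      exact hπ.not_unit (isUnit_of_dvd_one this)
    have hdeg_of : ∀ (γ : ℂ) (c : ℂ) (t : ℂ[X]), γ ≠ 0 → t ≠ 0 →
        C γ * t ^ n = C c * (C γ1 * t1 ^ n) → t.natDegree = 0 := by
      intro γ c t hγ ht he
      have e2 : t ^ n = C γ⁻¹ * (C c * (C γ1 * t1 ^ n)) := by
        rw [← he, ← mul_assoc, ← C_mul, inv_mul_cancel₀ hγ, C_1, one_mul]
      have hdeg : (t ^ n).natDegree ≤ n * t1.natDegree := by
        rw [e2]
        calc (C γ⁻¹ * (C c * (C γ1 * t1 ^ n))).natDegree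
            = (C (γ⁻¹ * (c * γ1)) * t1 ^ n).natDegree := by rw [C_mul, C_mul]; ring_nf
          _ ≤ n * t1.natDegree := natDegree_C_mul_pow_le _ _ _
      rw [hd1, Nat.mul_zero, Nat.le_zero, natDegree_pow] at hdeg
      exact (Nat.mul_eq_zero.mp hdeg).resolve_left (by omega)
    have hd2 : t2.natDegree = 0 := hdeg_of γ2 μ t2 h2 ht2 hprop
    have hd3 : t3.natDegree = 0 := hdeg_of γ3 (-(1+μ)) t3 h3 ht3 (by rw [hf3])
    exact ⟨hd1, hd2, hd3⟩
  · -- Wronskian nonzero: Mason-type estimate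
    have hcyc := w2_cycle hsum
    have hdvd12 : (t1 * t2) ^ (n - 1) ∣ w2 (C γ1 * t1 ^ n) (C γ2 * t2 ^ n) := by
      rw [mul_pow]
      exact w2_dvd (pow_dvds (t := t1) (c := γ1) (by omega)).1.1
        (pow_dvds (t := t1) (c := γ1) (by omega)).1.2
        (pow_dvds (t := t2) (c := γ2) (by omega)).1.1
        (pow_dvds (t := t2) (c := γ2) (by omega)).1.2
    have hdvd23 : (t2 * t3) ^ (n - 1) ∣ w2 (C γ1 * t1 ^ n) (C γ2 * t2 ^ n) := by
      rw [← hcyc.1, mul_pow]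
      exact w2_dvd (pow_dvds (t := t2) (c := γ2) (by omega)).1.1
        (pow_dvds (t := t2) (c := γ2) (by omega)).1.2
        (pow_dvds (t := t3) (c := γ3) (by omega)).1.1
        (pow_dvds (t := t3) (c := γ3) (by omega)).1.2
    have hdvd13 : (t1 * t3) ^ (n - 1) ∣ w2 (C γ1 * t1 ^ n) (C γ2 * t2 ^ n) := by
      have : (t1 * t3) ^ (n - 1) ∣ w2 (C γ1 * t1 ^ n) (C γ3 * t3 ^ n) := by
        rw [mul_pow]
        exact w2_dvd (pow_dvds (t := t1) (c := γ1) (by omega)).1.1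
          (pow_dvds (t := t1) (c := γ1) (by omega)).1.2
          (pow_dvds (t := t3) (c := γ3) (by omega)).1.1
          (pow_dvds (t := t3) (c := γ3) (by omega)).1.2
      rw [hcyc.2] at this
      exact (dvd_neg.mp this)
    have hglue : (t1 * t2 * t3) ^ (n - 1) ∣ w2 (C γ1 * t1 ^ n) (C γ2 * t2 ^ n) :=
      glue3 hdvd23 hdvd13 hdvd12 hBe
    set Wd := (w2 (C γ1 * t1 ^ n) (C γ2 * t2 ^ n)).natDegree with hWd
    have hlow : (n - 1) * (t1.natDegree + t2.natDegree + t3.natDegree) ≤ Wd := by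
      have := natDegree_le_of_dvd hglue hW
      rwa [natDegree_pow, natDegree_mul (mul_ne_zero ht1 ht2) ht3,
        natDegree_mul ht1 ht2] at this
    have hub : ∀ {a b : ℂ} {u v : ℂ[X]},
        (w2 (C a * u ^ n) (C b * v ^ n)).natDegree ≤ n * u.natDegree + n * v.natDegree :=
      fun {a b u v} => (natDegree_w2_le _ _).trans
        (add_le_add (natDegree_C_mul_pow_le a u n) (natDegree_C_mul_pow_le b v n))
    have u12 : Wd ≤ n * t1.natDegree + n * t2.natDegree := hub
    have u23 : Wd ≤ n * t2.natDegree + n * t3.natDegree := by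
      rw [hWd, ← hcyc.1]; exact hub
    have u13 : Wd ≤ n * t1.natDegree + n * t3.natDegree := by
      have : (w2 (C γ1 * t1 ^ n) (C γ3 * t3 ^ n)).natDegree
          ≤ n * t1.natDegree + n * t3.natDegree := hub
      rwa [hcyc.2, natDegree_neg] at this
    have hS : t1.natDegree + t2.natDegree + t3.natDegree = 0 := by
      set S := t1.natDegree + t2.natDegree + t3.natDegree with hSdef
      by_contra hS0
      have hS1 : 1 ≤ S := Nat.one_le_iff_ne_zero.mpr hS0
      have key : (3 * (n - 1)) * S ≤ (2 * n) * S := by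
        calc (3 * (n - 1)) * S = (n-1)*S + ((n-1)*S + (n-1)*S) := by ring
          _ ≤ Wd + (Wd + Wd) := by
              exact add_le_add hlow (add_le_add hlow hlow)
          _ ≤ (n * t1.natDegree + n * t2.natDegree) + ((n * t2.natDegree + n * t3.natDegree)
              + (n * t1.natDegree + n * t3.natDegree)) := by
              exact add_le_add u12 (add_le_add u23 u13)
          _ = (2 * n) * S := by rw [hSdef]; ring
      have := Nat.le_of_mul_le_mul_right key (by omega)
      omega
    refine ⟨by omega, by omega, by omega⟩

lemma deg_zero_of {c : ℂ} {t : ℂ[X]} {n : ℕ} (hc : c ≠ 0) (hn : n ≠ 0)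
    (h : (C c * t ^ n).natDegree = 0) : t.natDegree = 0 := by
  have e : t ^ n = C c⁻¹ * (C c * t ^ n) := by
    rw [← mul_assoc, ← C_mul, inv_mul_cancel₀ hc, C_1, one_mul]
  have hle : (t ^ n).natDegree ≤ 0 := by
    rw [e]
    exact natDegree_mul_le.trans (by simp [h])
  rw [natDegree_pow] at hle
  exact (Nat.mul_eq_zero.mp (Nat.le_zero.mp hle)).resolve_left hn

lemma K_pair {n : ℕ} (hn : 16 ≤ n) {ca cb cc cd : ℂ} {ta tb tc td : ℂ[X]} {μ : ℂ}
    (ha : ca ≠ 0) (hb : cb ≠ 0) (hc : cc ≠ 0) (hd : cd ≠ 0)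
    (hta : ta ≠ 0) (htb : tb ≠ 0)
    (hprop : C cb * tb ^ n = C μ * (C ca * ta ^ n))
    (hsum3 : C ((1 + μ) * ca) * ta ^ n + C cc * tc ^ n + C cd * td ^ n = 0)
    (hμ1 : 1 + μ ≠ 0)
    (hBez4 : ∃ A1 A2 A3 A4 : ℂ[X], A1 * ta + A2 * tb + A3 * tc + A4 * td = 1) :
    ta.natDegree = 0 ∧ tb.natDegree = 0 ∧ tc.natDegree = 0 ∧ td.natDegree = 0 := by
  obtain ⟨A1, A2, A3, A4, hBe⟩ := hBez4
  have hbez3 : ∃ B1 B2 B3 : ℂ[X], B1 * ta + B2 * tc + B3 * td = 1 := by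
    apply bezout3_of_prime_cond hta
    intro π hπ hπa hπc hπd
    have hπb : π ∣ tb := by
      have hdv : π ∣ C cb * tb ^ n := by
        rw [hprop]
        exact ((hπa.trans (dvd_pow_self ta (by omega))).mul_left _).mul_left _
      exact hπ.dvd_of_dvd_pow (dvd_pow_of_dvd_C_mul hb hdv)
    have hone : π ∣ (1 : ℂ[X]) := by
      rw [← hBe]
      exact dvd_add (dvd_add (dvd_add (hπa.mul_left A1) (hπb.mul_left A2))
        (hπc.mul_left A3)) (hπd.mul_left A4)
    exact hπ.not_unit (isUnit_of_dvd_one hone)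
  obtain ⟨hda, hdc, hdd⟩ := L3 hn (mul_ne_zero hμ1 ha) hc hd hsum3 hbez3
  have hdb : tb.natDegree = 0 := by
    have e2 : tb ^ n = C cb⁻¹ * (C μ * (C ca * ta ^ n)) := by
      rw [← hprop, ← mul_assoc, ← C_mul, inv_mul_cancel₀ hb, C_1, one_mul]
    have hdeg : (tb ^ n).natDegree ≤ n * ta.natDegree := by
      rw [e2]
      calc (C cb⁻¹ * (C μ * (C ca * ta ^ n))).natDegree
          = (C (cb⁻¹ * (μ * ca)) * ta ^ n).natDegree := by rw [C_mul, C_mul]; ring_nf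
        _ ≤ n * ta.natDegree := natDegree_C_mul_pow_le _ _ _
    rw [hda, Nat.mul_zero, Nat.le_zero, natDegree_pow] at hdeg
    exact (Nat.mul_eq_zero.mp hdeg).resolve_left (by omega)
  exact ⟨hda, hdb, hdc, hdd⟩

lemma K {n : ℕ} (hn : 16 ≤ n) {c1 c2 c3 c4 : ℂ} {t1 t2 t3 t4 : ℂ[X]}
    (h1 : c1 ≠ 0) (h2 : c2 ≠ 0) (h3 : c3 ≠ 0) (h4 : c4 ≠ 0)
    (hsum : C c1 * t1 ^ n + C c2 * t2 ^ n + C c3 * t3 ^ n + C c4 * t4 ^ n = 0)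
    (hB : ∃ A1 A2 A3 A4 : ℂ[X], A1 * t1 + A2 * t2 + A3 * t3 + A4 * t4 = 1)
    (h12 : C c1 * t1 ^ n + C c2 * t2 ^ n ≠ 0)
    (h13 : C c1 * t1 ^ n + C c3 * t3 ^ n ≠ 0)
    (h14 : C c1 * t1 ^ n + C c4 * t4 ^ n ≠ 0) :
    t1.natDegree = 0 ∧ t2.natDegree = 0 ∧ t3.natDegree = 0 ∧ t4.natDegree = 0 := by
  obtain ⟨A1, A2, A3, A4, hBe⟩ := hB
  have hzero : ∀ m : ℕ, m = n → (0 : ℂ[X]) ^ m = 0 := fun m hm => zero_pow (by omega)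
  by_cases ht1 : t1 = 0
  · subst ht1
    rw [hzero n rfl, mul_zero] at hsum
    have hsum' : C c2 * t2 ^ n + C c3 * t3 ^ n + C c4 * t4 ^ n = 0 := by
      linear_combination hsum
    obtain ⟨d2, d3, d4⟩ := L3 hn h2 h3 h4 hsum' ⟨A2, A3, A4, by linear_combination hBe⟩
    exact ⟨natDegree_zero, d2, d3, d4⟩
  by_cases ht2 : t2 = 0
  · subst ht2
    rw [hzero n rfl, mul_zero] at hsum
    have hsum' : C c1 * t1 ^ n + C c3 * t3 ^ n + C c4 * t4 ^ n = 0 := by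
      linear_combination hsum
    obtain ⟨d1, d3, d4⟩ := L3 hn h1 h3 h4 hsum' ⟨A1, A3, A4, by linear_combination hBe⟩
    exact ⟨d1, natDegree_zero, d3, d4⟩
  by_cases ht3 : t3 = 0
  · subst ht3
    rw [hzero n rfl, mul_zero] at hsum
    have hsum' : C c1 * t1 ^ n + C c2 * t2 ^ n + C c4 * t4 ^ n = 0 := by
      linear_combination hsum
    obtain ⟨d1, d2, d4⟩ := L3 hn h1 h2 h4 hsum' ⟨A1, A2, A4, by linear_combination hBe⟩
    exact ⟨d1, d2, natDegree_zero, d4⟩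
  by_cases ht4 : t4 = 0
  · subst ht4
    rw [hzero n rfl, mul_zero] at hsum
    have hsum' : C c1 * t1 ^ n + C c2 * t2 ^ n + C c3 * t3 ^ n = 0 := by
      linear_combination hsum
    obtain ⟨d1, d2, d3⟩ := L3 hn h1 h2 h3 hsum' ⟨A1, A2, A3, by linear_combination hBe⟩
    exact ⟨d1, d2, d3, natDegree_zero⟩
  -- all nonzero
  have hf1ne : C c1 * t1 ^ n ≠ 0 := mul_ne_zero (C_ne_zero.mpr h1) (pow_ne_zero _ ht1)
  have hf2ne : C c2 * t2 ^ n ≠ 0 := mul_ne_zero (C_ne_zero.mpr h2) (pow_ne_zero _ ht2)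
  have hf3ne : C c3 * t3 ^ n ≠ 0 := mul_ne_zero (C_ne_zero.mpr h3) (pow_ne_zero _ ht3)
  by_cases hW3 : w3 (C c1 * t1 ^ n) (C c2 * t2 ^ n) (C c3 * t3 ^ n) = 0
  · -- dependent case
    by_cases hW12 : w2 (C c1 * t1 ^ n) (C c2 * t2 ^ n) = 0
    · obtain ⟨μ, hμ, hprop⟩ := prop_of_w2_eq_zero hf1ne hf2ne hW12
      have hμ1 : (1 : ℂ) + μ ≠ 0 := by
        intro h0
        apply h12
        have e : C c1 * t1 ^ n + C c2 * t2 ^ n = C (1 + μ) * (C c1 * t1 ^ n) := by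
          rw [C_add, C_1]
          linear_combination hprop
        rw [e, h0, C_0, zero_mul]
      have hsum3 : C ((1 + μ) * c1) * t1 ^ n + C c3 * t3 ^ n + C c4 * t4 ^ n = 0 := by
        rw [C_mul, C_add, C_1]
        linear_combination hsum - hprop
      obtain ⟨da, db, dc, dd⟩ := K_pair hn h1 h2 h3 h4 ht1 ht2 hprop hsum3 hμ1
        ⟨A1, A2, A3, A4, hBe⟩
      exact ⟨da, db, dc, dd⟩
    by_cases hW13 : w2 (C c1 * t1 ^ n) (C c3 * t3 ^ n) = 0
    · obtain ⟨μ, hμ, hprop⟩ := prop_of_w2_eq_zero hf1ne hf3ne hW13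
      have hμ1 : (1 : ℂ) + μ ≠ 0 := by
        intro h0
        apply h13
        have e : C c1 * t1 ^ n + C c3 * t3 ^ n = C (1 + μ) * (C c1 * t1 ^ n) := by
          rw [C_add, C_1]
          linear_combination hprop
        rw [e, h0, C_0, zero_mul]
      have hsum3 : C ((1 + μ) * c1) * t1 ^ n + C c2 * t2 ^ n + C c4 * t4 ^ n = 0 := by
        rw [C_mul, C_add, C_1]
        linear_combination hsum - hprop
      obtain ⟨da, db, dc, dd⟩ := K_pair hn h1 h3 h2 h4 ht1 ht3 hprop hsum3 hμ1
        ⟨A1, A3, A2, A4, by linear_combination hBe⟩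
      exact ⟨da, dc, db, dd⟩
    -- both W12, W13 nonzero
    have hfro : w2 (w2 (C c1 * t1 ^ n) (C c2 * t2 ^ n)) (w2 (C c1 * t1 ^ n) (C c3 * t3 ^ n))
        = 0 := by
      rw [frobenius_id, hW3, mul_zero]
    obtain ⟨μ, hμ, hpropW⟩ := prop_of_w2_eq_zero hW12 hW13 hfro
    have hu : w2 (C c1 * t1 ^ n) (C c3 * t3 ^ n - C μ * (C c2 * t2 ^ n)) = 0 := by
      rw [w2_sub_right, w2_C_mul_right _ (C c2 * t2 ^ n) μ, hpropW]
      ring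
    by_cases huz : C c3 * t3 ^ n - C μ * (C c2 * t2 ^ n) = 0
    · -- f3 = C μ * f2 : pair (t2,t3), complementary (t1,t4)
      have hprop : C c3 * t3 ^ n = C μ * (C c2 * t2 ^ n) := by linear_combination huz
      have hμ1 : (1 : ℂ) + μ ≠ 0 := by
        intro h0
        apply h14
        have e : C c1 * t1 ^ n + C c4 * t4 ^ n = -(C (1 + μ) * (C c2 * t2 ^ n)) := by
          rw [C_add, C_1]
          linear_combination hsum - hprop
        rw [e, h0, C_0, zero_mul, neg_zero]
      have hsum3 : C ((1 + μ) * c2) * t2 ^ n + C c1 * t1 ^ n + C c4 * t4 ^ n = 0 := by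
        rw [C_mul, C_add, C_1]
        linear_combination hsum - hprop
      obtain ⟨da, db, dc, dd⟩ := K_pair hn h2 h3 h1 h4 ht2 ht3 hprop hsum3 hμ1
        ⟨A2, A3, A1, A4, by linear_combination hBe⟩
      exact ⟨dc, da, db, dd⟩
    · -- genuine three-term relation
      obtain ⟨ν, hν, hpropu⟩ := prop_of_w2_eq_zero hf1ne huz hu
      -- hpropu : f3 - C μ * f2 = C ν * f1
      have hrel3 : C (ν * c1) * t1 ^ n + C (μ * c2) * t2 ^ n + C (-c3) * t3 ^ n = 0 := by
        rw [C_mul, C_mul, map_neg]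
        linear_combination -hpropu
      have hbez3 : ∃ B1 B2 B3 : ℂ[X], B1 * t1 + B2 * t2 + B3 * t3 = 1 := by
        apply bezout3_of_prime_cond ht1
        intro π hπ hπ1 hπ2 hπ3
        have hπ4 : π ∣ t4 := by
          have hdv : π ∣ C c4 * t4 ^ n := by
            have e : C c4 * t4 ^ n
                = -(C c1 * t1 ^ n + C c2 * t2 ^ n + C c3 * t3 ^ n) := by
              linear_combination hsum
            rw [e, dvd_neg]
            exact dvd_add (dvd_add
              ((hπ1.trans (dvd_pow_self t1 (by omega))).mul_left _)
              ((hπ2.trans (dvd_pow_self t2 (by omega))).mul_left _))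
              ((hπ3.trans (dvd_pow_self t3 (by omega))).mul_left _)
          exact hπ.dvd_of_dvd_pow (dvd_pow_of_dvd_C_mul h4 hdv)
        have hone : π ∣ (1 : ℂ[X]) := by
          rw [← hBe]
          exact dvd_add (dvd_add (dvd_add (hπ1.mul_left A1) (hπ2.mul_left A2))
            (hπ3.mul_left A3)) (hπ4.mul_left A4)
        exact hπ.not_unit (isUnit_of_dvd_one hone)
      obtain ⟨d1, d2, d3⟩ := L3 hn (mul_ne_zero hν h1) (mul_ne_zero hμ h2)
        (neg_ne_zero.mpr h3) hrel3 hbez3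
      have d4 : t4.natDegree = 0 := by
        apply deg_zero_of h4 (show n ≠ 0 by omega)
        have e : C c4 * t4 ^ n = -(C c1 * t1 ^ n + C c2 * t2 ^ n + C c3 * t3 ^ n) := by
          linear_combination hsum
        have hle : (C c4 * t4 ^ n).natDegree ≤ 0 := by
          rw [e, natDegree_neg]
          refine (natDegree_add_le _ _).trans (max_le ((natDegree_add_le _ _).trans
            (max_le ?_ ?_)) ?_)
          · exact (natDegree_C_mul_pow_le c1 t1 n).trans (by rw [d1, Nat.mul_zero])
          · exact (natDegree_C_mul_pow_le c2 t2 n).trans (by rw [d2, Nat.mul_zero])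
          · exact (natDegree_C_mul_pow_le c3 t3 n).trans (by rw [d3, Nat.mul_zero])
        omega
      exact ⟨d1, d2, d3, d4⟩
  · -- independent case: Wronskian estimate
    have hrel := w3_rel hsum
    have hdvds : ∀ (c : ℂ) (t : ℂ[X]), t ^ (n - 2) ∣ C c * t ^ n
        ∧ t ^ (n - 2) ∣ D (C c * t ^ n) ∧ t ^ (n - 2) ∣ D (D (C c * t ^ n)) :=
      fun c t => (pow_dvds (by omega)).2
    have hd123 : (t1 * t2 * t3) ^ (n - 2)
        ∣ w3 (C c1 * t1 ^ n) (C c2 * t2 ^ n) (C c3 * t3 ^ n) := by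
      rw [mul_pow, mul_pow]
      exact w3_dvd (hdvds c1 t1).1 (hdvds c1 t1).2.1 (hdvds c1 t1).2.2
        (hdvds c2 t2).1 (hdvds c2 t2).2.1 (hdvds c2 t2).2.2
        (hdvds c3 t3).1 (hdvds c3 t3).2.1 (hdvds c3 t3).2.2
    have hd423 : (t2 * t3 * t4) ^ (n - 2)
        ∣ w3 (C c1 * t1 ^ n) (C c2 * t2 ^ n) (C c3 * t3 ^ n) := by
      have hdd : (t4 * t2 * t3) ^ (n - 2)
          ∣ w3 (C c4 * t4 ^ n) (C c2 * t2 ^ n) (C c3 * t3 ^ n) := by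
        rw [mul_pow, mul_pow]
        exact w3_dvd (hdvds c4 t4).1 (hdvds c4 t4).2.1 (hdvds c4 t4).2.2
          (hdvds c2 t2).1 (hdvds c2 t2).2.1 (hdvds c2 t2).2.2
          (hdvds c3 t3).1 (hdvds c3 t3).2.1 (hdvds c3 t3).2.2
      rw [hrel.1] at hdd
      have := dvd_neg.mp hdd
      rwa [show (t2 * t3 * t4) ^ (n-2) = (t4 * t2 * t3) ^ (n-2) by ring]
    have hd143 : (t1 * t3 * t4) ^ (n - 2)
        ∣ w3 (C c1 * t1 ^ n) (C c2 * t2 ^ n) (C c3 * t3 ^ n) := by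
      have hdd : (t1 * t4 * t3) ^ (n - 2)
          ∣ w3 (C c1 * t1 ^ n) (C c4 * t4 ^ n) (C c3 * t3 ^ n) := by
        rw [mul_pow, mul_pow]
        exact w3_dvd (hdvds c1 t1).1 (hdvds c1 t1).2.1 (hdvds c1 t1).2.2
          (hdvds c4 t4).1 (hdvds c4 t4).2.1 (hdvds c4 t4).2.2
          (hdvds c3 t3).1 (hdvds c3 t3).2.1 (hdvds c3 t3).2.2
      rw [hrel.2.1] at hdd
      have := dvd_neg.mp hdd
      rwa [show (t1 * t3 * t4) ^ (n-2) = (t1 * t4 * t3) ^ (n-2) by ring]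
    have hd124 : (t1 * t2 * t4) ^ (n - 2)
        ∣ w3 (C c1 * t1 ^ n) (C c2 * t2 ^ n) (C c3 * t3 ^ n) := by
      have hdd : (t1 * t2 * t4) ^ (n - 2)
          ∣ w3 (C c1 * t1 ^ n) (C c2 * t2 ^ n) (C c4 * t4 ^ n) := by
        rw [mul_pow, mul_pow]
        exact w3_dvd (hdvds c1 t1).1 (hdvds c1 t1).2.1 (hdvds c1 t1).2.2
          (hdvds c2 t2).1 (hdvds c2 t2).2.1 (hdvds c2 t2).2.2
          (hdvds c4 t4).1 (hdvds c4 t4).2.1 (hdvds c4 t4).2.2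
      rw [hrel.2.2] at hdd
      exact dvd_neg.mp hdd
    have hglue : (t1 * t2 * t3 * t4) ^ (n - 2)
        ∣ w3 (C c1 * t1 ^ n) (C c2 * t2 ^ n) (C c3 * t3 ^ n) :=
      glue4 hd423 hd143 hd124 hd123 hBe
    set d1 := t1.natDegree
    set d2 := t2.natDegree
    set d3 := t3.natDegree
    set d4 := t4.natDegree
    set Wd := (w3 (C c1 * t1 ^ n) (C c2 * t2 ^ n) (C c3 * t3 ^ n)).natDegree with hWdDef
    have hlow : (n - 2) * (d1 + d2 + d3 + d4) ≤ Wd := by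
      have := natDegree_le_of_dvd hglue hW3
      rwa [natDegree_pow, natDegree_mul (mul_ne_zero (mul_ne_zero ht1 ht2) ht3) ht4,
        natDegree_mul (mul_ne_zero ht1 ht2) ht3, natDegree_mul ht1 ht2] at this
    have hub : ∀ {a b c : ℂ} {u v w : ℂ[X]},
        (w3 (C a * u ^ n) (C b * v ^ n) (C c * w ^ n)).natDegree
          ≤ n * u.natDegree + n * v.natDegree + n * w.natDegree := by
      intro a b c u v w
      refine (natDegree_w3_le _ _ _).trans ?_
      have g1 := natDegree_C_mul_pow_le a u n
      have g2 := natDegree_C_mul_pow_le b v n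
      have g3 := natDegree_C_mul_pow_le c w n
      omega
    have u123 : Wd ≤ n * d1 + n * d2 + n * d3 := hub
    have u423 : Wd ≤ n * d4 + n * d2 + n * d3 := by
      rw [hWdDef, ← natDegree_neg, ← hrel.1]; exact hub
    have u143 : Wd ≤ n * d1 + n * d4 + n * d3 := by
      rw [hWdDef, ← natDegree_neg, ← hrel.2.1]; exact hub
    have u124 : Wd ≤ n * d1 + n * d2 + n * d4 := by
      rw [hWdDef, ← natDegree_neg, ← hrel.2.2]; exact hub
    have hS : d1 + d2 + d3 + d4 = 0 := by
      set S := d1 + d2 + d3 + d4 with hSdef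
      by_contra hS0
      have hS1 : 1 ≤ S := Nat.one_le_iff_ne_zero.mpr hS0
      have key : (4 * (n - 2)) * S ≤ (3 * n) * S := by
        calc (4 * (n - 2)) * S = (n-2)*S + ((n-2)*S + ((n-2)*S + (n-2)*S)) := by ring
          _ ≤ Wd + (Wd + (Wd + Wd)) :=
              add_le_add hlow (add_le_add hlow (add_le_add hlow hlow))
          _ ≤ (n * d1 + n * d2 + n * d3) + ((n * d4 + n * d2 + n * d3)
              + ((n * d1 + n * d4 + n * d3) + (n * d1 + n * d2 + n * d4))) :=
              add_le_add u123 (add_le_add u423 (add_le_add u143 u124))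
          _ = (3 * n) * S := by rw [hSdef]; ring
      have hfin := Nat.le_of_mul_le_mul_right key (by omega)
      omega
    exact ⟨by omega, by omega, by omega, by omega⟩

end Taxicab

theorem taxicab_polynomials (n : ℕ) (hn : 16 ≤ n) (p q r s : ℂ[X])
    (hgcd : EuclideanDomain.gcd (EuclideanDomain.gcd (EuclideanDomain.gcd p q) r) s = 1)
    (hdeg : 1 ≤ max (max (max p.natDegree q.natDegree) r.natDegree) s.natDegree)
    (heq : p ^ n + q ^ n = r ^ n + s ^ n) (hne : p ^ n + q ^ n ≠ 0) :
    ({p ^ n, q ^ n} : Multiset ℂ[X]) = {r ^ n, s ^ n} := by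
  by_cases hpr : p ^ n = r ^ n
  · have hqs : q ^ n = s ^ n := by
      rw [hpr] at heq
      exact add_left_cancel heq
    rw [hpr, hqs]
  by_cases hps : p ^ n = s ^ n
  · have hqr : q ^ n = r ^ n := by
      rw [hps] at heq
      have h' : q ^ n + s ^ n = r ^ n + s ^ n := by linear_combination heq
      exact add_right_cancel h'
    rw [hps, hqr]
    exact Multiset.pair_comm _ _
  exfalso
  have hB : ∃ A1 A2 A3 A4 : ℂ[X], A1 * p + A2 * q + A3 * r + A4 * s = 1 := by
    set g1 := EuclideanDomain.gcd p q with hg1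
    set g2 := EuclideanDomain.gcd g1 r with hg2
    set a1 := EuclideanDomain.gcdA p q
    set b1 := EuclideanDomain.gcdB p q
    set a2 := EuclideanDomain.gcdA g1 r
    set b2 := EuclideanDomain.gcdB g1 r
    set a3 := EuclideanDomain.gcdA g2 s
    set b3 := EuclideanDomain.gcdB g2 s
    have e3 : (1 : ℂ[X]) = g2 * a3 + s * b3 := by
      rw [← hgcd]
      exact EuclideanDomain.gcd_eq_gcd_ab g2 s
    have e2 : g2 = g1 * a2 + r * b2 := EuclideanDomain.gcd_eq_gcd_ab g1 r
    have e1 : g1 = p * a1 + q * b1 := EuclideanDomain.gcd_eq_gcd_ab p q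
    exact ⟨a1 * a2 * a3, b1 * a2 * a3, b2 * a3, b3,
      by linear_combination (-(a2 * a3)) * e1 - a3 * e2 - e3⟩
  have hsum : C (1 : ℂ) * p ^ n + C (1 : ℂ) * q ^ n
      + C (-1 : ℂ) * r ^ n + C (-1 : ℂ) * s ^ n = 0 := by
    rw [C_neg, C_1]
    linear_combination heq
  have h12 : C (1 : ℂ) * p ^ n + C (1 : ℂ) * q ^ n ≠ 0 := by
    intro h0
    apply hne
    rw [C_1] at h0
    linear_combination h0
  have h13 : C (1 : ℂ) * p ^ n + C (-1 : ℂ) * r ^ n ≠ 0 := by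
    intro h0
    apply hpr
    rw [C_neg, C_1] at h0
    linear_combination h0
  have h14 : C (1 : ℂ) * p ^ n + C (-1 : ℂ) * s ^ n ≠ 0 := by
    intro h0
    apply hps
    rw [C_neg, C_1] at h0
    linear_combination h0
  obtain ⟨d1, d2, d3, d4⟩ := Taxicab.K hn one_ne_zero one_ne_zero
    (neg_ne_zero.mpr one_ne_zero) (neg_ne_zero.mpr one_ne_zero) hsum hB h12 h13 h14
  rw [d1, d2, d3, d4] at hdeg
  simp at hdeg
end

section
/- Let m ≥ 3 be an integer, p_1, …, p_m ∈ ℂ[x] nonzero polynomials, and k_1, …, k_m positive integers such that gcd(p_1^{k_1}, …, p_m^{k_m}) = 1, p_1^{k_1} + p_2^{k_2} + ⋯ + p_m^{k_m} = 0, and any m−1 of the polynomials p_i^{k_i} are linearly independent over ℂ. Then min{k_1, …, k_m} < (m^3 + 7m^2 − 49m + 68)/3. -/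
open Polynomial Matrix Finset Function

set_option maxHeartbeats 1600000
set_option maxRecDepth 8000

noncomputable def wrMat {N : ℕ} (g : Fin N → ℂ[X]) : Matrix (Fin N) (Fin N) ℂ[X] :=
  Matrix.of fun c r => derivative^[(r : ℕ)] (g c)

lemma wrMat_apply {N : ℕ} (g : Fin N → ℂ[X]) (c r : Fin N) :
    wrMat g c r = derivative^[(r : ℕ)] (g c) := rfl

lemma natDegree_wrMat_det_le {N : ℕ} (g : Fin N → ℂ[X]) :
    ((wrMat g).det).natDegree ≤ ∑ c, (g c).natDegree := by
  rw [Matrix.det_apply']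
  refine natDegree_sum_le_of_forall_le _ _ fun σ _ => ?_
  refine le_trans natDegree_mul_le ?_
  rw [Polynomial.natDegree_intCast]
  simp only [zero_add]
  refine le_trans (natDegree_prod_le _ _) ?_
  rw [← Equiv.sum_comp σ fun c => (g c).natDegree]
  refine Finset.sum_le_sum fun r _ => ?_
  rw [wrMat_apply]
  exact le_trans (natDegree_iterate_derivative _ _) (Nat.sub_le _ _)


lemma coeff_iterate_derivative' (f : ℂ[X]) (r n : ℕ) :
    (derivative^[r] f).coeff n = ((n + r).descFactorial r : ℂ) * f.coeff (n + r) := by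
  induction r generalizing n with
  | zero => simp
  | succ r ih =>
    rw [Function.iterate_succ_apply', coeff_derivative, ih (n+1)]
    have h1 : (n+(r+1)).descFactorial (r+1) = (n+1) * (n+1+r).descFactorial r := by
      rw [show n+(r+1) = (n+r+1) by ring, Nat.descFactorial_succ,
        show n+r+1-r = n+1 by omega, show n+r+1 = n+1+r by ring]
    rw [show n+(r+1) = n+1+r by ring] at h1 ⊢
    rw [h1]
    push_cast
    ring

lemma coeff_prod_at {ι : Type*} (s : Finset ι) (f : ι → ℂ[X]) (n : ι → ℕ)
    (h : ∀ i ∈ s, (f i).natDegree ≤ n i) :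
    (∏ i ∈ s, f i).coeff (∑ i ∈ s, n i) = ∏ i ∈ s, (f i).coeff (n i) := by
  classical
  induction s using Finset.cons_induction with
  | empty => simp
  | cons a s ha ih =>
    rw [Finset.prod_cons, Finset.sum_cons, Finset.prod_cons]
    rw [coeff_mul_add_eq_of_natDegree_le (h a (Finset.mem_cons_self _ _))
      (le_trans (natDegree_prod_le _ _) (Finset.sum_le_sum fun i hi => h i (Finset.mem_cons_of_mem hi)))]
    rw [ih fun i hi => h i (Finset.mem_cons_of_mem hi)]


lemma wr_det_ne_zero_of_inj {N : ℕ} (g : Fin N → ℂ[X]) (hg0 : ∀ c, g c ≠ 0)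
    (hinj : Function.Injective fun c => (g c).natDegree) : (wrMat g).det ≠ 0 := by
  set d : Fin N → ℕ := fun c => (g c).natDegree with hd
  set K : ℕ := (∑ c, d c) - (∑ r : Fin N, (r : ℕ)) with hK
  have main : ((wrMat g).det).coeff K
      = (∏ c, (g c).leadingCoeff) *
        (Matrix.of fun c r : Fin N => (((d c).descFactorial (r : ℕ) : ℂ))).det := by
    rw [Matrix.det_apply', finset_sum_coeff, Matrix.det_apply', Finset.mul_sum]
    refine Finset.sum_congr rfl fun σ _ => ?_
    rw [show ((Equiv.Perm.sign σ : ℤ) : ℂ[X]) = C ((Equiv.Perm.sign σ : ℤ) : ℂ) from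
      (map_intCast (C : ℂ →+* ℂ[X]) _).symm, coeff_C_mul]
    by_cases hσ : ∀ r : Fin N, (r : ℕ) ≤ d (σ r)
    · have hKs : K = ∑ r : Fin N, (d (σ r) - (r : ℕ)) := by
        have h1 : ∑ r : Fin N, ((d (σ r) - (r : ℕ)) + (r : ℕ)) = ∑ r : Fin N, d (σ r) :=
          Finset.sum_congr rfl fun r _ => Nat.sub_add_cancel (hσ r)
        rw [Finset.sum_add_distrib] at h1
        have h2 : ∑ r : Fin N, d (σ r) = ∑ c, d c := Equiv.sum_comp σ d
        omega
      rw [hKs, coeff_prod_at _ _ _ (fun r _ => by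
        rw [wrMat_apply]; exact natDegree_iterate_derivative _ _)]
      have hterm : ∀ r : Fin N, (wrMat g (σ r) r).coeff (d (σ r) - (r : ℕ))
          = ((d (σ r)).descFactorial (r : ℕ) : ℂ) * (g (σ r)).leadingCoeff := by
        intro r
        rw [wrMat_apply, coeff_iterate_derivative', Nat.sub_add_cancel (hσ r)]
        rfl
      rw [Finset.prod_congr rfl fun r _ => hterm r, Finset.prod_mul_distrib,
        Equiv.prod_comp σ fun c => (g c).leadingCoeff]
      simp only [Matrix.of_apply]
      push_cast
      ring
    · push_neg at hσ
      obtain ⟨r0, hr0⟩ := hσ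
      have hz : (∏ r : Fin N, wrMat g (σ r) r) = 0 := by
        refine Finset.prod_eq_zero (Finset.mem_univ r0) ?_
        rw [wrMat_apply]
        exact iterate_derivative_eq_zero hr0
      have hz2 : (∏ r : Fin N, (Matrix.of fun c r : Fin N =>
          (((d c).descFactorial (r : ℕ) : ℂ))) (σ r) r) = 0 := by
        refine Finset.prod_eq_zero (Finset.mem_univ r0) ?_
        simp only [Matrix.of_apply]
        norm_cast
        exact Nat.descFactorial_eq_zero_iff_lt.mpr hr0
      rw [hz, hz2]; simp
  have hlc : (∏ c, (g c).leadingCoeff) ≠ 0 :=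
    Finset.prod_ne_zero_iff.mpr fun c _ => leadingCoeff_ne_zero.mpr (hg0 c)
  have hB : (Matrix.of fun c r : Fin N => (((d c).descFactorial (r : ℕ) : ℂ))).det ≠ 0 := by
    have hmat : (Matrix.of fun c r : Fin N => (((d c).descFactorial (r : ℕ) : ℂ)))
        = Matrix.of fun c r : Fin N => (descPochhammer ℂ (r : ℕ)).eval ((d c : ℂ)) := by
      ext c r
      simp [descPochhammer_eval_eq_descFactorial]
    rw [hmat, ← Matrix.det_eval_matrixOfPolynomials_eq_det_vandermonde
      (fun c : Fin N => (d c : ℂ)) (fun r : Fin N => descPochhammer ℂ (r : ℕ))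
      (fun i => descPochhammer_natDegree _ _) (fun i => monic_descPochhammer _ _)]
    refine Matrix.det_vandermonde_ne_zero_iff.mpr fun a b hab => hinj (Nat.cast_injective hab)
  intro h0
  rw [h0, coeff_zero] at main
  exact mul_ne_zero hlc hB main.symm

lemma iterate_derivative_C_mul' (a : ℂ) (q : ℂ[X]) (r : ℕ) :
    derivative^[r] (C a * q) = C a * derivative^[r] q := by
  induction r with
  | zero => simp
  | succ r ih => rw [Function.iterate_succ_apply', ih, derivative_C_mul,
      Function.iterate_succ_apply']

lemma wr_det_ne_zero : ∀ (t : ℕ) {N : ℕ} (g : Fin N → ℂ[X]),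
    (∑ c, (g c).natDegree) = t → LinearIndependent ℂ g → (wrMat g).det ≠ 0 := by
  intro t
  induction t using Nat.strong_induction_on with
  | _ t ih =>
    intro N g hsum hli
    have hg0 : ∀ c, g c ≠ 0 := fun c => hli.ne_zero c
    by_cases hinj : Function.Injective fun c => (g c).natDegree
    · exact wr_det_ne_zero_of_inj g hg0 hinj
    · simp only [Function.Injective] at hinj
      push_neg at hinj
      obtain ⟨c, c', hdeq, hne⟩ := hinj
      set lam : ℂ := (g c).leadingCoeff / (g c').leadingCoeff with hlam
      have hlc' : (g c').leadingCoeff ≠ 0 := leadingCoeff_ne_zero.mpr (hg0 c')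
      have hlamne : lam ≠ 0 := div_ne_zero (leadingCoeff_ne_zero.mpr (hg0 c)) hlc'
      set g' : Fin N → ℂ[X] := Function.update g c (g c - C lam * g c') with hg'
      -- g' is linearly independent
      have hli' : LinearIndependent ℂ g' := by
        rw [Fintype.linearIndependent_iff] at hli ⊢
        intro a ha
        set b : Fin N → ℂ := Function.update a c' (a c' - a c * lam) with hb
        have hsb : ∑ i, b i • g i = 0 := by
          rw [← ha]
          have e1 : (fun i => b i • g i)
              = Function.update (fun i => a i • g i) c' ((a c' - a c * lam) • g c') := by
            funext i
            by_cases hi : i = c'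
            · subst hi; simp [hb]
            · simp [hb, hi, Function.update_of_ne hi]
          have e2 : (fun i => a i • g' i)
              = Function.update (fun i => a i • g i) c (a c • (g c - C lam * g c')) := by
            funext i
            by_cases hi : i = c
            · subst hi; simp [hg']
            · simp [hg', hi, Function.update_of_ne hi]
          rw [show ∑ i, b i • g i = ∑ i, (fun i => b i • g i) i from rfl, e1]
          rw [show ∑ i, a i • g' i = ∑ i, (fun i => a i • g' i) i from rfl, e2]
          rw [Finset.sum_update_of_mem (Finset.mem_univ c'),
            Finset.sum_update_of_mem (Finset.mem_univ c)]
          rw [← Finset.erase_eq, ← Finset.erase_eq]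
          rw [← Finset.sum_erase_add (Finset.univ.erase c') _
              (Finset.mem_erase.mpr ⟨hne, Finset.mem_univ c⟩)]
          rw [← Finset.sum_erase_add (Finset.univ.erase c) _
              (Finset.mem_erase.mpr ⟨hne.symm ∘ Eq.symm ∘ Eq.symm, Finset.mem_univ c'⟩)]
          have hee : (Finset.univ.erase c').erase c = (Finset.univ.erase c).erase c' := by
            ext x; simp only [Finset.mem_erase]; tauto
          rw [hee, show C lam * g c' = lam • g c' from (smul_eq_C_mul lam).symm]
          module
        have hb0 := hli b hsb
        intro i0
        have hbi := hb0 i0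
        by_cases hi : i0 = c'
        · have h1 : a c = 0 := by
            have h := hb0 c
            rwa [hb, Function.update_of_ne hne] at h
          have h2 := hb0 c'
          rw [hb, Function.update_self] at h2
          subst hi
          rw [h1] at h2
          simpa using h2
        · rwa [hb, Function.update_of_ne hi] at hbi
      -- determinant unchanged
      have hdet : (wrMat g').det = (wrMat g).det := by
        have hmat : wrMat g'
            = (wrMat g).updateRow c ((wrMat g) c + (-(C lam)) • (wrMat g) c') := by
          funext c'' r
          by_cases hc : c'' = c
          · rw [hc, wrMat_apply, hg', Function.update_self]
            have h6 : (wrMat g).updateRow c ((wrMat g) c + (-(C lam)) • (wrMat g) c') c r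
                = wrMat g c r + (-(C lam)) * wrMat g c' r := by
              rw [Matrix.updateRow_self]
              rfl
            rw [h6, iterate_derivative_sub, iterate_derivative_C_mul', wrMat_apply, wrMat_apply]
            ring
          · rw [wrMat_apply, hg', Function.update_of_ne hc,
              Matrix.updateRow_ne hc]
            rfl
        rw [hmat, Matrix.det_updateRow_add_smul_self _ hne (-(C lam))]
      -- the total degree decreased
      have hnew0 : g c - C lam * g c' ≠ 0 := by
        have := hli'.ne_zero c
        rwa [hg', Function.update_self] at this
      have hdlt : (g c - C lam * g c').natDegree < (g c).natDegree := by
        refine natDegree_lt_natDegree hnew0 ?_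
        have hdeg : (C lam * g c').degree = (g c).degree := by
          rw [degree_mul, degree_C hlamne, zero_add,
            degree_eq_natDegree (hg0 c'), degree_eq_natDegree (hg0 c), hdeq]
        refine degree_sub_lt hdeg.symm (hg0 c) ?_
        rw [leadingCoeff_mul, leadingCoeff_C, hlam, div_mul_cancel₀ _ hlc']
      have hlt : ∑ c'', (g' c'').natDegree < t := by
        rw [← hsum]
        have e3 : ∑ c'', (g' c'').natDegree
            = (g c - C lam * g c').natDegree + ∑ x ∈ Finset.univ.erase c, (g x).natDegree := by
          have e4 : (fun c'' => (g' c'').natDegree)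
              = Function.update (fun c'' => (g c'').natDegree) c (g c - C lam * g c').natDegree := by
            funext i0
            by_cases hi : i0 = c
            · subst hi; simp [hg']
            · simp [hg', hi, Function.update_of_ne hi]
          rw [show ∑ c'', (g' c'').natDegree = ∑ c'', (fun c'' => (g' c'').natDegree) c'' from rfl,
            e4, Finset.sum_update_of_mem (Finset.mem_univ c), ← Finset.erase_eq]
        have e5 : ∑ c'', (g c'').natDegree
            = (g c).natDegree + ∑ x ∈ Finset.univ.erase c, (g x).natDegree := by
          rw [← Finset.sum_erase_add _ _ (Finset.mem_univ c)]
          ring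
        omega
      have := ih _ hlt g' rfl hli'
      rwa [hdet] at this
theorem min_exponent_bound (m : ℕ) (hm : 3 ≤ m) (p : Fin m → ℂ[X]) (k : Fin m → ℕ)
    (hp : ∀ i, p i ≠ 0) (hk : ∀ i, 0 < k i)
    (hgcd : Finset.univ.gcd (fun i => p i ^ k i) = 1)
    (hsum : ∑ i, p i ^ k i = 0)
    (hli : ∀ j : Fin m,
      LinearIndependent ℂ (fun i : {i : Fin m // i ≠ j} => p i.1 ^ k i.1)) :
    3 * ((Finset.univ.inf' ⟨⟨0, by omega⟩, Finset.mem_univ _⟩ k : ℕ) : ℤ) <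
      (m : ℤ) ^ 3 + 7 * (m : ℤ) ^ 2 - 49 * (m : ℤ) + 68 := by
  classical
  obtain ⟨n, rfl⟩ : ∃ n, m = n + 3 := ⟨m - 3, by omega⟩
  set f : Fin (n+3) → ℂ[X] := fun j => p j ^ k j with hf
  have hfj : ∀ j, f j = p j ^ k j := fun j => rfl
  have hf0 : ∀ j, f j ≠ 0 := fun j => pow_ne_zero _ (hp j)
  have hsumf : ∑ j, f j = 0 := hsum
  have hgcdf : Finset.univ.gcd f = 1 := hgcd
  set F : ℂ[X] := ∏ j, f j with hF
  have hFne : F ≠ 0 := Finset.prod_ne_zero_iff.mpr fun j _ => hf0 j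
  set R : Finset ℂ := F.roots.toFinset with hR
  set e : Fin (n+3) → ℂ → ℕ := fun j a => rootMultiplicity a (f j) with he
  set tcnt : ℂ → ℕ := fun a => (Finset.univ.filter fun j => e j a ≠ 0).card with htcnt
  set T : ℕ := ∑ a ∈ R, tcnt a with hT
  have hroots_sub : ∀ j, (f j).roots.toFinset ⊆ R := by
    intro j a ha
    rw [Multiset.mem_toFinset] at ha
    exact Multiset.mem_toFinset.mpr (Multiset.mem_of_le
      (roots.le_of_dvd hFne (Finset.dvd_prod_of_mem f (Finset.mem_univ j))) ha)
  have hD : ∀ j, (f j).natDegree = ∑ a ∈ R, e j a := by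
    intro j
    have h1 : ∑ a ∈ (f j).roots.toFinset, (f j).roots.count a = Multiset.card (f j).roots :=
      Multiset.toFinset_sum_count_eq _
    have h2 : ∑ a ∈ (f j).roots.toFinset, (f j).roots.count a = ∑ a ∈ R, (f j).roots.count a :=
      Finset.sum_subset (hroots_sub j) fun x _ hx =>
        Multiset.count_eq_zero.mpr fun hc => hx (Multiset.mem_toFinset.mpr hc)
    have h3 : Multiset.card (f j).roots = (f j).natDegree :=
      splits_iff_card_roots.mp (IsAlgClosed.splits _)
    rw [← h3, ← h1, h2]
    exact Finset.sum_congr rfl fun a _ => count_roots _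
  -- the key per-index bound
  have key : ∀ i₀ : Fin (n+3), (f i₀).natDegree ≤ (n+1) * T := by
    intro i₀
    set g : Fin (n+2) → ℂ[X] := fun c => f (i₀.succAbove c) with hg
    have hgli : LinearIndependent ℂ g :=
      (hli i₀).comp
        (fun c : Fin (n+2) => (⟨i₀.succAbove c, Fin.succAbove_ne i₀ c⟩ : {i // i ≠ i₀}))
        (fun c c' hcc => Fin.succAbove_right_injective (congrArg Subtype.val hcc))
    set W : ℂ[X] := (wrMat g).det with hW
    have hWne : W ≠ 0 := wr_det_ne_zero _ g rfl hgli
    have hWdeg : W.natDegree ≤ ∑ c, (g c).natDegree := natDegree_wrMat_det_le g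
    have hval : ∀ a ∈ R, (∑ j, e j a) ≤ rootMultiplicity a W + (n+1) * tcnt a := by
      intro a _
      have hex : ∃ i₁, e i₁ a = 0 := by
        by_contra hno
        push_neg at hno
        have hdvd : ∀ j : Fin (n+3), (X - C a) ∣ f j := fun j =>
          dvd_trans (dvd_pow_self _ (hno j)) (pow_rootMultiplicity_dvd _ _)
        have h1 : (X - C a) ∣ Finset.univ.gcd f := Finset.dvd_gcd fun j _ => hdvd j
        rw [hgcdf] at h1
        have h2 := degree_le_of_dvd h1 one_ne_zero
        rw [degree_X_sub_C, degree_one] at h2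
        exact absurd h2 (by norm_num)
      obtain ⟨i₁, M', jm, hi₁, hdet, hjinj, hjne, hMrow⟩ :
          ∃ (i₁ : Fin (n+3)) (M' : Matrix (Fin (n+2)) (Fin (n+2)) ℂ[X])
            (jm : Fin (n+2) → Fin (n+3)),
            e i₁ a = 0 ∧ (M'.det = W ∨ M'.det = -W) ∧ Function.Injective jm ∧
            (∀ c, jm c ≠ i₁) ∧ (∀ c r, M' c r = derivative^[(r : ℕ)] (f (jm c))) := by
        by_cases hcase : e i₀ a = 0
        · exact ⟨i₀, wrMat g, fun c => i₀.succAbove c, hcase, Or.inl rfl,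
            Fin.succAbove_right_injective, fun c => Fin.succAbove_ne i₀ c, fun c r => rfl⟩
        · obtain ⟨i₁, hi₁⟩ := hex
          have hne10 : i₁ ≠ i₀ := fun h => hcase (h ▸ hi₁)
          obtain ⟨c₁, hc₁⟩ := Fin.exists_succAbove_eq hne10
          refine ⟨i₁, (wrMat g).updateRow c₁ (fun r => derivative^[(r : ℕ)] (f i₀)),
            fun c => if c = c₁ then i₀ else i₀.succAbove c, hi₁, Or.inr ?_, ?_, ?_, ?_⟩
          · have hv : (fun r : Fin (n+2) => derivative^[(r : ℕ)] (f i₀))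
                = ∑ c, (-1 : ℂ[X]) • (wrMat g) c := by
              funext r
              have h8 := Fin.sum_univ_succAbove f i₀
              rw [hsumf] at h8
              have h7 : f i₀ = - ∑ c, g c := eq_neg_of_add_eq_zero_left h8.symm
              rw [Finset.sum_apply]
              calc derivative^[(r : ℕ)] (f i₀)
                  = derivative^[(r : ℕ)] (- ∑ c, g c) := by rw [h7]
                _ = - ∑ c, derivative^[(r : ℕ)] (g c) := by
                    rw [iterate_derivative_neg, iterate_derivative_sum]
                _ = ∑ c, ((-1 : ℂ[X]) • (wrMat g) c) r := by
                    rw [← Finset.sum_neg_distrib]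
                    refine Finset.sum_congr rfl fun c _ => ?_
                    simp [wrMat_apply, Pi.smul_apply]
            rw [hv, Matrix.det_updateRow_sum]
            rw [hW]
            simp
          · intro x y hxy
            by_cases hx : x = c₁ <;> by_cases hy : y = c₁
            · rw [hx, hy]
            · simp only [hx, if_pos rfl, if_neg hy] at hxy
              exact absurd hxy.symm (Fin.succAbove_ne i₀ y)
            · simp only [hy, if_pos rfl, if_neg hx] at hxy
              exact absurd hxy (Fin.succAbove_ne i₀ x)
            · simp only [if_neg hx, if_neg hy] at hxy
              exact Fin.succAbove_right_injective hxy
          · intro c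
            by_cases hc : c = c₁
            · simp only [hc, if_pos rfl]
              exact hne10.symm
            · simp only [if_neg hc]
              rw [← hc₁]
              exact fun h => hc (Fin.succAbove_right_injective h)
          · intro c r
            by_cases hc : c = c₁
            · rw [hc]
              simp [Matrix.updateRow_self]
            · rw [Matrix.updateRow_ne hc]
              simp only [if_neg hc]
              rfl
      set b : Fin (n+2) → ℕ := fun c => e (jm c) a - (n+1) with hb
      have hcol : ∀ c r, (X - C a)^(b c) ∣ M' c r := by
        intro c r
        rw [hMrow]
        refine dvd_trans (pow_dvd_pow _ ?_)
          (pow_sub_dvd_iterate_derivative_of_pow_dvd (r : ℕ)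
            (pow_rootMultiplicity_dvd (f (jm c)) a))
        have hr : (r : ℕ) ≤ n+1 := Nat.lt_succ_iff.mp r.isLt
        have hbc : b c = e (jm c) a - (n+1) := rfl
        have hec : e (jm c) a = rootMultiplicity a (f (jm c)) := rfl
        omega
      have hdvddet : (X - C a)^(∑ c, b c) ∣ M'.det := by
        have hfac : M' = Matrix.of
            (fun c r => (X - C a)^(b c) * (M' c r / (X - C a)^(b c))) := by
          funext c r
          exact (EuclideanDomain.mul_div_cancel'
            (pow_ne_zero _ (X_sub_C_ne_zero a)) (hcol c r)).symm
        have hdmc := Matrix.det_mul_column (fun c => (X - C a)^(b c))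
          (Matrix.of fun c r => M' c r / (X - C a)^(b c))
        simp only [Matrix.of_apply] at hdmc
        rw [hfac, hdmc, ← Finset.prod_pow_eq_pow_sum]
        exact Dvd.intro _ rfl
      have hrm : (∑ c, b c) ≤ rootMultiplicity a W := by
        refine (le_rootMultiplicity_iff hWne).mpr ?_
        rcases hdet with h | h
        · rwa [h] at hdvddet
        · rw [h] at hdvddet
          exact (dvd_neg).mp hdvddet
      have himg : Finset.univ.image jm = Finset.univ.erase i₁ := by
        apply Finset.eq_of_subset_of_card_le
        · intro x hx
          rw [Finset.mem_image] at hx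
          obtain ⟨c, _, rfl⟩ := hx
          exact Finset.mem_erase.mpr ⟨hjne c, Finset.mem_univ _⟩
        · rw [Finset.card_erase_of_mem (Finset.mem_univ _),
            Finset.card_image_of_injective _ hjinj]
          simp
      have hsum_e : ∑ j, e j a = ∑ c, e (jm c) a := by
        calc ∑ j, e j a = ∑ j ∈ Finset.univ.erase i₁, e j a + e i₁ a :=
              (Finset.sum_erase_add _ _ (Finset.mem_univ i₁)).symm
          _ = ∑ j ∈ Finset.univ.erase i₁, e j a := by rw [hi₁, add_zero]
          _ = ∑ j ∈ Finset.univ.image jm, e j a := by rw [himg]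
          _ = ∑ c, e (jm c) a := Finset.sum_image fun x _ y _ h => hjinj h
      have hcard : (Finset.univ.filter fun c => e (jm c) a ≠ 0).card ≤ tcnt a := by
        rw [htcnt]
        refine Finset.card_le_card_of_injOn jm (fun c hc => ?_) hjinj.injOn
        simp only [Finset.coe_filter, Finset.mem_coe, Finset.mem_filter, Finset.mem_univ, true_and, Set.mem_setOf_eq] at hc ⊢
        exact hc
      calc ∑ j, e j a = ∑ c, e (jm c) a := hsum_e
        _ ≤ ∑ c, (b c + (n+1) * (if e (jm c) a ≠ 0 then 1 else 0)) := by
            refine Finset.sum_le_sum fun c _ => ?_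
            have hbc : b c = e (jm c) a - (n+1) := rfl
            by_cases h : e (jm c) a = 0
            · rw [if_neg (by simpa using h)]
              omega
            · rw [if_pos h]
              omega
        _ = ∑ c, b c + (n+1) * (Finset.univ.filter fun c => e (jm c) a ≠ 0).card := by
            rw [Finset.sum_add_distrib, ← Finset.mul_sum, Finset.card_filter]
        _ ≤ rootMultiplicity a W + (n+1) * tcnt a :=
            add_le_add hrm (Nat.mul_le_mul_left _ hcard)
    have hWroots : ∑ a ∈ R, rootMultiplicity a W ≤ W.natDegree := by
      have h1 : ∑ a ∈ R, rootMultiplicity a W = ∑ a ∈ R, W.roots.count a :=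
        Finset.sum_congr rfl fun a _ => (count_roots _).symm
      have h2 : ∑ a ∈ R ∩ W.roots.toFinset, W.roots.count a = ∑ a ∈ R, W.roots.count a :=
        Finset.sum_subset Finset.inter_subset_left fun x hx hnx =>
          Multiset.count_eq_zero.mpr fun hc =>
            hnx (Finset.mem_inter.mpr ⟨hx, Multiset.mem_toFinset.mpr hc⟩)
      have h3 : ∑ a ∈ R ∩ W.roots.toFinset, W.roots.count a
          ≤ ∑ a ∈ W.roots.toFinset, W.roots.count a :=
        Finset.sum_le_sum_of_subset Finset.inter_subset_right
      rw [h1, ← h2]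
      exact le_trans h3 (le_trans (le_of_eq (Multiset.toFinset_sum_count_eq _)) (card_roots' _))
    have hkey2 : ∑ j, (f j).natDegree ≤ W.natDegree + (n+1) * T := by
      calc ∑ j, (f j).natDegree = ∑ j, ∑ a ∈ R, e j a :=
            Finset.sum_congr rfl fun j _ => hD j
        _ = ∑ a ∈ R, ∑ j, e j a := Finset.sum_comm
        _ ≤ ∑ a ∈ R, (rootMultiplicity a W + (n+1) * tcnt a) := Finset.sum_le_sum hval
        _ = (∑ a ∈ R, rootMultiplicity a W) + (n+1) * T := by
            rw [Finset.sum_add_distrib, ← Finset.mul_sum, hT]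
        _ ≤ W.natDegree + (n+1) * T := Nat.add_le_add_right hWroots _
    have hsplit : ∑ j, (f j).natDegree = (f i₀).natDegree + ∑ c, (g c).natDegree :=
      Fin.sum_univ_succAbove _ i₀
    omega
  -- counting: T equals total number of distinct roots
  set ρ : Fin (n+3) → ℕ := fun j => (f j).roots.toFinset.card with hρ
  set S : ℕ := ∑ j, ρ j with hS
  have hTS : T = S := by
    rw [hT, hS]
    have h1 : ∀ a, tcnt a = ∑ j, if e j a ≠ 0 then 1 else 0 := fun a =>
      Finset.card_filter _ _
    rw [Finset.sum_congr rfl fun a _ => h1 a, Finset.sum_comm]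
    refine Finset.sum_congr rfl fun j _ => ?_
    have h2 : R.filter (fun a => e j a ≠ 0) = (f j).roots.toFinset := by
      ext a
      simp only [Finset.mem_filter, Multiset.mem_toFinset]
      constructor
      · rintro ⟨_, hne⟩
        have hne' : (f j).roots.count a ≠ 0 := by
          rw [count_roots]
          exact hne
        exact Multiset.count_ne_zero.mp hne'
      · intro ha
        refine ⟨hroots_sub j (Multiset.mem_toFinset.mpr ha), ?_⟩
        have : (f j).roots.count a ≠ 0 := Multiset.count_ne_zero.mpr ha
        rwa [count_roots] at this
    calc (∑ a ∈ R, if e j a ≠ 0 then 1 else 0)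
        = (R.filter (fun a => e j a ≠ 0)).card := (Finset.card_filter _ _).symm
      _ = ρ j := by rw [h2]
  have hρd : ∀ j, ρ j ≤ (p j).natDegree := by
    intro j
    have h1 : (f j).roots.toFinset = (p j).roots.toFinset := by
      rw [hfj, roots_pow, Multiset.toFinset_nsmul _ _ (hk j).ne']
    have h2 : ρ j = (f j).roots.toFinset.card := rfl
    rw [h2, h1]
    exact le_trans (Multiset.toFinset_card_le _) (card_roots' _)
  have hS1 : 1 ≤ S := by
    by_contra hS0
    push_neg at hS0
    have hSz : ∑ j, ρ j = 0 := by omega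
    have hall : ∀ j, (f j).natDegree = 0 := by
      intro j
      have hρ0 : ρ j = 0 := by
        have h0 := Finset.sum_eq_zero_iff.mp hSz j (Finset.mem_univ j)
        exact h0
      have h1 : (f j).roots.toFinset = ∅ := Finset.card_eq_zero.mp hρ0
      have h2 : (f j).roots = 0 := by
        by_contra h
        obtain ⟨x, hx⟩ := Multiset.exists_mem_of_ne_zero h
        have h4 := Multiset.mem_toFinset.mpr hx
        rw [h1] at h4
        simp at h4
      have h3 : Multiset.card (f j).roots = (f j).natDegree :=
        splits_iff_card_roots.mp (IsAlgClosed.splits _)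
      rw [← h3, h2]
      rfl
    set i0 : Fin (n+3) := ⟨0, by omega⟩ with hi0
    set i1 : Fin (n+3) := ⟨1, by omega⟩ with hi1d
    set j2 : Fin (n+3) := ⟨2, by omega⟩ with hj2
    have h02 : i0 ≠ j2 := by simp [hi0, hj2, Fin.ext_iff]
    have h12 : i1 ≠ j2 := by simp [hi1d, hj2, Fin.ext_iff]
    have h01 : i0 ≠ i1 := by simp [hi0, hi1d, Fin.ext_iff]
    obtain ⟨a0, ha0⟩ := natDegree_eq_zero.mp (hall i0)
    obtain ⟨a1, ha1⟩ := natDegree_eq_zero.mp (hall i1)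
    have ha1ne : a1 ≠ 0 := fun h => hf0 i1 (by rw [← ha1, h, map_zero])
    set coefs : {i : Fin (n+3) // i ≠ j2} → ℂ :=
      fun i => if i.1 = i0 then a1 else if i.1 = i1 then -a0 else 0 with hcoefs
    have hsum0 : ∑ i, coefs i • (p i.1 ^ k i.1) = 0 := by
      have hstep : ∑ i, coefs i • (p i.1 ^ k i.1)
          = coefs ⟨i0, h02⟩ • (p i0 ^ k i0) + coefs ⟨i1, h12⟩ • (p i1 ^ k i1) := by
        refine Fintype.sum_eq_add _ _ (by simp [Subtype.ext_iff, h01]) ?_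
        intro x hx
        obtain ⟨hx0, hx1⟩ := hx
        have hx0' : x.1 ≠ i0 := fun h => hx0 (Subtype.ext h)
        have hx1' : x.1 ≠ i1 := fun h => hx1 (Subtype.ext h)
        rw [hcoefs]
        simp only [if_neg hx0', if_neg hx1']
        exact zero_smul _ _
      rw [hstep]
      have hv0 : coefs ⟨i0, h02⟩ = a1 := by rw [hcoefs]; simp
      have hv1 : coefs ⟨i1, h12⟩ = -a0 := by
        simp [hcoefs, Ne.symm h01]
      have hp0 : p i0 ^ k i0 = C a0 := by rw [← hfj, ← ha0]
      have hp1 : p i1 ^ k i1 = C a1 := by rw [← hfj, ← ha1]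
      rw [hv0, hv1, hp0, hp1, smul_C, smul_C, ← C_add]
      rw [show a1 • a0 + (-a0) • a1 = 0 by simp [smul_eq_mul]; ring]
      exact C_0
    have hcontr := Fintype.linearIndependent_iff.mp (hli j2) coefs hsum0 ⟨i0, h02⟩
    rw [hcoefs] at hcontr
    simp at hcontr
    exact ha1ne hcontr
  have hsum_le : ∑ j, (f j).natDegree ≤ (n+3) * ((n+1) * T) := by
    have h1 : ∑ j, (f j).natDegree ≤ ∑ _j : Fin (n+3), (n+1) * T :=
      Finset.sum_le_sum fun j _ => key j
    simpa using h1
  have hKle : ∀ (H : (Finset.univ : Finset (Fin (n+3))).Nonempty),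
      Finset.univ.inf' H k ≤ (n+3)*(n+1) := by
    intro H
    have hKk : ∀ j, Finset.univ.inf' H k ≤ k j := fun j => Finset.inf'_le _ (Finset.mem_univ j)
    have hKS : Finset.univ.inf' H k * S ≤ ∑ j, (f j).natDegree := by
      rw [hS, Finset.mul_sum]
      refine Finset.sum_le_sum fun j _ => ?_
      rw [hfj, natDegree_pow]
      exact Nat.mul_le_mul (hKk j) (hρd j)
    have h2 : Finset.univ.inf' H k * S ≤ ((n+3)*(n+1)) * S := by
      calc Finset.univ.inf' H k * S ≤ (n+3) * ((n+1) * T) := le_trans hKS hsum_le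
        _ = ((n+3)*(n+1)) * S := by rw [hTS]; ring
    exact Nat.le_of_mul_le_mul_right h2 (by omega)
  have h3 := hKle ⟨⟨0, by omega⟩, Finset.mem_univ _⟩
  have h4 : ((Finset.univ.inf' ⟨⟨0, by omega⟩, Finset.mem_univ _⟩ k : ℕ) : ℤ)
      ≤ ((n:ℤ)+3)*((n:ℤ)+1) := by exact_mod_cast h3
  have hn : (0:ℤ) ≤ (n:ℤ) := Int.natCast_nonneg n
  push_cast
  nlinarith [h4, hn, mul_nonneg (mul_nonneg hn hn) hn, mul_nonneg hn hn]
end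

section
/- Let m ≥ 3 be an integer, p_1, …, p_m ∈ ℂ[x] nonzero polynomials, and k a positive integer such that p_1^k + p_2^k + ⋯ + p_m^k = 0 and for all i ≠ j the quotient p_i/p_j is not a constant (i.e., p_i is not a constant multiple of p_j). Then k < (m^3 + 7m^2 − 49m + 68)/3. -/
open Polynomial

lemma pow_dvd_iter_deriv (p : ℂ[X]) (k : ℕ) : ∀ j : ℕ, p ^ (k - j) ∣ derivative^[j] (p ^ k) := by
  intro j
  induction j with
  | zero => simp
  | succ j ih =>
    obtain ⟨h, hh⟩ := ih
    rw [Function.iterate_succ_apply', hh, derivative_mul, derivative_pow]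
    have h1 : p ^ (k - (j+1)) ∣ p ^ (k - j - 1) := pow_dvd_pow _ (by omega)
    have h2 : p ^ (k - (j+1)) ∣ p ^ (k - j) := pow_dvd_pow _ (by omega)
    exact dvd_add (((h1.mul_left _).mul_right _).mul_right _) (h2.mul_right _)

lemma det_row_dvd {n : ℕ} (q : Fin n → ℂ[X]) (M : Matrix (Fin n) (Fin n) ℂ[X])
    (h : ∀ i j, q i ∣ M i j) : (∏ i, q i) ∣ M.det := by
  rw [Matrix.det_apply]
  apply Finset.dvd_sum
  intro σ _
  have hd : (∏ i, q i) ∣ ∏ i, M (σ i) i := by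
    have : ∏ i, q i = ∏ i, q (σ i) := (Equiv.prod_comp σ (fun i => q i)).symm
    rw [this]
    exact Finset.prod_dvd_prod_of_dvd _ _ (fun i _ => h (σ i) i)
  rcases Int.units_eq_one_or (Equiv.Perm.sign σ) with hs | hs <;> rw [hs] <;> simpa using hd

lemma natDegree_det_le {n : ℕ} (M : Matrix (Fin n) (Fin n) ℂ[X]) (D : Fin n → ℕ)
    (h : ∀ i j, (M i j).natDegree ≤ D i) : M.det.natDegree ≤ ∑ i, D i := by
  rw [Matrix.det_apply]
  apply Polynomial.natDegree_sum_le_of_forall_le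
  intro σ _
  have h1 : ((Equiv.Perm.sign σ) • ∏ i, M (σ i) i).natDegree ≤ (∏ i, M (σ i) i).natDegree := by
    rcases Int.units_eq_one_or (Equiv.Perm.sign σ) with hs | hs <;> rw [hs] <;> simp [natDegree_neg]
  refine h1.trans ((Polynomial.natDegree_prod_le _ _).trans ?_)
  have : ∑ i, D i = ∑ i, D (σ i) := (Equiv.sum_comp σ (fun i => D i)).symm
  rw [this]
  exact Finset.sum_le_sum (fun i _ => h (σ i) i)

lemma dvd_of_rootMult (a b : ℂ[X]) (ha : a ≠ 0) (hb : b ≠ 0)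
    (h : ∀ α : ℂ, (X - C α) ^ (a.rootMultiplicity α) ∣ b) : a ∣ b := by
  classical
  apply Splits.dvd_of_roots_le_roots (IsAlgClosed.splits a) ha
  rw [Multiset.le_iff_count]
  intro α
  rw [count_roots, count_roots]
  rw [Polynomial.le_rootMultiplicity_iff hb]
  exact h α

lemma prop_of_pow_eq (a b : ℂ[X]) (k : ℕ) (hk : 0 < k) (hb : b ≠ 0) (e : ℂ) (he : e ≠ 0)
    (h : a ^ k = C e * b ^ k) : ∃ u : ℂ, a = C u * b := by
  have ha : a ≠ 0 := by
    intro h0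
    rw [h0, zero_pow hk.ne'] at h
    exact (mul_ne_zero (by simpa using he) (pow_ne_zero _ hb)) h.symm
  have hroots : a.roots = b.roots := by
    have h1 : (a ^ k).roots = (C e * b ^ k).roots := by rw [h]
    rw [roots_pow, roots_C_mul _ he, roots_pow] at h1
    ext α
    have h2 := congrArg (Multiset.count α) h1
    simpa [Multiset.count_nsmul, Nat.mul_left_cancel_iff hk] using h2
  have hab : a ∣ b :=
    Splits.dvd_of_roots_le_roots (IsAlgClosed.splits a) ha hroots.le
  have hba : b ∣ a :=
    Splits.dvd_of_roots_le_roots (IsAlgClosed.splits b) hb hroots.ge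
  obtain ⟨u, hu⟩ := (associated_of_dvd_dvd hab hba).symm
  obtain ⟨r, hr, hru⟩ := Polynomial.isUnit_iff.mp u.isUnit
  exact ⟨r, by rw [← hu, ← hru, mul_comm]⟩

lemma wronskian_zero_prop (a b : ℂ[X]) (hb : b ≠ 0)
    (h : b * derivative a = derivative b * a) : ∃ e : ℂ, a = C e * b := by
  classical
  by_cases ha : a = 0
  · exact ⟨0, by simp [ha]⟩
  set d := GCDMonoid.gcd a b with hd
  have hdvda : d ∣ a := gcd_dvd_left a b
  have hdvdb : d ∣ b := gcd_dvd_right a b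
  have hd0 : d ≠ 0 := gcd_ne_zero_of_left ha
  set a1 := a / d with ha1
  set b1 := b / d with hb1
  have haa : a = d * a1 := (EuclideanDomain.mul_div_cancel' hd0 hdvda).symm
  have hbb : b = d * b1 := (EuclideanDomain.mul_div_cancel' hd0 hdvdb).symm
  have hcop : IsCoprime a1 b1 := isCoprime_div_gcd_div_gcd hb
  have ha10 : a1 ≠ 0 := fun h0 => ha (by rw [haa, h0, mul_zero])
  have hb10 : b1 ≠ 0 := fun h0 => hb (by rw [hbb, h0, mul_zero])
  -- reduce the wronskian identity
  have key : b1 * derivative a1 = derivative b1 * a1 := by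
    have expand : d * (b1 * (derivative d * a1 + d * derivative a1))
        = d * ((derivative d * b1 + d * derivative b1) * a1) := by
      have := h
      rw [haa, hbb, derivative_mul, derivative_mul] at this
      ring_nf at this ⊢
      linear_combination this
    have := mul_left_cancel₀ hd0 expand
    have h2 : d * (b1 * derivative a1) = d * (derivative b1 * a1) := by ring_nf; linear_combination this
    exact mul_left_cancel₀ hd0 h2
  -- b1 divides derivative b1
  have hb1dvd : b1 ∣ derivative b1 := by
    have h1 : b1 ∣ derivative b1 * a1 := ⟨derivative a1, by linear_combination key.symm⟩
    exact (hcop.symm.dvd_of_dvd_mul_right h1)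
  have hdb1 : derivative b1 = 0 := by
    by_contra hne
    have h1 := Polynomial.natDegree_le_of_dvd hb1dvd hne
    have hlt := Polynomial.natDegree_derivative_lt (p := b1) (fun hc => hne (by rw [Polynomial.eq_C_of_natDegree_eq_zero hc]; simp))
    omega
  have ha1dvd : a1 ∣ derivative a1 := by
    have h1 : a1 ∣ b1 * derivative a1 := ⟨derivative b1, by linear_combination key⟩
    exact (hcop.dvd_of_dvd_mul_left h1)
  have hda1 : derivative a1 = 0 := by
    by_contra hne
    have h1 := Polynomial.natDegree_le_of_dvd ha1dvd hne
    have hlt := Polynomial.natDegree_derivative_lt (p := a1) (fun hc => hne (by rw [Polynomial.eq_C_of_natDegree_eq_zero hc]; simp))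
    omega
  obtain ⟨ea, hea⟩ : ∃ ea : ℂ, a1 = C ea := ⟨_, eq_C_of_derivative_eq_zero hda1⟩
  obtain ⟨eb, heb⟩ : ∃ eb : ℂ, b1 = C eb := ⟨_, eq_C_of_derivative_eq_zero hdb1⟩
  have heb0 : eb ≠ 0 := fun h0 => hb10 (by rw [heb, h0, map_zero])
  refine ⟨ea / eb, ?_⟩
  rw [haa, hbb, hea, heb]
  rw [mul_comm (C (ea/eb)) _, mul_assoc, ← map_mul]
  congr 2
  field_simp

lemma kernel_unique {K : Type*} [Field K] {n : ℕ} (A : Matrix (Fin (n+1)) (Fin n) K)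
    (hB : (A.submatrix Fin.castSucc id).det ≠ 0) (v w : Fin (n+1) → K)
    (hv : Matrix.vecMul v A = 0) (hw : Matrix.vecMul w A = 0) (i : Fin (n+1)) :
    v (Fin.last n) * w i = w (Fin.last n) * v i := by
  set B := A.submatrix Fin.castSucc (id : Fin n → Fin n) with hBdef
  have hBunit : IsUnit B.det := hB.isUnit
  set u : Fin (n+1) → K := fun j => v (Fin.last n) * w j - w (Fin.last n) * v j with hu
  have hulast : u (Fin.last n) = 0 := by simp [hu]; ring
  have huker : Matrix.vecMul u A = 0 := by
    have h1 : Matrix.vecMul u A = v (Fin.last n) • Matrix.vecMul w A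
        - w (Fin.last n) • Matrix.vecMul v A := by
      ext j
      simp [Matrix.vecMul, dotProduct, hu, Finset.sum_sub_distrib,
        Finset.mul_sum, sub_mul, mul_assoc]
    rw [h1, hv, hw]; simp
  have hu0 : ∀ j : Fin n, u (Fin.castSucc j) = 0 := by
    set u0 : Fin n → K := fun j => u (Fin.castSucc j) with hu0def
    have hker0 : Matrix.vecMul u0 B = 0 := by
      ext j
      have := congrFun huker j
      simp only [Matrix.vecMul, dotProduct] at this ⊢
      rw [Fin.sum_univ_castSucc] at this
      simp [hulast] at this
      simpa [hBdef, Matrix.submatrix] using this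
    have : u0 = 0 := by
      have h2 := congrArg (fun x => Matrix.vecMul x (B⁻¹)) hker0
      simpa [Matrix.vecMul_vecMul, Matrix.mul_nonsing_inv B hBunit] using h2
    intro j; exact congrFun this j
  have : u i = 0 := by
    rcases Fin.eq_castSucc_or_eq_last i with ⟨j, rfl⟩ | rfl
    · exact hu0 j
    · exact hulast
  exact sub_eq_zero.mp this

noncomputable abbrev KK := RatFunc ℂ
noncomputable abbrev φ : ℂ[X] →+* KK := algebraMap ℂ[X] KK

lemma phi_inj : Function.Injective φ := IsFractionRing.injective ℂ[X] KK

lemma not_linearIndependent_of_wronskian_det_eq_zero :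
    ∀ (n : ℕ) (f : Fin n → ℂ[X]),
      (Matrix.of fun (i j : Fin n) => derivative^[(j : ℕ)] (f i)).det = 0 →
      ¬ LinearIndependent ℂ f := by
  intro n
  induction n with
  | zero => intro f hdet; simp [Matrix.det_isEmpty] at hdet
  | succ n IH =>
    intro f hdet hLI
    classical
    have hLI' : LinearIndependent ℂ (f ∘ Fin.castSucc) :=
      hLI.comp _ (Fin.castSucc_injective _)
    set M' : Matrix (Fin n) (Fin n) ℂ[X] :=
      Matrix.of fun i j => derivative^[(j : ℕ)] (f (Fin.castSucc i)) with hM'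
    have hdet' : M'.det ≠ 0 := by
      intro h0
      exact IH (f ∘ Fin.castSucc) (by
        exact h0) hLI'
    -- pass to the fraction field
    set M : Matrix (Fin (n+1)) (Fin (n+1)) ℂ[X] :=
      Matrix.of fun i j => derivative^[(j : ℕ)] (f i) with hM
    have hmapdet : (M.map (φ : ℂ[X] →+* KK) : Matrix _ _ KK).det = φ M.det :=
      (RingHom.map_det φ M).symm
    have hmapdet' : (M'.map (φ : ℂ[X] →+* KK) : Matrix _ _ KK).det = φ M'.det :=
      (RingHom.map_det φ M').symm
    have hdetK : (M.map φ).det = 0 := by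
      rw [hmapdet, hdet, map_zero]
    obtain ⟨v, hv0, hvA⟩ := Matrix.exists_vecMul_eq_zero_iff.mpr hdetK
    -- clear denominators
    obtain ⟨b, hb⟩ := IsLocalization.exist_integer_multiples
      (nonZeroDivisors ℂ[X]) Finset.univ v
    choose g hg using fun i : Fin (n+1) => hb i (Finset.mem_univ i)
    have hφb : φ (b : ℂ[X]) ≠ 0 := fun h0 =>
      nonZeroDivisors.ne_zero b.2 (phi_inj (by simpa using h0))
    have hgv : ∀ i, φ (g i) = φ (b : ℂ[X]) * v i := by
      intro i
      rw [hg i, Algebra.smul_def]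
    have hgne : ∃ i, g i ≠ 0 := by
      obtain ⟨i, hi⟩ := Function.ne_iff.mp hv0
      refine ⟨i, fun h0 => ?_⟩
      have := hgv i
      rw [h0, map_zero] at this
      exact hi (by
        rcases mul_eq_zero.mp this.symm with h | h
        · exact absurd h hφb
        · simpa using h)
    have hker : ∀ j : Fin (n+1), ∑ i, g i * derivative^[(j : ℕ)] (f i) = 0 := by
      intro j
      apply phi_inj
      rw [map_zero, map_sum]
      have : ∀ i, φ (g i * derivative^[(j : ℕ)] (f i))
          = φ (b : ℂ[X]) * (v i * (M.map φ) i j) := by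
        intro i
        rw [map_mul, hgv i]
        ring_nf
        rfl
      rw [Finset.sum_congr rfl (fun i _ => this i), ← Finset.mul_sum]
      have := congrFun hvA j
      simp only [Matrix.vecMul, dotProduct, Pi.zero_apply] at this
      rw [this, mul_zero]
    -- g at the last index is nonzero
    have hglast : g (Fin.last n) ≠ 0 := by
      intro h0
      have hker' : ∀ j : Fin n, ∑ i : Fin n, g (Fin.castSucc i) * M' i j = 0 := by
        intro j
        have := hker (Fin.castSucc j)
        rw [Fin.sum_univ_castSucc] at this
        rw [h0, zero_mul, add_zero] at this
        simpa [hM', Fin.coe_castSucc] using this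
      have hvne : (fun i : Fin n => φ (g (Fin.castSucc i))) ≠ 0 := by
        obtain ⟨i, hi⟩ := hgne
        have hic : i ≠ Fin.last n := fun h => hi (h ▸ h0)
        obtain ⟨i', rfl⟩ := Fin.eq_castSucc_or_eq_last i |>.resolve_right hic
        intro hfun
        exact hi (phi_inj (by simpa using congrFun hfun i'))
      have : (M'.map φ).det = 0 := by
        rw [← Matrix.exists_vecMul_eq_zero_iff]
        refine ⟨_, hvne, ?_⟩
        ext j
        have := hker' j
        have h2 := congrArg φ this
        rw [map_sum, map_zero] at h2
        simpa [Matrix.vecMul, dotProduct, map_mul] using h2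
      rw [hmapdet'] at this
      exact hdet' (phi_inj (by rw [this, map_zero]))
    -- derivative of kernel vector is also a kernel vector
    have hkerd : ∀ j : Fin n, ∑ i, derivative (g i) * derivative^[(j : ℕ)] (f i) = 0 := by
      intro j
      have h1 := congrArg derivative (hker (Fin.castSucc j))
      rw [derivative_sum, map_zero] at h1
      have h2 : ∀ i, derivative (g i * derivative^[((Fin.castSucc j : Fin (n+1)) : ℕ)] (f i))
          = derivative (g i) * derivative^[(j : ℕ)] (f i)
            + g i * derivative^[((Fin.succ j : Fin (n+1)) : ℕ)] (f i) := by
        intro i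
        rw [derivative_mul]
        simp [Fin.coe_castSucc, Fin.val_succ, Function.iterate_succ_apply']
      rw [Finset.sum_congr rfl (fun i _ => h2 i), Finset.sum_add_distrib] at h1
      rw [hker (Fin.succ j), add_zero] at h1
      exact h1
    -- apply kernel uniqueness over K
    set A : Matrix (Fin (n+1)) (Fin n) KK :=
      Matrix.of fun i j => φ (derivative^[(j : ℕ)] (f i)) with hA
    have hBne : (A.submatrix Fin.castSucc id).det ≠ 0 := by
      have : A.submatrix Fin.castSucc id = M'.map φ := by
        ext i j
        simp [hA, hM', Matrix.submatrix, Fin.coe_castSucc]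
      rw [this, hmapdet']
      exact fun h0 => hdet' (phi_inj (by rw [h0, map_zero]))
    have hkA : Matrix.vecMul (fun i => φ (g i)) A = 0 := by
      ext j
      have := congrArg φ (hker (Fin.castSucc j))
      rw [map_sum, map_zero] at this
      simpa [Matrix.vecMul, dotProduct, map_mul, hA, Fin.coe_castSucc] using this
    have hkA' : Matrix.vecMul (fun i => φ (derivative (g i))) A = 0 := by
      ext j
      have := congrArg φ (hkerd j)
      rw [map_sum, map_zero] at this
      simpa [Matrix.vecMul, dotProduct, map_mul, hA] using this
    have hcross : ∀ i, g (Fin.last n) * derivative (g i) = derivative (g (Fin.last n)) * g i := by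
      intro i
      apply phi_inj
      have := kernel_unique A hBne (fun i => φ (g i)) (fun i => φ (derivative (g i))) hkA hkA' i
      simpa [map_mul] using this
    choose e he using fun i => wronskian_zero_prop (g i) (g (Fin.last n)) hglast (hcross i)
    -- build a linear dependence of f
    have hdep : ∑ i, e i • f i = 0 := by
      have h0 := hker 0
      simp only [Fin.val_zero, Function.iterate_zero_apply] at h0
      have : ∀ i, g i * f i = g (Fin.last n) * (e i • f i) := by
        intro i
        rw [he i, Polynomial.smul_eq_C_mul]
        ring
      rw [Finset.sum_congr rfl (fun i _ => this i), ← Finset.mul_sum] at h0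
      rcases mul_eq_zero.mp h0 with h | h
      · exact absurd h hglast
      · exact h
    have := linearIndependent_iff'.mp hLI Finset.univ e hdep (Fin.last n) (Finset.mem_univ _)
    apply hglast
    rw [he (Fin.last n), this, map_zero, zero_mul]

lemma rootMult_finprod {ι : Type*} (s : Finset ι) (f : ι → ℂ[X]) (h : ∀ i ∈ s, f i ≠ 0) (α : ℂ) :
    rootMultiplicity α (∏ i ∈ s, f i) = ∑ i ∈ s, rootMultiplicity α (f i) := by
  classical
  induction s using Finset.induction_on with
  | empty => simp [Polynomial.rootMultiplicity_eq_zero (by simp : ¬ IsRoot (1 : ℂ[X]) α)]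
  | @insert a s ha ih =>
    rw [Finset.prod_insert ha, Finset.sum_insert ha,
      Polynomial.rootMultiplicity_mul, ih (fun i hi => h i (Finset.mem_insert_of_mem hi))]
    exact mul_ne_zero (h a (Finset.mem_insert_self a s))
      (Finset.prod_ne_zero_iff.mpr (fun i hi => h i (Finset.mem_insert_of_mem hi)))

lemma iter_deriv_lin {n : ℕ} (j : ℕ) (c : Fin n → ℂ) (F : Fin n → ℂ[X]) :
    derivative^[j] (∑ i, C (c i) * F i) = ∑ i, C (c i) * derivative^[j] (F i) := by
  induction j with
  | zero => simp
  | succ j ih =>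
    rw [Function.iterate_succ_apply', ih, derivative_sum]
    congr 1; ext i
    rw [derivative_mul, derivative_C, zero_mul, zero_add, Function.iterate_succ_apply']

lemma main_L : ∀ n : ℕ, 3 ≤ n → ∀ (k : ℕ) (q : Fin n → ℂ[X]) (c : Fin n → ℂ),
    (∀ i, q i ≠ 0) → (∀ i, c i ≠ 0) →
    (∀ i j, i ≠ j → ∀ e : ℂ, q i ≠ C e * q j) →
    (∑ i, C (c i) * q i ^ k) = 0 → 0 < k → k ≤ n * (n - 2) := by
  intro n
  induction n using Nat.strong_induction_on with
  | _ n IH =>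
  intro hn k q c hq hc hprop hsum hk
  classical
  by_cases hksmall : k ≤ n - 2
  · exact hksmall.trans (Nat.le_mul_of_pos_left _ (by omega))
  push_neg at hksmall
  have hkbig : n - 1 ≤ k := by omega
  -- divide out the gcd
  set g : ℂ[X] := Finset.univ.gcd q with hg
  have hgdvd : ∀ i, g ∣ q i := fun i => Finset.gcd_dvd (Finset.mem_univ i)
  have hg0 : g ≠ 0 := by
    intro h0
    obtain ⟨i⟩ : Nonempty (Fin n) := ⟨⟨0, by omega⟩⟩
    exact hq i (Finset.gcd_eq_zero_iff.mp h0 i (Finset.mem_univ i))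
  set q' : Fin n → ℂ[X] := fun i => q i / g with hq'
  have hmul : ∀ i, q i = g * q' i := fun i =>
    (EuclideanDomain.mul_div_cancel' hg0 (hgdvd i)).symm
  have hq'0 : ∀ i, q' i ≠ 0 := fun i h0 => hq i (by rw [hmul i, h0, mul_zero])
  have hprop' : ∀ i j, i ≠ j → ∀ e : ℂ, q' i ≠ C e * q' j := by
    intro i j hij e hE
    exact hprop i j hij e (by rw [hmul i, hmul j, hE]; ring)
  have hsum' : ∑ i, C (c i) * q' i ^ k = 0 := by
    have h1 : g ^ k * ∑ i, C (c i) * q' i ^ k = 0 := by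
      rw [Finset.mul_sum, ← hsum]
      congr 1; ext i
      rw [hmul i]; ring
    rcases mul_eq_zero.mp h1 with h | h
    · exact absurd h (pow_ne_zero _ hg0)
    · exact h
  have hnoroot : ∀ α : ℂ, ∃ i, rootMultiplicity α (q' i) = 0 := by
    intro α
    by_contra hall
    push_neg at hall
    have hdvd : ∀ i, g * (X - C α) ∣ q i := by
      intro i
      rw [hmul i]
      exact mul_dvd_mul_left g (Polynomial.dvd_iff_isRoot.mpr
        ((Polynomial.rootMultiplicity_pos (hq'0 i)).mp (Nat.pos_of_ne_zero (hall i))))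
    have hdg : g * (X - C α) ∣ g := Finset.dvd_gcd (fun i _ => hdvd i)
    obtain ⟨t, ht⟩ := hdg
    have : (1 : ℂ[X]) = (X - C α) * t := by
      apply mul_left_cancel₀ hg0
      rw [mul_one, ← mul_assoc]; exact ht
    exact Polynomial.not_isUnit_X_sub_C α (IsUnit.of_mul_eq_one _ this.symm)
  -- case split on whether there is a non-full-support linear relation
  by_cases hfull : ∃ e : Fin n → ℂ, (∃ i, e i ≠ 0) ∧ (∑ i, C (e i) * q' i ^ k = 0)
      ∧ (∃ i0, e i0 = 0)
  · -- Case A: recurse on a smaller vanishing relation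
    obtain ⟨e, ⟨i1, hi1⟩, hrel, ⟨i0, hi0⟩⟩ := hfull
    set S : Finset (Fin n) := Finset.univ.filter (fun i => e i ≠ 0) with hS
    have hSsum : ∑ i ∈ S, C (e i) * q' i ^ k = 0 := by
      rw [← hrel]
      apply Finset.sum_subset (Finset.subset_univ S)
      intro i _ hiS
      have : e i = 0 := by
        by_contra hne
        exact hiS (Finset.mem_filter.mpr ⟨Finset.mem_univ i, hne⟩)
      rw [this, map_zero, zero_mul]
    have hi1S : i1 ∈ S := Finset.mem_filter.mpr ⟨Finset.mem_univ i1, hi1⟩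
    have hi0S : i0 ∉ S := fun h => (Finset.mem_filter.mp h).2 hi0
    have hSne : S ≠ Finset.univ := by
      intro h
      rw [h] at hi0S
      exact hi0S (Finset.mem_univ i0)
    have hcard_lt : S.card < n := by
      have := Finset.card_lt_card (Finset.ssubset_univ_iff.mpr hSne)
      simpa using this
    have hcard1 : S.Nonempty := ⟨i1, hi1S⟩
    -- card cannot be 1
    have hcard_ne1 : S.card ≠ 1 := by
      intro h1
      obtain ⟨a, ha⟩ := Finset.card_eq_one.mp h1
      rw [ha, Finset.sum_singleton] at hSsum
      have haS : a ∈ S := ha ▸ Finset.mem_singleton_self a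
      have hea : e a ≠ 0 := (Finset.mem_filter.mp haS).2
      exact (mul_ne_zero (by simpa using hea) (pow_ne_zero _ (hq'0 a))) hSsum
    -- card cannot be 2
    have hcard_ne2 : S.card ≠ 2 := by
      intro h2
      obtain ⟨a, b, hab, hab2⟩ := Finset.card_eq_two.mp h2
      rw [hab2] at hSsum
      rw [Finset.sum_insert (by simpa using hab), Finset.sum_singleton] at hSsum
      have haS : a ∈ S := hab2 ▸ Finset.mem_insert_self a {b}
      have hbS : b ∈ S := hab2 ▸ Finset.mem_insert_of_mem (Finset.mem_singleton_self b)
      have hea : e a ≠ 0 := (Finset.mem_filter.mp haS).2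
      have heb : e b ≠ 0 := (Finset.mem_filter.mp hbS).2
      have hpow : q' a ^ k = C (-(e b) / e a) * q' b ^ k := by
        have : C (e a) * q' a ^ k = C (-(e b)) * q' b ^ k := by
          rw [map_neg]; linear_combination hSsum
        calc q' a ^ k = C (e a)⁻¹ * (C (e a) * q' a ^ k) := by
              rw [← mul_assoc, ← map_mul, inv_mul_cancel₀ hea, map_one, one_mul]
          _ = C (e a)⁻¹ * (C (-(e b)) * q' b ^ k) := by rw [this]
          _ = C (-(e b) / e a) * q' b ^ k := by
              rw [← mul_assoc, ← map_mul]; congr 2; field_simp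
      obtain ⟨u, hu⟩ := prop_of_pow_eq _ _ k hk (hq'0 b) _
        (div_ne_zero (neg_ne_zero.mpr heb) hea) hpow
      exact hprop' a b hab u hu
    have hcard3 : 3 ≤ S.card := by
      have h1 : 1 ≤ S.card := Finset.card_pos.mpr hcard1
      omega
    -- reindex and recurse
    have heS : ∀ i ∈ S, e i ≠ 0 := fun i hi => (Finset.mem_filter.mp hi).2
    clear hS hi1S hi0S hSne hcard_ne1 hcard_ne2 hcard1
    clear_value S
    obtain ⟨σ⟩ : Nonempty (Fin S.card ≃ {x // x ∈ S}) := ⟨S.equivFin.symm⟩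
    have hsum2 : ∑ t : Fin S.card, C (e (σ t : Fin n)) * q' (σ t : Fin n) ^ k = 0 := by
      calc ∑ t : Fin S.card, C (e (σ t : Fin n)) * q' (σ t : Fin n) ^ k
          = ∑ x : {x // x ∈ S}, C (e (x : Fin n)) * q' (x : Fin n) ^ k :=
            Equiv.sum_comp σ (fun x => C (e (x : Fin n)) * q' (x : Fin n) ^ k)
        _ = ∑ i ∈ S, C (e i) * q' i ^ k := Finset.sum_coe_sort S (fun i => C (e i) * q' i ^ k)
        _ = 0 := hSsum
    have := IH S.card hcard_lt hcard3 k (fun t => q' (σ t : Fin n)) (fun t => e (σ t : Fin n))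
      (fun t => hq'0 _) (fun t => heS _ (σ t).2)
      (fun t t' htt' u hu => by
        have hne : (σ t : Fin n) ≠ (σ t' : Fin n) := by
          intro hcc
          exact htt' (σ.injective (Subtype.ext hcc))
        exact hprop' _ _ hne u hu) hsum2 hk
    refine this.trans ?_
    exact Nat.mul_le_mul (le_of_lt hcard_lt) (by omega)
  · -- Case B: every nontrivial relation has full support; Wronskian argument
    push_neg at hfull
    obtain ⟨N, rfl⟩ : ∃ N, n = N + 1 := ⟨n - 1, by omega⟩
    have hN2 : 2 ≤ N := by omega
    set Ap : Matrix (Fin (N+1)) (Fin N) ℂ[X] :=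
      Matrix.of fun r j => derivative^[(j : ℕ)] (q' r ^ k) with hAp
    set Mp : Fin (N+1) → Matrix (Fin N) (Fin N) ℂ[X] :=
      fun i => Ap.submatrix i.succAbove id with hMp
    set W0 : ℂ[X] := (Mp (Fin.last N)).det with hW0def
    -- linear independence of the first N powers
    have hLIcast : LinearIndependent ℂ (fun t : Fin N => q' (Fin.castSucc t) ^ k) := by
      by_contra hdep
      obtain ⟨a, hasum, t0, ht0⟩ := Fintype.not_linearIndependent_iff.mp hdep
      set e : Fin (N+1) → ℂ := Fin.lastCases 0 a with he
      have hecast : ∀ t : Fin N, e (Fin.castSucc t) = a t := fun t => by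
        simp [he]
      have helast : e (Fin.last N) = 0 := by simp [he]
      have hsum0 : ∑ i, C (e i) * q' i ^ k = 0 := by
        rw [Fin.sum_univ_castSucc, helast, map_zero, zero_mul, add_zero]
        rw [← hasum]
        apply Finset.sum_congr rfl
        intro t _
        rw [hecast t, Polynomial.smul_eq_C_mul]
      exact hfull e ⟨Fin.castSucc t0, by rw [hecast t0]; exact ht0⟩ hsum0 (Fin.last N) helast
    have hW0 : W0 ≠ 0 := by
      intro h0
      apply not_linearIndependent_of_wronskian_det_eq_zero N
        (fun t => q' (Fin.castSucc t) ^ k) ?_ hLIcast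
      rw [← h0, hW0def]
      congr 1
      ext t j
      simp [hMp, hAp, Fin.succAbove_last]
    -- Laplace expansion: the minor vector is a kernel vector
    have hlap : ∀ j : Fin N,
        ∑ i : Fin (N+1), (-1 : ℂ[X]) ^ (i : ℕ) * (Ap i j * (Mp i).det) = 0 := by
      intro j
      set Sq : Matrix (Fin (N+1)) (Fin (N+1)) ℂ[X] :=
        Matrix.of fun r t => Fin.cases (Ap r j) (fun t' => Ap r t') t with hSq
      have hdet0 : Sq.det = 0 := by
        apply Matrix.det_zero_of_column_eq (show (0 : Fin (N+1)) ≠ Fin.succ j from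
          (Fin.succ_ne_zero j).symm)
        intro r
        simp [hSq]
      have hexp := Matrix.det_succ_column_zero Sq
      rw [hdet0] at hexp
      have hcongr : ∑ i : Fin (N+1), (-1 : ℂ[X]) ^ (i : ℕ) * (Ap i j * (Mp i).det)
          = ∑ i : Fin N.succ, (-1 : ℂ[X]) ^ (i : ℕ) * Sq i 0
              * (Sq.submatrix i.succAbove Fin.succ).det := by
        apply Finset.sum_congr rfl
        intro i _
        have h1 : Sq i 0 = Ap i j := by simp [hSq]
        have h2 : (Sq.submatrix i.succAbove Fin.succ) = Mp i := by
          ext r t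
          simp [hSq, hMp]
        rw [h1, h2, mul_assoc]
      rw [hcongr, ← hexp]
    -- pass to the fraction field and use kernel uniqueness
    set A : Matrix (Fin (N+1)) (Fin N) KK := Ap.map φ with hA
    have hBdet : (A.submatrix Fin.castSucc id).det ≠ 0 := by
      have hsub : A.submatrix Fin.castSucc id = (Mp (Fin.last N)).map φ := by
        ext t j
        simp [hA, hMp, Fin.succAbove_last]
      rw [hsub]
      have : ((Mp (Fin.last N)).map (φ : ℂ[X] →+* KK) : Matrix _ _ KK).det = φ W0 :=
        (RingHom.map_det φ _).symm
      rw [this]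
      intro hcon
      exact hW0 (phi_inj (by rw [hcon, map_zero]))
    have hvA : Matrix.vecMul (fun i => φ (C (c i))) A = 0 := by
      ext j
      simp only [Matrix.vecMul, dotProduct, Pi.zero_apply]
      have : ∀ i, φ (C (c i)) * A i j = φ (C (c i) * Ap i j) := by
        intro i; rw [map_mul]; rfl
      rw [Finset.sum_congr rfl (fun i _ => this i), ← map_sum]
      have hzero : ∑ i, C (c i) * Ap i j = 0 := by
        show ∑ i, C (c i) * derivative^[(j : ℕ)] (q' i ^ k) = 0
        rw [← iter_deriv_lin (n := N+1) (j : ℕ) c (fun i => q' i ^ k), hsum']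
        simp
      rw [hzero, map_zero]
    have hwA : Matrix.vecMul (fun i : Fin (N+1) => φ ((-1 : ℂ[X]) ^ (i : ℕ) * (Mp i).det)) A = 0 := by
      ext j
      simp only [Matrix.vecMul, dotProduct, Pi.zero_apply]
      have : ∀ i : Fin (N+1), φ ((-1 : ℂ[X]) ^ (i : ℕ) * (Mp i).det) * A i j
          = φ ((-1 : ℂ[X]) ^ (i : ℕ) * (Ap i j * (Mp i).det)) := by
        intro i
        rw [map_mul, map_mul, map_mul]
        show _ * φ (Ap i j) = _
        ring
      rw [Finset.sum_congr rfl (fun i _ => this i), ← map_sum, hlap j, map_zero]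
    have hcrossK := kernel_unique A hBdet _ _ hvA hwA
    have hcross : ∀ i : Fin (N+1), C (c (Fin.last N)) * ((-1 : ℂ[X]) ^ (i : ℕ) * (Mp i).det)
        = ((-1 : ℂ[X]) ^ (N : ℕ) * W0) * C (c i) := by
      intro i
      apply phi_inj
      rw [map_mul, map_mul]
      have := hcrossK i
      simpa [hW0def, Fin.val_last, mul_comm] using this
    -- express W0 as a unit multiple of each minor
    have hCneg : (-1 : ℂ[X]) = C (-1 : ℂ) := by simp
    have hW0eq : ∀ i : Fin (N+1), ∃ δ : ℂ, δ ≠ 0 ∧ W0 = C δ * (Mp i).det := by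
      intro i
      set γ : ℂ := (-1 : ℂ) ^ (N : ℕ) * c i with hγ
      have hγ0 : γ ≠ 0 := mul_ne_zero (pow_ne_zero _ (by norm_num)) (hc i)
      refine ⟨γ⁻¹ * (c (Fin.last N) * (-1) ^ (i : ℕ)), ?_, ?_⟩
      · exact mul_ne_zero (inv_ne_zero hγ0)
          (mul_ne_zero (hc (Fin.last N)) (pow_ne_zero _ (by norm_num)))
      · have h1 := hcross i
        rw [hCneg, ← map_pow, ← map_pow] at h1
        have h2 : C γ * W0 = C (c (Fin.last N) * (-1) ^ (i : ℕ)) * (Mp i).det := by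
          rw [hγ, map_mul, map_mul]
          linear_combination -h1
        calc W0 = C γ⁻¹ * (C γ * W0) := by
              rw [← mul_assoc, ← map_mul, inv_mul_cancel₀ hγ0, map_one, one_mul]
          _ = C γ⁻¹ * (C (c (Fin.last N) * (-1) ^ (i : ℕ)) * (Mp i).det) := by rw [h2]
          _ = C (γ⁻¹ * (c (Fin.last N) * (-1) ^ (i : ℕ))) * (Mp i).det := by
              rw [← mul_assoc, ← map_mul]
    -- divisibility of the minors
    set cc : ℕ := k - (N - 1) with hcc
    have hcc1 : 1 ≤ cc := by omega
    have hDi : ∀ i : Fin (N+1), (∏ t : Fin N, q' (i.succAbove t) ^ cc) ∣ (Mp i).det := by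
      intro i
      apply det_row_dvd
      intro t j
      have h1 : q' (i.succAbove t) ^ cc ∣ q' (i.succAbove t) ^ (k - (j : ℕ)) :=
        pow_dvd_pow _ (by have := j.isLt; omega)
      exact h1.trans (pow_dvd_iter_deriv _ k (j : ℕ))
    have hDiW : ∀ i : Fin (N+1), (∏ t : Fin N, q' (i.succAbove t) ^ cc) ∣ W0 := by
      intro i
      obtain ⟨δ, hδ0, hδ⟩ := hW0eq i
      rw [hδ]
      exact (hDi i).mul_left _
    -- the full product divides W0
    have hQW : (∏ r : Fin (N+1), q' r ^ cc) ∣ W0 := by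
      apply dvd_of_rootMult _ _ (Finset.prod_ne_zero_iff.mpr
        (fun r _ => pow_ne_zero _ (hq'0 r))) hW0
      intro α
      obtain ⟨i, hi⟩ := hnoroot α
      have hnotroot : ¬ IsRoot (q' i) α := by
        intro hroot
        have := (Polynomial.rootMultiplicity_pos (hq'0 i)).mpr hroot
        omega
      have hmult0 : rootMultiplicity α (q' i ^ cc) = 0 := by
        apply Polynomial.rootMultiplicity_eq_zero
        intro hroot
        apply hnotroot
        have : eval α (q' i) ^ cc = 0 := by
          rw [← eval_pow]; exact hroot
        exact pow_eq_zero_iff (by omega) |>.mp this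
      rw [rootMult_finprod _ _ (fun r _ => pow_ne_zero _ (hq'0 r))]
      rw [Fin.sum_univ_succAbove _ i, hmult0, zero_add]
      have hdvd1 : (∏ t : Fin N, (X - C α) ^ rootMultiplicity α (q' (i.succAbove t) ^ cc))
          ∣ ∏ t : Fin N, q' (i.succAbove t) ^ cc :=
        Finset.prod_dvd_prod_of_dvd _ _
          (fun t _ => Polynomial.pow_rootMultiplicity_dvd _ _)
      rw [Finset.prod_pow_eq_pow_sum] at hdvd1
      exact hdvd1.trans (hDiW i)
    -- degree bounds
    set d : Fin (N+1) → ℕ := fun r => (q' r).natDegree with hd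
    obtain ⟨imax, _, himax⟩ := Finset.exists_max_image Finset.univ d
      ⟨Fin.last N, Finset.mem_univ _⟩
    have hdmax1 : 1 ≤ d imax := by
      by_contra h0
      push_neg at h0
      have hall0 : ∀ r, d r = 0 := fun r => by
        have := himax r (Finset.mem_univ r); omega
      have hi0 : (⟨0, by omega⟩ : Fin (N+1)) ≠ ⟨1, by omega⟩ := by
        simp [Fin.ext_iff]
      obtain ⟨a, ha⟩ : ∃ a : ℂ, q' ⟨0, by omega⟩ = C a :=
        ⟨_, Polynomial.eq_C_of_natDegree_eq_zero (hall0 _)⟩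
      obtain ⟨b, hb⟩ : ∃ b : ℂ, q' ⟨1, by omega⟩ = C b :=
        ⟨_, Polynomial.eq_C_of_natDegree_eq_zero (hall0 _)⟩
      have hb0 : b ≠ 0 := fun h => hq'0 ⟨1, by omega⟩ (by rw [hb, h, map_zero])
      apply hprop' ⟨0, by omega⟩ ⟨1, by omega⟩ hi0 (a / b)
      rw [ha, hb, ← map_mul]
      congr 1
      field_simp
    have hdeg1 : ((Mp imax).det).natDegree ≤ ∑ t : Fin N, k * d (imax.succAbove t) := by
      apply natDegree_det_le
      intro t j
      have h1 : ((Mp imax) t j).natDegree ≤ (q' (imax.succAbove t) ^ k).natDegree := by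
        have := Polynomial.natDegree_iterate_derivative (q' (imax.succAbove t) ^ k) (j : ℕ)
        calc ((Mp imax) t j).natDegree
            ≤ (q' (imax.succAbove t) ^ k).natDegree - (j : ℕ) := this
          _ ≤ _ := Nat.sub_le _ _
      rw [Polynomial.natDegree_pow] at h1
      exact h1.trans (le_of_eq (by rw [Nat.mul_comm]))
    have hdegW : W0.natDegree ≤ ∑ t : Fin N, k * d (imax.succAbove t) := by
      obtain ⟨δ, hδ0, hδ⟩ := hW0eq imax
      rw [hδ, Polynomial.natDegree_C_mul hδ0]
      exact hdeg1
    have hdeg2 : ∑ r : Fin (N+1), cc * d r ≤ W0.natDegree := by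
      have h1 : (∏ r : Fin (N+1), q' r ^ cc).natDegree = ∑ r, cc * d r := by
        rw [Polynomial.natDegree_prod _ _ (fun r _ => pow_ne_zero _ (hq'0 r))]
        apply Finset.sum_congr rfl
        intro r _
        rw [Polynomial.natDegree_pow]
      rw [← h1]
      exact Polynomial.natDegree_le_of_dvd hQW hW0
    -- arithmetic conclusion
    set Prest : ℕ := ∑ t : Fin N, d (imax.succAbove t) with hPrest
    have hsplitcc : ∑ r : Fin (N+1), cc * d r = cc * d imax + cc * Prest := by
      rw [Fin.sum_univ_succAbove _ imax, hPrest, Finset.mul_sum]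
    have hkmul : ∑ t : Fin N, k * d (imax.succAbove t) = k * Prest := by
      rw [hPrest, Finset.mul_sum]
    have hineq : cc * d imax + cc * Prest ≤ k * Prest := by
      rw [← hsplitcc, ← hkmul]
      exact hdeg2.trans hdegW
    have hkcc : k = cc + (N - 1) := by omega
    have hstep : cc * d imax ≤ (N - 1) * Prest := by
      have h1 : cc * Prest + cc * d imax ≤ cc * Prest + (N - 1) * Prest := by
        calc cc * Prest + cc * d imax = cc * d imax + cc * Prest := by ring
          _ ≤ k * Prest := hineq
          _ = cc * Prest + (N - 1) * Prest := by rw [hkcc, Nat.add_mul]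
      exact Nat.add_le_add_iff_left.mp h1
    have hPle : d imax + Prest ≤ (N + 1) * d imax := by
      have h1 : ∑ r : Fin (N+1), d r ≤ Finset.univ.card • d imax :=
        Finset.sum_le_card_nsmul Finset.univ d (d imax) (fun r _ => himax r (Finset.mem_univ r))
      have h2 : ∑ r : Fin (N+1), d r = d imax + Prest := by
        rw [Fin.sum_univ_succAbove _ imax, hPrest]
      rw [h2] at h1
      simpa using h1
    have hfinal : k * d imax ≤ ((N + 1) * (N - 1)) * d imax := by
      calc k * d imax = cc * d imax + (N - 1) * d imax := by rw [hkcc, Nat.add_mul]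
        _ ≤ (N - 1) * Prest + (N - 1) * d imax := by
            exact Nat.add_le_add_right hstep _
        _ = (N - 1) * (d imax + Prest) := by ring
        _ ≤ (N - 1) * ((N + 1) * d imax) := Nat.mul_le_mul_left _ hPle
        _ = ((N + 1) * (N - 1)) * d imax := by ring
    have hk_le : k ≤ (N + 1) * (N - 1) := Nat.le_of_mul_le_mul_right hfinal (by omega)
    have h22 : (N + 1) * (N + 1 - 2) = (N + 1) * (N - 1) := by
      have h23 : N + 1 - 2 = N - 1 := by omega
      rw [h23]
    rw [h22]
    exact hk_le

theorem exponent_bound_no_proportional (m : ℕ) (hm : 3 ≤ m) (p : Fin m → ℂ[X])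
    (k : ℕ) (hk : 0 < k) (hp : ∀ i, p i ≠ 0)
    (hsum : ∑ i, p i ^ k = 0)
    (hprop : ∀ i j : Fin m, i ≠ j → ∀ c : ℂ, p i ≠ C c * p j) :
    3 * (k : ℤ) < (m : ℤ) ^ 3 + 7 * (m : ℤ) ^ 2 - 49 * (m : ℤ) + 68 := by
  have hsum' : ∑ i, C ((fun _ : Fin m => (1 : ℂ)) i) * p i ^ k = 0 := by
    simpa using hsum
  have hmain := main_L m hm k p (fun _ => 1) hp (fun _ => one_ne_zero) hprop hsum' hk
  have hk' : (k : ℤ) ≤ (m : ℤ) * ((m : ℤ) - 2) := by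
    have h1 : ((m * (m - 2) : ℕ) : ℤ) = (m : ℤ) * ((m : ℤ) - 2) := by
      push_cast [Nat.cast_sub (by omega : 2 ≤ m)]
      ring
    calc (k : ℤ) ≤ ((m * (m - 2) : ℕ) : ℤ) := by exact_mod_cast hmain
      _ = _ := h1
  have hm' : (3 : ℤ) ≤ (m : ℤ) := by exact_mod_cast hm
  nlinarith [mul_nonneg (sq_nonneg ((m : ℤ) - 3)) (by linarith : (0:ℤ) ≤ (m : ℤ) + 10)]
end

section
/- If f_1, …, f_m ∈ ℂ[x] are pairwise coprime polynomials, not all constant, with f_1 + f_2 + ⋯ + f_m = 0, then max_{1≤i≤m} deg f_i ≤ (m−2)(deg rad(f_1 f_2 ⋯ f_m) − 1), where rad(p) denotes the product of the distinct irreducible factors of p. -/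
open Polynomial UniqueFactorizationMonoid Finset Matrix

namespace ShSp

noncomputable section

/-- The Wronskian-type matrix of a family of polynomials. -/
def wr {k : ℕ} (g : Fin k → ℂ[X]) : Matrix (Fin k) (Fin k) ℂ[X] :=
  Matrix.of fun j i => Polynomial.derivative^[(j : ℕ)] (g i)

lemma iterD_add (k : ℕ) (p q : ℂ[X]) :
    Polynomial.derivative^[k] (p + q) =
      Polynomial.derivative^[k] p + Polynomial.derivative^[k] q := by
  induction k generalizing p q with
  | zero => simp
  | succ k ih => simp [Function.iterate_succ_apply, derivative_add, ih]

lemma key1_dvd (p : ℂ[X]) : p ∣ Polynomial.derivative p * radical p := by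
  classical
  rw [mul_comm]
  calc p = radical p * EuclideanDomain.divRadical p :=
        (EuclideanDomain.radical_mul_divRadical (a := p)).symm
    _ ∣ radical p * Polynomial.derivative p :=
        mul_dvd_mul_left _ (divRadical_dvd_derivative p)

lemma key_dvd (p : ℂ[X]) (j : ℕ) :
    p ∣ Polynomial.derivative^[j] p * (radical p) ^ j := by
  induction j with
  | zero => simp
  | succ j ih =>
    obtain ⟨q, hq⟩ := ih
    set r : ℂ[X] := radical p with hr
    have hA : Polynomial.derivative (r ^ j) * r =
        Polynomial.C (j : ℂ) * r ^ j * Polynomial.derivative r := by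
      cases j with
      | zero => simp
      | succ n =>
        rw [Polynomial.derivative_pow_succ]
        push_cast
        ring
    have hd := congrArg Polynomial.derivative hq
    rw [Polynomial.derivative_mul, Polynomial.derivative_mul] at hd
    have hit : Polynomial.derivative (Polynomial.derivative^[j] p) =
        Polynomial.derivative^[j + 1] p := (Function.iterate_succ_apply' _ _ _).symm
    have e : Polynomial.derivative^[j + 1] p * r ^ (j + 1) =
        (Polynomial.derivative p * r) * q + p * (Polynomial.derivative q * r)
          - Polynomial.C (j : ℂ) * Polynomial.derivative r * (p * q) := by
      rw [← hit]
      linear_combination r * hd - Polynomial.derivative^[j] p * hA -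
        Polynomial.C (j : ℂ) * Polynomial.derivative r * hq
    rw [e]
    refine dvd_sub (dvd_add ?_ ?_) ?_
    · exact dvd_mul_of_dvd_left (key1_dvd p) q
    · exact dvd_mul_right p _
    · exact Dvd.dvd.mul_left (dvd_mul_right p q) _

lemma mem_primeFactors {a r : ℂ[X]} : r ∈ primeFactors a ↔ r ∈ normalizedFactors a := by
  simp only [primeFactors, Multiset.mem_toFinset]

lemma radical_dvd_radical_of_dvd {a b : ℂ[X]} (hb : b ≠ 0) (h : a ∣ b) :
    radical a ∣ radical b := by
  unfold radical
  apply Finset.prod_dvd_prod_of_subset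
  intro r hr
  have hr' : r ∈ normalizedFactors a := mem_primeFactors.mp hr
  have hrp : Prime r := prime_of_normalized_factor r hr'
  have hrd : r ∣ b := (dvd_of_mem_normalizedFactors hr').trans h
  obtain ⟨q, hq, hassoc⟩ :=
    exists_mem_normalizedFactors_of_dvd hb hrp.irreducible hrd
  have : r = q := by
    rw [← normalize_normalized_factor r hr', ← normalize_normalized_factor q hq]
    rw [normalize_eq_normalize_iff]
    exact ⟨hassoc.dvd, hassoc.symm.dvd⟩
  rw [this]
  exact mem_primeFactors.mpr hq

lemma natDegree_radical_pos {p : ℂ[X]} (hp : p ≠ 0) (hd : p.natDegree ≠ 0) :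
    1 ≤ (radical p).natDegree := by
  have hpu : ¬ IsUnit p := fun h => hd (natDegree_eq_zero_of_isUnit h)
  obtain ⟨q, hq⟩ := exists_mem_normalizedFactors hp hpu
  have hqrad : q ∣ radical p := by
    unfold radical
    exact Finset.dvd_prod_of_mem id (mem_primeFactors.mpr hq)
  have h1 : 0 < q.natDegree :=
    (prime_of_normalized_factor q hq).irreducible.natDegree_pos
  have h2 : q.natDegree ≤ (radical p).natDegree :=
    Polynomial.natDegree_le_of_dvd hqrad (radical_ne_zero (a := p))
  omega

lemma radical_C_mul {c : ℂ} (hc : c ≠ 0) (p : ℂ[X]) :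
    radical (Polynomial.C c * p) = radical p := by
  have hu : IsUnit (Polynomial.C c) := Polynomial.isUnit_C.mpr hc.isUnit
  rw [← hu.unit_spec]
  exact radical_mul_of_isUnit_left (Units.isUnit _)

/-- coefficient of a product at the sum of degree bounds -/
lemma coeff_prod' {ι : Type*} (s : Finset ι) (f : ι → ℂ[X]) (n : ι → ℕ)
    (h : ∀ i ∈ s, (f i).natDegree ≤ n i) :
    (∏ i ∈ s, f i).coeff (∑ i ∈ s, n i) = ∏ i ∈ s, (f i).coeff (n i) := by
  classical
  induction s using Finset.induction_on with
  | empty => simp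
  | @insert a s ha ih =>
    rw [Finset.prod_insert ha, Finset.sum_insert ha, Finset.prod_insert ha,
      Polynomial.coeff_mul_add_eq_of_natDegree_le (h a (Finset.mem_insert_self a s))
        (Polynomial.natDegree_prod_le s f |>.trans
          (Finset.sum_le_sum fun i hi => h i (Finset.mem_insert_of_mem hi))),
      ih fun i hi => h i (Finset.mem_insert_of_mem hi)]

/-- Wronskian of a family with strictly monotone degrees is nonzero. -/
lemma wr_ne_zero_of_strictMono {k : ℕ} (g : Fin k → ℂ[X]) (hg : ∀ i, g i ≠ 0)
    (hd : StrictMono fun i => (g i).natDegree) : (wr g).det ≠ 0 := by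
  classical
  set d : Fin k → ℕ := fun i => (g i).natDegree with hdd
  have hdi : ∀ m (h : m < k), m ≤ d ⟨m, h⟩ := by
    intro m
    induction m with
    | zero => intro h; exact Nat.zero_le _
    | succ m ih =>
      intro h
      have h' : m < k := by omega
      have h1 := hd (show (⟨m, h'⟩ : Fin k) < ⟨m + 1, h⟩ from by
        simp [Fin.lt_def])
      have h2 := ih h'
      omega
  have hsum_le : (∑ i : Fin k, (i : ℕ)) ≤ ∑ i, d i :=
    Finset.sum_le_sum fun i _ => by simpa using hdi i.1 i.2
  set T : ℕ := (∑ i, d i) - (∑ i : Fin k, (i : ℕ)) with hT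
  set B : Matrix (Fin k) (Fin k) ℂ :=
    Matrix.of fun j i => ((d i).descFactorial (j : ℕ) : ℂ) * (g i).leadingCoeff with hB
  have hcoef : ((wr g).det).coeff T = B.det := by
    rw [Matrix.det_apply, Matrix.det_apply, Polynomial.finset_sum_coeff]
    apply Finset.sum_congr rfl
    intro σ _
    rw [Polynomial.coeff_smul]
    congr 1
    by_cases hσ : ∀ i, (σ i : ℕ) ≤ d i
    · set n : Fin k → ℕ := fun i => d i - (σ i : ℕ) with hn
      have hni : ∀ i, n i + (σ i : ℕ) = d i := fun i => Nat.sub_add_cancel (hσ i)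
      have hσsum : (∑ i : Fin k, ((σ i : ℕ))) = ∑ i : Fin k, (i : ℕ) :=
        Equiv.sum_comp σ fun i => (i : ℕ)
      have hTn : ∑ i, n i = T := by
        have h1 : (∑ i, n i) + (∑ i : Fin k, ((σ i : ℕ))) = ∑ i, d i := by
          rw [← Finset.sum_add_distrib]
          exact Finset.sum_congr rfl fun i _ => hni i
        omega
      have hbound : ∀ i ∈ Finset.univ, (Polynomial.derivative^[((σ i : ℕ))] (g i)).natDegree ≤ n i :=
        fun i _ => Polynomial.natDegree_iterate_derivative _ _
      rw [show (∏ i, wr g (σ i) i) = ∏ i, Polynomial.derivative^[((σ i : ℕ))] (g i) from rfl,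
        ← hTn, coeff_prod' Finset.univ _ n hbound]
      apply Finset.prod_congr rfl
      intro i _
      rw [Polynomial.coeff_iterate_derivative, hni i]
      simp only [hB, Matrix.of_apply, nsmul_eq_mul]
      rw [Polynomial.coeff_natDegree]
    · push_neg at hσ
      obtain ⟨i, hi⟩ := hσ
      have h1 : (∏ i, wr g (σ i) i) = 0 := by
        apply Finset.prod_eq_zero (Finset.mem_univ i)
        exact Polynomial.iterate_derivative_eq_zero hi
      have h2 : (∏ i, B (σ i) i) = 0 := by
        apply Finset.prod_eq_zero (Finset.mem_univ i)
        simp only [hB, Matrix.of_apply]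
        rw [Nat.descFactorial_eq_zero_iff_lt.mpr hi]
        simp
      rw [h1, h2, Polynomial.coeff_zero]
  have hBdet : B.det ≠ 0 := by
    have hfac : B = (Matrix.of fun j i : Fin k => ((d i).descFactorial (j : ℕ) : ℂ)) *
        Matrix.diagonal (fun i => (g i).leadingCoeff) := by
      ext j i
      simp [hB, Matrix.mul_diagonal]
    rw [hfac, Matrix.det_mul, Matrix.det_diagonal]
    apply mul_ne_zero
    · have hV : (Matrix.of fun j i : Fin k => ((d i).descFactorial (j : ℕ) : ℂ)) =
          (Matrix.of fun i j : Fin k =>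
            ((descPochhammer ℂ (j : ℕ)).eval ((d i : ℂ))))ᵀ := by
        ext j i
        simp [Matrix.transpose_apply, descPochhammer_eval_eq_descFactorial]
      rw [hV, Matrix.det_transpose,
        ← Matrix.det_eval_matrixOfPolynomials_eq_det_vandermonde
          (fun i : Fin k => ((d i : ℂ))) (fun j => descPochhammer ℂ (j : ℕ))
          (fun j => by simp [descPochhammer_natDegree])
          (fun j => by simpa using monic_descPochhammer (R := ℂ) (j : ℕ))]
      refine Matrix.det_vandermonde_ne_zero_iff.mpr ?_
      intro a b hab
      have hab' : ((d a : ℂ)) = ((d b : ℂ)) := by simpa using hab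
      exact hd.injective (Nat.cast_injective hab')
    · exact Finset.prod_ne_zero_iff.mpr fun i _ =>
        Polynomial.leadingCoeff_ne_zero.mpr (hg i)
  intro h
  rw [h, Polynomial.coeff_zero] at hcoef
  exact hBdet hcoef.symm

lemma wr_update {k : ℕ} (g : Fin k → ℂ[X]) (i : Fin k) (v : ℂ[X]) :
    wr (Function.update g i v) =
      (wr g).updateCol i (fun j => Polynomial.derivative^[(j : ℕ)] v) := by
  ext j l
  by_cases h : l = i <;>
    simp [wr, Matrix.updateCol_apply, Function.update_apply, h]

lemma linearIndependent_update {k : ℕ} (g : Fin k → ℂ[X])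
    (hli : LinearIndependent ℂ g) (i j : Fin k) (hij : j ≠ i) (c : ℂ) :
    LinearIndependent ℂ (Function.update g i (g i + c • g j)) := by
  classical
  rw [Fintype.linearIndependent_iff] at hli ⊢
  intro a ha
  set w : ℂ[X] := g i + c • g j with hw
  set b : Fin k → ℂ := fun l => a l + (if l = j then a i * c else 0) with hb
  have e0 : (fun l => a l • Function.update g i w l) =
      Function.update (fun l => a l • g l) i (a i • w) := by
    funext l
    by_cases h : l = i <;> simp [Function.update_apply, h]
  have e1 : ∑ l, b l • g l = 0 := by
    have e2 : ∑ l, b l • g l = (∑ l, a l • g l) + (a i * c) • g j := by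
      simp only [hb, add_smul, ite_smul, zero_smul, Finset.sum_add_distrib]
      rw [Finset.sum_ite_eq' Finset.univ j (fun l => (a i * c) • g l)]
      simp
    have e3 : ∑ l, a l • Function.update g i w l =
        (∑ l, a l • g l) + (a i * c) • g j := by
      rw [e0, Finset.sum_update_of_mem (Finset.mem_univ i)]
      rw [show (∑ l, a l • g l) = a i • g i + ∑ l ∈ Finset.univ.erase i, a l • g l from
        (Finset.add_sum_erase _ _ (Finset.mem_univ i)).symm]
      rw [hw, smul_add, smul_smul, Finset.erase_eq]
      ring
    rw [e2, ← e3, ha]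
  have hzb := hli b e1
  intro l
  have hbl := hzb l
  have hbi := hzb i
  simp only [hb] at hbl hbi
  rw [if_neg (Ne.symm hij)] at hbi
  rw [add_zero] at hbi
  by_cases h : l = j
  · rw [if_pos h, hbi] at hbl
    simpa using hbl
  · rw [if_neg h] at hbl
    simpa using hbl

/-- Wronskian of a linearly independent family is nonzero. -/
lemma wr_ne_zero {k : ℕ} (g : Fin k → ℂ[X]) (hli : LinearIndependent ℂ g) :
    (wr g).det ≠ 0 := by
  classical
  suffices H : ∀ N (g : Fin k → ℂ[X]), (∑ i, (g i).natDegree) = N →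
      LinearIndependent ℂ g → (wr g).det ≠ 0 from H _ g rfl hli
  clear hli g
  intro N
  induction N using Nat.strong_induction_on with
  | _ N ih =>
    intro g hN hli
    by_cases hinj : Function.Injective fun i => (g i).natDegree
    · set σ := Tuple.sort fun i => (g i).natDegree with hσ
      have hmono : Monotone ((fun i => (g i).natDegree) ∘ σ) := Tuple.monotone_sort _
      have hsm : StrictMono fun i => (g (σ i)).natDegree :=
        hmono.strictMono_of_injective (hinj.comp σ.injective)
      have h1 : (wr (g ∘ σ)).det ≠ 0 :=
        wr_ne_zero_of_strictMono (g ∘ σ) (fun i => hli.ne_zero (σ i)) hsm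
      have h2 : wr (g ∘ σ) = (wr g).submatrix id σ := rfl
      rw [h2, Matrix.det_permute'] at h1
      intro h
      rw [h, mul_zero] at h1
      exact h1 rfl
    · obtain ⟨i, j, hdeq, hne⟩ := Function.not_injective_iff.mp hinj
      set c : ℂ := -((g i).leadingCoeff / (g j).leadingCoeff) with hc
      set g' := Function.update g i (g i + c • g j) with hg'
      have hli' : LinearIndependent ℂ g' :=
        linearIndependent_update g hli i j (Ne.symm hne) c
      set dd : ℕ := (g i).natDegree with hdd
      have hgj0 : g j ≠ 0 := hli.ne_zero j
      have hgi'0 : g' i ≠ 0 := hli'.ne_zero i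
      have hlcj : (g j).leadingCoeff ≠ 0 := Polynomial.leadingCoeff_ne_zero.mpr hgj0
      have hcoeffd : (g' i).coeff dd = 0 := by
        have hji : (g j).coeff dd = (g j).leadingCoeff := by rw [hdeq]; rfl
        have hii : (g i).coeff dd = (g i).leadingCoeff := rfl
        simp only [hg', Function.update_self, Polynomial.coeff_add,
          Polynomial.coeff_smul, smul_eq_mul, hji, hii, hc]
        field_simp
        ring
      have hdegle : (g' i).natDegree ≤ dd := by
        simp only [hg', Function.update_self]
        refine (Polynomial.natDegree_add_le _ _).trans ?_
        simp only [max_le_iff]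
        constructor
        · exact le_rfl
        · refine (Polynomial.natDegree_smul_le _ _).trans ?_
          rw [← hdeq]
      have hdeglt : (g' i).natDegree < dd := by
        rcases lt_or_eq_of_le hdegle with h | h
        · exact h
        · exfalso
          apply hgi'0
          have : (g' i).leadingCoeff = 0 := by
            rw [Polynomial.leadingCoeff, h]
            exact hcoeffd
          exact Polynomial.leadingCoeff_eq_zero.mp this
      have hsum' : (∑ l, (g' l).natDegree) < N := by
        rw [← hN]
        have h1 : ∑ l, (g' l).natDegree =
            (g' i).natDegree + ∑ l ∈ Finset.univ \ {i}, (g l).natDegree := by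
          rw [show (fun l => (g' l).natDegree) =
            Function.update (fun l => (g l).natDegree) i (g' i).natDegree from ?_]
          · exact Finset.sum_update_of_mem (Finset.mem_univ i) _ _
          · funext l
            by_cases h : l = i
            · subst h; simp
            · simp [hg', Function.update_apply, h]
        have h2 : ∑ l, (g l).natDegree =
            (g i).natDegree + ∑ l ∈ Finset.univ \ {i}, (g l).natDegree := by
          rw [← Finset.erase_eq]
          exact (Finset.add_sum_erase _ _ (Finset.mem_univ i)).symm
        omega
      have hdet : (wr g').det = (wr g).det := by
        rw [hg', wr_update]
        have hcols : (fun jj : Fin k => Polynomial.derivative^[(jj : ℕ)] (g i + c • g j)) =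
            (fun jj : Fin k => (wr g) jj i) +
              (Polynomial.C c) • (fun jj : Fin k => (wr g) jj j) := by
          funext jj
          simp only [Pi.add_apply, Pi.smul_apply, wr, Matrix.of_apply, smul_eq_mul]
          rw [iterD_add, Polynomial.iterate_derivative_smul, Polynomial.smul_eq_C_mul]
        rw [hcols, Matrix.det_updateCol_add, Matrix.det_updateCol_smul]
        rw [Matrix.det_updateCol_eq_zero (Ne.symm hne), mul_zero, add_zero,
          Matrix.updateCol_eq_self]
      rw [← hdet]
      exact ih _ hsum' g' rfl hli'

/-- divisibility of the determinant by p, given a column of derivatives of `p`. -/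
lemma dvd_det_mul_pow {k : ℕ} (M : Matrix (Fin k) (Fin k) ℂ[X]) (t : Fin k) (p : ℂ[X])
    (hcol : ∀ j, M j t = Polynomial.derivative^[(j : ℕ)] p) :
    p ∣ M.det * (radical p) ^ (k - 1) := by
  classical
  rw [Matrix.det_apply, Finset.sum_mul]
  apply Finset.dvd_sum
  intro σ _
  have hple : ((σ t : ℕ)) ≤ k - 1 := by
    have := (σ t).isLt
    omega
  have h1 : p ∣ M (σ t) t * radical p ^ (k - 1) := by
    rw [hcol]
    exact (key_dvd p _).trans
      (mul_dvd_mul_left _ (pow_dvd_pow _ hple))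
  have h2 : p ∣ (∏ i, M (σ i) i) * radical p ^ (k - 1) :=
    h1.trans (mul_dvd_mul_right (Finset.dvd_prod_of_mem _ (Finset.mem_univ t)) _)
  rcases Int.units_eq_one_or (Equiv.Perm.sign σ) with h | h <;>
    rw [h] <;> simpa using h2

lemma three_le {n : ℕ} (g : Fin n → ℂ[X]) (hg : ∀ i, g i ≠ 0)
    (hcop : ∀ i j, i ≠ j → IsCoprime (g i) (g j)) (hsum : ∑ i, g i = 0)
    (hex : ∃ i, (g i).natDegree ≠ 0) : 3 ≤ n := by
  by_contra hlt
  push_neg at hlt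
  interval_cases n
  · obtain ⟨i, _⟩ := hex
    exact i.elim0
  · have h0 : g 0 = 0 := by simpa [Fin.sum_univ_one] using hsum
    exact hg 0 h0
  · have h01 : g 1 = -g 0 := by
      have := hsum
      rw [Fin.sum_univ_two] at this
      exact eq_neg_of_add_eq_zero_right this
    have hcop01 := hcop 0 1 (by decide)
    have hu : IsUnit (g 0) := hcop01.isUnit_of_dvd' dvd_rfl (by
      rw [h01]; exact dvd_neg.mpr dvd_rfl)
    have h0 : (g 0).natDegree = 0 := natDegree_eq_zero_of_isUnit hu
    have h1 : (g 1).natDegree = 0 := by rw [h01, Polynomial.natDegree_neg]; exact h0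
    obtain ⟨i, hi⟩ := hex
    fin_cases i <;> simp_all

lemma iterD_neg (k : ℕ) (p : ℂ[X]) :
    Polynomial.derivative^[k] (-p) = -Polynomial.derivative^[k] p := by
  induction k generalizing p with
  | zero => simp
  | succ k ih => simp [Function.iterate_succ_apply, derivative_neg, ih]

lemma iterD_sum {ι : Type*} (s : Finset ι) (f : ι → ℂ[X]) (k : ℕ) :
    Polynomial.derivative^[k] (∑ i ∈ s, f i) = ∑ i ∈ s, Polynomial.derivative^[k] (f i) := by
  induction k generalizing f with
  | zero => simp
  | succ k ih =>
    simp [Function.iterate_succ_apply', ih, Polynomial.derivative_sum]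

lemma wronskian_bound {k : ℕ} (hk : 2 ≤ k) (g : Fin (k + 1) → ℂ[X])
    (hg : ∀ i, g i ≠ 0) (hcop : ∀ i j, i ≠ j → IsCoprime (g i) (g j))
    (hsum : ∑ i, g i = 0) (i : Fin (k + 1))
    (hli : LinearIndependent ℂ (g ∘ i.succAbove)) :
    ((g i).natDegree : ℤ) ≤
      ((k : ℤ) - 1) * (((radical (∏ j, g j)).natDegree : ℤ) - 1) := by
  classical
  set gs : Fin k → ℂ[X] := g ∘ i.succAbove with hgs
  set W : ℂ[X] := (wr gs).det with hWdef
  have hW : W ≠ 0 := wr_ne_zero gs hli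
  set P : ℂ[X] := ∏ j, g j with hPdef
  have hP0 : P ≠ 0 := Finset.prod_ne_zero_iff.mpr fun j _ => hg j
  set rad : ℂ[X] := radical P with hraddef
  have hrad0 : rad ≠ 0 := radical_ne_zero (a := P)
  set R : ℕ := rad.natDegree with hRdef
  -- the omitted function as a combination of columns
  have hgi : g i = -∑ t, g (i.succAbove t) := by
    have := Fin.sum_univ_succAbove g i
    rw [hsum] at this
    linear_combination -this
  -- divisibility of W * rad^(k-1) by each g l
  have hdvd : ∀ l, g l ∣ W * rad ^ (k - 1) := by
    intro l
    have hradmono : ∀ l : Fin (k + 1), radical (g l) ∣ rad := fun l =>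
      radical_dvd_radical_of_dvd hP0 (Finset.dvd_prod_of_mem g (Finset.mem_univ l))
    by_cases hl : l = i
    · subst hl
      set t0 : Fin k := ⟨0, by omega⟩
      set N : Matrix (Fin k) (Fin k) ℂ[X] :=
        (wr gs).updateCol t0 (fun j => Polynomial.derivative^[(j : ℕ)] (g l)) with hNdef
      have hcols : (fun j : Fin k => Polynomial.derivative^[(j : ℕ)] (g l)) =
          fun j => ∑ t, (fun _ : Fin k => (-1 : ℂ[X])) t • wr gs j t := by
        funext j
        rw [hgi, iterD_neg, iterD_sum]
        rw [← Finset.sum_neg_distrib]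
        apply Finset.sum_congr rfl
        intro t _
        simp only [wr, Matrix.of_apply, neg_smul, one_smul]
        rfl
      have hNdet : N.det = -W := by
        rw [hNdef, hcols, Matrix.det_updateCol_sum]
        simp [hWdef]
      have h1 : g l ∣ N.det * radical (g l) ^ (k - 1) :=
        dvd_det_mul_pow N t0 (g l) fun j => by simp [hNdef, Matrix.updateCol_apply]
      rw [hNdet] at h1
      have h2 : g l ∣ W * radical (g l) ^ (k - 1) := by
        have := (dvd_neg.mpr h1)
        simpa using this
      exact h2.trans (mul_dvd_mul_left W (pow_dvd_pow_of_dvd (hradmono l) _))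
    · obtain ⟨t, rfl⟩ := Fin.exists_succAbove_eq hl
      have h1 : g (i.succAbove t) ∣ W * radical (g (i.succAbove t)) ^ (k - 1) :=
        dvd_det_mul_pow (wr gs) t _ fun j => rfl
      exact h1.trans (mul_dvd_mul_left W (pow_dvd_pow_of_dvd (hradmono _) _))
  have hPdvd : P ∣ W * rad ^ (k - 1) := by
    rw [hPdef]
    apply Finset.prod_dvd_of_coprime
    · intro a _ b _ hab
      exact hcop a b hab
    · intro l _
      exact hdvd l
  have hWR0 : W * rad ^ (k - 1) ≠ 0 := mul_ne_zero hW (pow_ne_zero _ hrad0)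
  -- degrees
  have hdegP : P.natDegree = ∑ l, (g l).natDegree := Polynomial.natDegree_prod _ _ fun l _ => hg l
  have hstep1 : P.natDegree ≤ W.natDegree + (k - 1) * R := by
    have := Polynomial.natDegree_le_of_dvd hPdvd hWR0
    rwa [Polynomial.natDegree_mul hW (pow_ne_zero _ hrad0), Polynomial.natDegree_pow] at this
  -- bound on natDegree W
  set d : Fin k → ℕ := fun t => (gs t).natDegree with hd
  have hdegW : W.natDegree ≤ (∑ t, d t) - (∑ j : Fin k, (j : ℕ)) := by
    rw [hWdef, Matrix.det_apply]
    apply Polynomial.natDegree_sum_le_of_forall_le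
    intro σ _
    have hterm : ∀ z : ℂ[X],
        (Equiv.Perm.sign σ • z).natDegree = z.natDegree := by
      intro z
      rcases Int.units_eq_one_or (Equiv.Perm.sign σ) with h | h <;>
        rw [h] <;> simp
    rw [hterm]
    by_cases hσ : ∀ t, (σ t : ℕ) ≤ d t
    · refine (Polynomial.natDegree_prod_le _ _).trans ?_
      have hb : ∀ t ∈ Finset.univ, (wr gs (σ t) t).natDegree ≤ d t - (σ t : ℕ) :=
        fun t _ => Polynomial.natDegree_iterate_derivative _ _
      refine (Finset.sum_le_sum hb).trans ?_
      have h1 : (∑ t, (d t - (σ t : ℕ))) + (∑ t, ((σ t : ℕ))) = ∑ t, d t := by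
        rw [← Finset.sum_add_distrib]
        exact Finset.sum_congr rfl fun t _ => Nat.sub_add_cancel (hσ t)
      have h2 : (∑ t : Fin k, ((σ t : ℕ))) = ∑ j : Fin k, (j : ℕ) :=
        Equiv.sum_comp σ fun j => (j : ℕ)
      omega
    · push_neg at hσ
      obtain ⟨t, ht⟩ := hσ
      have : (∏ t, wr gs (σ t) t) = 0 := by
        apply Finset.prod_eq_zero (Finset.mem_univ t)
        exact Polynomial.iterate_derivative_eq_zero ht
      rw [this]
      simp
  -- the witness permutation for ∑ j ≤ ∑ d
  have hjd : (∑ j : Fin k, (j : ℕ)) ≤ ∑ t, d t := by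
    have hex : ∃ σ : Equiv.Perm (Fin k), (∏ t, wr gs (σ t) t) ≠ 0 := by
      by_contra hall
      push_neg at hall
      apply hW
      rw [hWdef, Matrix.det_apply]
      apply Finset.sum_eq_zero
      intro σ _
      rw [hall σ]
      simp
    obtain ⟨σ, hσ⟩ := hex
    have hle : ∀ t, (σ t : ℕ) ≤ d t := by
      intro t
      by_contra hlt
      push_neg at hlt
      apply hσ
      apply Finset.prod_eq_zero (Finset.mem_univ t)
      exact Polynomial.iterate_derivative_eq_zero hlt
    calc (∑ j : Fin k, (j : ℕ)) = ∑ t : Fin k, ((σ t : ℕ)) :=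
          (Equiv.sum_comp σ fun j => (j : ℕ)).symm
      _ ≤ ∑ t, d t := Finset.sum_le_sum fun t _ => hle t
  have hk1 : (k : ℕ) - 1 ≤ ∑ j : Fin k, (j : ℕ) := by
    have hmem : (⟨k - 1, by omega⟩ : Fin k) ∈ Finset.univ := Finset.mem_univ _
    have := Finset.single_le_sum (f := fun j : Fin k => (j : ℕ))
      (fun j _ => Nat.zero_le _) hmem
    simpa using this
  -- assemble in ℤ
  have hsplit : (∑ l, (g l).natDegree) = (g i).natDegree + ∑ t, d t := by
    exact Fin.sum_univ_succAbove (fun l => (g l).natDegree) i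
  have hA1 : ((g i).natDegree : ℤ) + (∑ t, d t : ℕ) ≤
      (W.natDegree : ℤ) + ((k - 1 : ℕ) : ℤ) * (R : ℤ) := by
    have := hstep1
    rw [hdegP, hsplit] at this
    exact_mod_cast this
  have hA2 : (W.natDegree : ℤ) ≤ ((∑ t, d t : ℕ) : ℤ) - ((∑ j : Fin k, (j : ℕ) : ℕ) : ℤ) := by
    have h := hdegW
    have := Nat.cast_sub (R := ℤ) hjd
    omega
  have hA3 : ((k : ℤ) - 1) ≤ ((∑ j : Fin k, (j : ℕ) : ℕ) : ℤ) := by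
    have : ((k - 1 : ℕ) : ℤ) = (k : ℤ) - 1 := by
      have : 1 ≤ k := by omega
      push_cast [Nat.cast_sub this]
      ring
    omega
  have hKcast : ((k - 1 : ℕ) : ℤ) = (k : ℤ) - 1 := by
    have h1 : 1 ≤ k := by omega
    push_cast [Nat.cast_sub h1]
    ring
  rw [hKcast] at hA1
  nlinarith [hA1, hA2, hA3]

lemma isCoprime_C_mul {a b : ℂ} {p q : ℂ[X]} (ha : a ≠ 0) (hb : b ≠ 0)
    (h : IsCoprime p q) : IsCoprime (Polynomial.C a * p) (Polynomial.C b * q) := by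
  have hua : IsUnit (Polynomial.C a) := Polynomial.isUnit_C.mpr ha.isUnit
  have hub : IsUnit (Polynomial.C b) := Polynomial.isUnit_C.mpr hb.isUnit
  have h1 : IsCoprime (Polynomial.C a) q :=
    (isCoprime_one_left).of_isCoprime_of_dvd_left hua.dvd
  have hA : IsCoprime (Polynomial.C a * p) q := h1.mul_left h
  have hB : IsCoprime (Polynomial.C a * p) (Polynomial.C b) :=
    (isCoprime_one_right).of_isCoprime_of_dvd_right hub.dvd
  exact hB.mul_right hA

lemma aux (n : ℕ)
    (ih : ∀ m, m < n → ∀ h : Fin m → ℂ[X], (∀ t, h t ≠ 0) →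
      (∀ t t', t ≠ t' → IsCoprime (h t) (h t')) → (∑ t, h t = 0) →
      ∀ t, (h t).natDegree = 0 ∨
        ((h t).natDegree : ℤ) ≤
          ((m : ℤ) - 2) * (((radical (∏ u, h u)).natDegree : ℤ) - 1))
    (g : Fin n → ℂ[X]) (hg : ∀ i, g i ≠ 0)
    (hcop : ∀ i j, i ≠ j → IsCoprime (g i) (g j))
    (c : Fin n → ℂ) (hrel : ∑ l, Polynomial.C (c l) * g l = 0)
    (i : Fin n) (hci : c i ≠ 0)
    (hcard : (Finset.univ.filter fun l => c l ≠ 0).card < n)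
    (hdeg : (g i).natDegree ≠ 0) :
    ((g i).natDegree : ℤ) ≤
      ((n : ℤ) - 2) * (((radical (∏ j, g j)).natDegree : ℤ) - 1) := by
  classical
  set S : Finset (Fin n) := Finset.univ.filter fun l => c l ≠ 0 with hS
  have hiS : i ∈ S := by simp [hS, hci]
  have hcS : ∀ x : {x // x ∈ S}, c x ≠ 0 := fun x => by
    exact (Finset.mem_filter.mp x.2).2
  set m : ℕ := S.card with hm
  set e : Fin m ≃ {x // x ∈ S} := S.equivFin.symm with he
  set h : Fin m → ℂ[X] := fun t => Polynomial.C (c (e t)) * g (e t) with hh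
  have hh0 : ∀ t, h t ≠ 0 := fun t =>
    mul_ne_zero (Polynomial.C_ne_zero.mpr (hcS (e t))) (hg _)
  have hhcop : ∀ t t', t ≠ t' → IsCoprime (h t) (h t') := by
    intro t t' htt
    have hne : ((e t : Fin n)) ≠ ((e t' : Fin n)) := by
      intro hcontra
      exact htt (e.injective (Subtype.ext hcontra))
    exact isCoprime_C_mul (hcS (e t)) (hcS (e t')) (hcop _ _ hne)
  have hhsum : ∑ t, h t = 0 := by
    have h1 : ∑ t, h t = ∑ x : {x // x ∈ S}, Polynomial.C (c x) * g x :=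
      Equiv.sum_comp e fun x : {x // x ∈ S} => Polynomial.C (c x) * g x
    have h2 : ∑ x : {x // x ∈ S}, Polynomial.C (c x) * g x =
        ∑ l ∈ S, Polynomial.C (c l) * g l :=
      Finset.sum_coe_sort S (fun l => Polynomial.C (c l) * g l)
    have h3 : ∑ l ∈ S, Polynomial.C (c l) * g l = ∑ l, Polynomial.C (c l) * g l := by
      apply Finset.sum_subset (Finset.filter_subset _ _)
      intro x _ hx
      simp [hS] at hx
      simp [hx]
    rw [h1, h2, h3, hrel]
  set ti : Fin m := e.symm ⟨i, hiS⟩ with hti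
  have hhti : h ti = Polynomial.C (c i) * g i := by
    simp [hh, hti]
  have hdegti : (h ti).natDegree = (g i).natDegree := by
    rw [hhti]
    exact Polynomial.natDegree_C_mul hci
  rcases ih m hcard h hh0 hhcop hhsum ti with hz | hb
  · exfalso
    rw [hdegti] at hz
    exact hdeg hz
  -- identify the radical
  have hprodh : ∏ u, h u = Polynomial.C (∏ l ∈ S, c l) * ∏ l ∈ S, g l := by
    have h1 : ∏ u, h u = ∏ x : {x // x ∈ S}, (Polynomial.C (c x) * g x) :=
      Equiv.prod_comp e fun x : {x // x ∈ S} => Polynomial.C (c x) * g x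
    have h2 : ∏ x : {x // x ∈ S}, (Polynomial.C (c x) * g x) =
        ∏ l ∈ S, (Polynomial.C (c l) * g l) :=
      Finset.prod_coe_sort S (fun l => Polynomial.C (c l) * g l)
    rw [h1, h2, Finset.prod_mul_distrib, ← map_prod]
  have hcprod : (∏ l ∈ S, c l) ≠ 0 :=
    Finset.prod_ne_zero_iff.mpr fun l hl => (Finset.mem_filter.mp hl).2
  have hradh : radical (∏ u, h u) = radical (∏ l ∈ S, g l) := by
    rw [hprodh]
    exact radical_C_mul hcprod _
  -- compare radicals
  have hP0 : (∏ j, g j) ≠ 0 := Finset.prod_ne_zero_iff.mpr fun j _ => hg j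
  have hQ0 : (∏ l ∈ S, g l) ≠ 0 := Finset.prod_ne_zero_iff.mpr fun j _ => hg j
  have hQP : (∏ l ∈ S, g l) ∣ ∏ j, g j :=
    Finset.prod_dvd_prod_of_subset S Finset.univ g (Finset.subset_univ S)
  have hRS_le : (radical (∏ l ∈ S, g l)).natDegree ≤ (radical (∏ j, g j)).natDegree :=
    Polynomial.natDegree_le_of_dvd (radical_dvd_radical_of_dvd hP0 hQP)
      radical_ne_zero
  -- m ≥ 3 and R_S ≥ 1
  have h3m : 3 ≤ m := three_le h hh0 hhcop hhsum ⟨ti, by rw [hdegti]; exact hdeg⟩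
  have hQdeg : (∏ l ∈ S, g l).natDegree ≠ 0 := by
    have h1 : (∏ l ∈ S, g l).natDegree = ∑ l ∈ S, (g l).natDegree :=
      Polynomial.natDegree_prod _ _ fun l _ => hg l
    have h2 : (g i).natDegree ≤ ∑ l ∈ S, (g l).natDegree :=
      Finset.single_le_sum (f := fun l => (g l).natDegree)
        (fun l _ => Nat.zero_le _) hiS
    omega
  have hRS1 : 1 ≤ (radical (∏ l ∈ S, g l)).natDegree :=
    natDegree_radical_pos hQ0 hQdeg
  -- put everything together
  rw [hdegti, hradh] at hb
  refine hb.trans ?_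
  have hmn : m ≤ n := le_of_lt hcard
  have c1 : ((m : ℤ) - 2) ≤ (n : ℤ) - 2 := by
    have : (m : ℤ) ≤ (n : ℤ) := by exact_mod_cast hmn
    omega
  have c2 : (((radical (∏ l ∈ S, g l)).natDegree : ℤ) - 1) ≤
      (((radical (∏ j, g j)).natDegree : ℤ) - 1) := by
    have : ((radical (∏ l ∈ S, g l)).natDegree : ℤ) ≤
        ((radical (∏ j, g j)).natDegree : ℤ) := by exact_mod_cast hRS_le
    omega
  have c3 : (0 : ℤ) ≤ ((radical (∏ l ∈ S, g l)).natDegree : ℤ) - 1 := by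
    have : (1 : ℤ) ≤ ((radical (∏ l ∈ S, g l)).natDegree : ℤ) := by exact_mod_cast hRS1
    omega
  have c4 : (0 : ℤ) ≤ (n : ℤ) - 2 := by
    have : (3 : ℤ) ≤ (m : ℤ) := by exact_mod_cast h3m
    have : (m : ℤ) ≤ (n : ℤ) := by exact_mod_cast hmn
    omega
  exact mul_le_mul c1 c2 c3 c4

lemma core : ∀ n : ℕ, ∀ g : Fin n → ℂ[X], (∀ i, g i ≠ 0) →
    (∀ i j, i ≠ j → IsCoprime (g i) (g j)) → (∑ i, g i = 0) →
    ∀ i, (g i).natDegree = 0 ∨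
      ((g i).natDegree : ℤ) ≤
        ((n : ℤ) - 2) * (((radical (∏ j, g j)).natDegree : ℤ) - 1) := by
  intro n
  induction n using Nat.strong_induction_on with
  | _ n ih =>
    intro g hg hcop hsum i
    by_cases hdeg : (g i).natDegree = 0
    · exact Or.inl hdeg
    right
    have h3 : 3 ≤ n := three_le g hg hcop hsum ⟨i, hdeg⟩
    obtain ⟨k, rfl⟩ : ∃ k, n = k + 1 := ⟨n - 1, by omega⟩
    have hk : 2 ≤ k := by omega
    by_cases hli : LinearIndependent ℂ (g ∘ i.succAbove)
    · have hW := wronskian_bound hk g hg hcop hsum i hli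
      have : ((k + 1 : ℕ) : ℤ) - 2 = (k : ℤ) - 1 := by push_cast; ring
      rw [this]
      exact hW
    · classical
      obtain ⟨c, hrel0, t0, hct0⟩ := Fintype.not_linearIndependent_iff.mp hli
      -- build coefficients on Fin (k+1)
      have hinv : ∀ l : Fin (k + 1), l ≠ i → ∃ t, i.succAbove t = l :=
        fun l hl => Fin.exists_succAbove_eq hl
      set c' : Fin (k + 1) → ℂ := fun l =>
        if hl : l = i then 0 else c (Classical.choose (hinv l hl)) with hc'
      have hc'i : c' i = 0 := by simp [hc']
      have hc'sA : ∀ t, c' (i.succAbove t) = c t := by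
        intro t
        have hne : i.succAbove t ≠ i := Fin.succAbove_ne i t
        have hspec := Classical.choose_spec (hinv (i.succAbove t) hne)
        have : Classical.choose (hinv (i.succAbove t) hne) = t :=
          Fin.succAbove_right_injective hspec
        simp [hc', dif_neg hne, this]
      have hrel' : ∑ l, Polynomial.C (c' l) * g l = 0 := by
        rw [Fin.sum_univ_succAbove (fun l => Polynomial.C (c' l) * g l) i, hc'i]
        simp only [map_zero, zero_mul, zero_add]
        calc ∑ t, Polynomial.C (c' (i.succAbove t)) * g (i.succAbove t)
            = ∑ t, c t • (g ∘ i.succAbove) t := by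
              apply Finset.sum_congr rfl
              intro t _
              rw [hc'sA t, Polynomial.smul_eq_C_mul]
              rfl
          _ = 0 := hrel0
      set j0 : Fin (k + 1) := i.succAbove t0 with hj0
      set d : Fin (k + 1) → ℂ := fun l => c' j0 - c' l with hdc
      have hdrel : ∑ l, Polynomial.C (d l) * g l = 0 := by
        have : ∀ l, Polynomial.C (d l) * g l =
            Polynomial.C (c' j0) * g l - Polynomial.C (c' l) * g l := by
          intro l
          simp [hdc, Polynomial.C_sub, sub_mul]
        simp only [this]
        rw [Finset.sum_sub_distrib, hrel', sub_zero, ← Finset.mul_sum, hsum, mul_zero]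
      have hdi : d i ≠ 0 := by
        simp only [hdc, hc'i, sub_zero, hj0]
        rw [hc'sA t0]
        exact hct0
      have hdj0 : d j0 = 0 := by simp [hdc]
      have hcard : (Finset.univ.filter fun l => d l ≠ 0).card < k + 1 := by
        have hsub : (Finset.univ.filter fun l => d l ≠ 0) ⊆ Finset.univ.erase j0 := by
          intro x hx
          simp only [Finset.mem_filter] at hx
          apply Finset.mem_erase.mpr
          refine ⟨?_, Finset.mem_univ x⟩
          intro hxj
          rw [hxj] at hx
          exact hx.2 hdj0
        have := Finset.card_le_card hsub
        have hcerase : (Finset.univ.erase j0).card = k := by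
          rw [Finset.card_erase_of_mem (Finset.mem_univ j0)]
          simp
        omega
      have := aux (k + 1) (fun m hm => ih m hm) g hg hcop d hdrel i hdi hcard hdeg
      exact this

end

end ShSp

open Polynomial

theorem shapiro_sparer (m : ℕ) (f : Fin m → ℂ[X])
    (hcop : ∀ i j : Fin m, i ≠ j → IsCoprime (f i) (f j))
    (hconst : ¬ ∀ i, (f i).natDegree = 0)
    (hsum : ∑ i, f i = 0) :
    ∀ i, ((f i).natDegree : ℤ) ≤
      ((m : ℤ) - 2) *
        (((UniqueFactorizationMonoid.radical (∏ i, f i)).natDegree : ℤ) - 1) := by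
  intro i
  -- all f are nonzero
  have hf0 : ∀ i, f i ≠ 0 := by
    intro i hi
    apply hconst
    intro j
    by_cases hji : j = i
    · rw [hji, hi, natDegree_zero]
    · have := (hcop j i hji)
      rw [hi, isCoprime_zero_right] at this
      exact natDegree_eq_zero_of_isUnit this
  rcases ShSp.core m f hf0 hcop hsum i with h | h
  · -- constant case: RHS is nonnegative
    rw [h]
    push_cast
    have h3 : 3 ≤ m := by
      apply ShSp.three_le f hf0 hcop hsum
      push_neg at hconst; exact hconst
    have hR : 1 ≤ (UniqueFactorizationMonoid.radical (∏ i, f i)).natDegree := by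
      apply ShSp.natDegree_radical_pos
      · exact Finset.prod_ne_zero_iff.mpr fun j _ => hf0 j
      · obtain ⟨j, hj⟩ := not_forall.mp hconst
        have : (f j).natDegree ≤ (∏ i, f i).natDegree :=
          Polynomial.natDegree_le_of_dvd (Finset.dvd_prod_of_mem f (Finset.mem_univ j))
            (Finset.prod_ne_zero_iff.mpr fun j _ => hf0 j)
        omega
    have h3' : (3:ℤ) ≤ (m:ℤ) := by exact_mod_cast h3
    have hR' : (1:ℤ) ≤ ((UniqueFactorizationMonoid.radical (∏ i, f i)).natDegree : ℤ) := by
      exact_mod_cast hR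
    nlinarith
  · exact h
end

section
/- Let ε = e^{iπ/4} = √2/2 + (√2/2)i ∈ ℂ. Then the polynomials p(x) = x^4 + 1, q(x) = ε·8^{1/4}·x^3, r(x) = x^4 − 1, s(x) = 8^{1/4}·x over ℂ satisfy p^4 + q^4 = r^4 + s^4, and this common value is not the zero polynomial. -/
open Polynomial

theorem example_fourth_powers (ε : ℂ)
    (hε : ε = (Real.sqrt 2 / 2 : ℝ) + (Real.sqrt 2 / 2 : ℝ) * Complex.I) :
    (((X : ℂ[X]) ^ 4 + 1) ^ 4 +
        (C (ε * (((8 : ℝ) ^ ((1 : ℝ) / 4) : ℝ) : ℂ)) * X ^ 3) ^ 4 =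
      ((X : ℂ[X]) ^ 4 - 1) ^ 4 +
        (C ((((8 : ℝ) ^ ((1 : ℝ) / 4) : ℝ) : ℂ)) * X) ^ 4) ∧
    ((X : ℂ[X]) ^ 4 + 1) ^ 4 +
        (C (ε * (((8 : ℝ) ^ ((1 : ℝ) / 4) : ℝ) : ℂ)) * X ^ 3) ^ 4 ≠ 0 := by
  have hs : ((Real.sqrt 2 : ℝ) : ℂ) ^ 2 = 2 := by
    norm_cast; rw [Real.sq_sqrt] <;> norm_num
  have hε4 : ε ^ 4 = -1 := by
    have h2 : ε ^ 2 = Complex.I := by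
      subst hε; push_cast
      linear_combination (Complex.I / 2) * hs +
        (((Real.sqrt 2 : ℝ) : ℂ) ^ 2 / 4) * Complex.I_sq
    calc ε ^ 4 = (ε ^ 2) ^ 2 := by ring
    _ = -1 := by rw [h2, Complex.I_sq]
  have hc : (((8 : ℝ) ^ ((1 : ℝ) / 4) : ℝ) : ℂ) ^ 4 = 8 := by
    norm_cast
    rw [← Real.rpow_natCast ((8 : ℝ) ^ ((1 : ℝ) / 4)) 4, ← Real.rpow_mul] <;> norm_num
  have h1 : (ε * (((8 : ℝ) ^ ((1 : ℝ) / 4) : ℝ) : ℂ)) ^ 4 = -8 := by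
    rw [mul_pow, hε4, hc]; ring
  constructor
  · rw [mul_pow, mul_pow, ← map_pow, ← map_pow, h1, hc]
    simp only [map_neg, map_ofNat]
    ring
  · intro h
    have h0 := congrArg (eval 0) h
    simp at h0
end

section
/- There are no polynomials a, b, c ∈ ℂ[x], not all constant, with gcd(a,b,c) = 1 and a^n + b^n = c^n for an integer n ≥ 3. -/
open Polynomial

theorem fermat_for_polynomials :
    ¬ ∃ (n : ℕ) (a b c : ℂ[X]), 3 ≤ n ∧
      ¬ (a.natDegree = 0 ∧ b.natDegree = 0 ∧ c.natDegree = 0) ∧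
      EuclideanDomain.gcd (EuclideanDomain.gcd a b) c = 1 ∧
      a ^ n + b ^ n = c ^ n := by
  rintro ⟨n, a, b, c, hn, hdeg, hgcd, heq⟩
  classical
  have hn0 : 0 < n := by omega
  have hg : IsCoprime (EuclideanDomain.gcd a b) c :=
    EuclideanDomain.gcd_isUnit_iff.mp (hgcd ▸ isUnit_one)
  have hab : IsCoprime a b := by
    rw [← EuclideanDomain.gcd_isUnit_iff]
    refine (hg.pow_right (n := n)).isUnit_of_dvd' dvd_rfl ?_
    rw [← heq]
    exact dvd_add (dvd_pow (EuclideanDomain.gcd_dvd_left a b) hn0.ne')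
      (dvd_pow (EuclideanDomain.gcd_dvd_right a b) hn0.ne')
  have habn : IsCoprime (a ^ n) (b ^ n) := hab.pow
  have hbcn : IsCoprime (b ^ n) (-(c ^ n)) := by
    have h : IsCoprime (b ^ n) (a ^ n + 1 * b ^ n) := habn.symm.add_mul_right_right 1
    rw [one_mul, heq] at h
    exact h.neg_right
  have hcan : IsCoprime (-(c ^ n)) (a ^ n) := by
    have h : IsCoprime (a ^ n) (b ^ n + 1 * a ^ n) := habn.add_mul_right_right 1
    rw [one_mul, add_comm, heq] at h
    exact h.neg_right.symm
  -- all of a, b, c are nonzero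
  have ha0 : a ≠ 0 := by
    rintro rfl
    have hbu : IsUnit b := isCoprime_zero_left.mp hab
    have hcn : IsUnit (c ^ n) := by
      rw [← heq, zero_pow hn0.ne', zero_add]; exact hbu.pow n
    exact hdeg ⟨natDegree_zero, natDegree_eq_zero_of_isUnit hbu,
      natDegree_eq_zero_of_isUnit ((isUnit_pow_iff hn0.ne').mp hcn)⟩
  have hb0 : b ≠ 0 := by
    rintro rfl
    have hau : IsUnit a := isCoprime_zero_right.mp hab
    have hcn : IsUnit (c ^ n) := by
      rw [← heq, zero_pow hn0.ne', add_zero]; exact hau.pow n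
    exact hdeg ⟨natDegree_eq_zero_of_isUnit hau, natDegree_zero,
      natDegree_eq_zero_of_isUnit ((isUnit_pow_iff hn0.ne').mp hcn)⟩
  have hc0 : c ≠ 0 := by
    rintro rfl
    have han : IsUnit (a ^ n) := by
      refine habn.isUnit_of_dvd' dvd_rfl ?_
      have : b ^ n = -(a ^ n) := by
        have := heq; rw [zero_pow hn0.ne'] at this; linear_combination this
      rw [this]; exact (dvd_refl _).neg_right
    exact hdeg ⟨natDegree_eq_zero_of_isUnit ((isUnit_pow_iff hn0.ne').mp han), by
      have hbn : IsUnit (b ^ n) := by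
        refine habn.symm.isUnit_of_dvd' dvd_rfl ?_
        have : a ^ n = -(b ^ n) := by
          have := heq; rw [zero_pow hn0.ne'] at this; linear_combination this
        rw [this]; exact (dvd_refl _).neg_right
      exact natDegree_eq_zero_of_isUnit ((isUnit_pow_iff hn0.ne').mp hbn), natDegree_zero⟩
  have hA : a ^ n ≠ 0 := pow_ne_zero n ha0
  have hB : b ^ n ≠ 0 := pow_ne_zero n hb0
  have hC : -(c ^ n) ≠ 0 := neg_ne_zero.mpr (pow_ne_zero n hc0)
  have hsum : a ^ n + b ^ n + -(c ^ n) = 0 := by rw [heq]; ring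
  rcases Polynomial.abc hA hB hC habn hsum with ⟨h1, h2, h3⟩ | ⟨d1, d2, d3⟩
  · -- degree contradiction
    have hrad : UniqueFactorizationMonoid.radical (a ^ n * b ^ n * -(c ^ n)) =
        UniqueFactorizationMonoid.radical a * UniqueFactorizationMonoid.radical b *
          UniqueFactorizationMonoid.radical c := by
      rw [UniqueFactorizationMonoid.radical_mul (hcan.symm.mul_left hbcn).isRelPrime,
        UniqueFactorizationMonoid.radical_mul habn.isRelPrime,
        UniqueFactorizationDomain.radical_neg,
        UniqueFactorizationMonoid.radical_pow a hn0.ne',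
        UniqueFactorizationMonoid.radical_pow b hn0.ne',
        UniqueFactorizationMonoid.radical_pow c hn0.ne']
    rw [hrad] at h1 h2 h3
    have hR : (UniqueFactorizationMonoid.radical a * UniqueFactorizationMonoid.radical b *
        UniqueFactorizationMonoid.radical c).natDegree ≤ (a * b * c).natDegree := by
      refine natDegree_le_of_dvd ?_ (mul_ne_zero (mul_ne_zero ha0 hb0) hc0)
      exact mul_dvd_mul (mul_dvd_mul (UniqueFactorizationMonoid.radical_dvd_self (a := a))
        (UniqueFactorizationMonoid.radical_dvd_self (a := b)))
        (UniqueFactorizationMonoid.radical_dvd_self (a := c))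
    rw [natDegree_mul (mul_ne_zero ha0 hb0) hc0, natDegree_mul ha0 hb0] at hR
    rw [natDegree_pow] at h1 h2
    rw [natDegree_neg, natDegree_pow] at h3
    have e1 : 3 * a.natDegree ≤ n * a.natDegree := Nat.mul_le_mul_right _ hn
    have e2 : 3 * b.natDegree ≤ n * b.natDegree := Nat.mul_le_mul_right _ hn
    have e3 : 3 * c.natDegree ≤ n * c.natDegree := Nat.mul_le_mul_right _ hn
    omega
  · -- derivatives zero case
    have k1 : a.natDegree = 0 := by
      have h := natDegree_eq_zero_of_derivative_eq_zero d1
      rw [natDegree_pow] at h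
      rcases Nat.mul_eq_zero.mp h with h' | h'
      · omega
      · exact h'
    have k2 : b.natDegree = 0 := by
      have h := natDegree_eq_zero_of_derivative_eq_zero d2
      rw [natDegree_pow] at h
      rcases Nat.mul_eq_zero.mp h with h' | h'
      · omega
      · exact h'
    have k3 : c.natDegree = 0 := by
      rw [derivative_neg, neg_eq_zero] at d3
      have h := natDegree_eq_zero_of_derivative_eq_zero d3
      rw [natDegree_pow] at h
      rcases Nat.mul_eq_zero.mp h with h' | h'
      · omega
      · exact h'
    exact hdeg ⟨k1, k2, k3⟩
end

section
/- Let p, q, r, s ∈ ℂ[x] with gcd(p,q,r,s) = 1, p^n + q^n = r^n + s^n for some n ≥ 1, all of p's−ps', q's−qs', r's−rs' nonzero, and k = max{deg p, deg q, deg r, deg s} = deg s. Then d = gcd(p^{n−1}(p's−ps'), q^{n−1}(q's−qs'), r^{n−1}(r's−rs')) satisfies deg d ≤ 6k − 3. -/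
open Polynomial

theorem gcd_degree_bound (n : ℕ) (hn : 1 ≤ n) (p q r s : ℂ[X])
    (hgcd : EuclideanDomain.gcd (EuclideanDomain.gcd (EuclideanDomain.gcd p q) r) s = 1)
    (heq : p ^ n + q ^ n = r ^ n + s ^ n)
    (hpw : derivative p * s - p * derivative s ≠ 0)
    (hqw : derivative q * s - q * derivative s ≠ 0)
    (hrw : derivative r * s - r * derivative s ≠ 0)
    (k : ℕ)
    (hk : k = max (max (max p.natDegree q.natDegree) r.natDegree) s.natDegree)
    (hks : k = s.natDegree) :
    ((EuclideanDomain.gcd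
        (EuclideanDomain.gcd
          (p ^ (n - 1) * (derivative p * s - p * derivative s))
          (q ^ (n - 1) * (derivative q * s - q * derivative s)))
        (r ^ (n - 1) * (derivative r * s - r * derivative s))).natDegree : ℤ) ≤
      6 * (k : ℤ) - 3 := by
  classical
  -- basic nonvanishing
  have hp0 : p ≠ 0 := by rintro rfl; simp at hpw
  have hq0 : q ≠ 0 := by rintro rfl; simp at hqw
  have hr0 : r ≠ 0 := by rintro rfl; simp at hrw
  have hs0 : s ≠ 0 := by rintro rfl; simp at hpw
  set A := derivative p * s - p * derivative s with hA
  set B := derivative q * s - q * derivative s with hB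
  set C := derivative r * s - r * derivative s with hC
  set d := EuclideanDomain.gcd
      (EuclideanDomain.gcd (p ^ (n - 1) * A) (q ^ (n - 1) * B))
      (r ^ (n - 1) * C) with hd
  have hP0 : p ^ (n - 1) * A ≠ 0 := mul_ne_zero (pow_ne_zero _ hp0) hpw
  have hQ0 : q ^ (n - 1) * B ≠ 0 := mul_ne_zero (pow_ne_zero _ hq0) hqw
  have hR0 : r ^ (n - 1) * C ≠ 0 := mul_ne_zero (pow_ne_zero _ hr0) hrw
  have hd0 : d ≠ 0 := by
    rw [hd, Ne, EuclideanDomain.gcd_eq_zero_iff]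
    rintro ⟨-, h⟩
    exact hR0 h
  have hdP : d ∣ p ^ (n - 1) * A :=
    dvd_trans (EuclideanDomain.gcd_dvd_left _ _) (EuclideanDomain.gcd_dvd_left _ _)
  have hdQ : d ∣ q ^ (n - 1) * B :=
    dvd_trans (EuclideanDomain.gcd_dvd_left _ _) (EuclideanDomain.gcd_dvd_right _ _)
  have hdR : d ∣ r ^ (n - 1) * C := EuclideanDomain.gcd_dvd_right _ _
  -- p, q, r have no common root
  have hnocr : ∀ a : ℂ, ¬(p.IsRoot a ∧ q.IsRoot a ∧ r.IsRoot a) := by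
    rintro a ⟨hpa, hqa, hra⟩
    have hsa : s.IsRoot a := by
      have hn0 : n ≠ 0 := by omega
      have h := congrArg (eval a) heq
      simp only [eval_add, eval_pow, hpa.eq_zero, hqa.eq_zero, hra.eq_zero,
        zero_pow hn0, zero_add, add_zero] at h
      have : eval a s ^ n = 0 := h.symm
      exact pow_eq_zero_iff hn0 |>.mp this
    have h1 : (X - Polynomial.C a) ∣ (1 : ℂ[X]) := by
      rw [← hgcd]
      exact EuclideanDomain.dvd_gcd
        (EuclideanDomain.dvd_gcd
          (EuclideanDomain.dvd_gcd (dvd_iff_isRoot.mpr hpa) (dvd_iff_isRoot.mpr hqa))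
          (dvd_iff_isRoot.mpr hra))
        (dvd_iff_isRoot.mpr hsa)
    have h2 := natDegree_le_of_dvd h1 one_ne_zero
    simp [natDegree_X_sub_C] at h2
  -- root multiplicity monotonicity under divisibility
  have hrm : ∀ (a : ℂ) (u v : ℂ[X]), v ≠ 0 → u ∣ v →
      rootMultiplicity a u ≤ rootMultiplicity a v := by
    intro a u v hv huv
    rw [← count_roots, ← count_roots]
    exact Multiset.count_le_of_le _ (roots.le_of_dvd hv huv)
  have hABC0 : A * B * C ≠ 0 := mul_ne_zero (mul_ne_zero hpw hqw) hrw
  -- d divides A * B * C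
  have hdvd : d ∣ A * B * C := by
    rw [Splits.dvd_iff_roots_le_roots (IsAlgClosed.splits d) hd0 hABC0,
      Multiset.le_iff_count]
    intro a
    rw [count_roots, count_roots, rootMultiplicity_mul hABC0,
      rootMultiplicity_mul (mul_ne_zero hpw hqw)]
    have key : ∀ (u W : ℂ[X]), W ≠ 0 → ¬u.IsRoot a → d ∣ u ^ (n - 1) * W →
        rootMultiplicity a d ≤ rootMultiplicity a W := by
      intro u W hW hu hdvd'
      have hu0 : u ≠ 0 := fun h => hu (by simp [h, IsRoot])
      have h1 := hrm a d (u ^ (n - 1) * W) (mul_ne_zero (pow_ne_zero _ hu0) hW) hdvd'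
      rw [rootMultiplicity_mul (mul_ne_zero (pow_ne_zero _ hu0) hW)] at h1
      have h2 : rootMultiplicity a (u ^ (n - 1)) = 0 := by
        apply rootMultiplicity_eq_zero
        simp only [IsRoot, eval_pow]
        exact pow_ne_zero _ hu
      omega
    rcases not_and_or.mp (hnocr a) with hna | hnb
    · exact le_trans (key p A hpw hna hdP) (by omega)
    rcases not_and_or.mp hnb with hna | hna
    · exact le_trans (key q B hqw hna hdQ) (by omega)
    · exact le_trans (key r C hrw hna hdR) (by omega)
  -- degree bounds
  have hpk : p.natDegree ≤ k := by
    rw [hk]; exact le_trans (le_max_left _ _) (le_trans (le_max_left _ _) (le_max_left _ _))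
  have hqk : q.natDegree ≤ k := by
    rw [hk]; exact le_trans (le_max_right _ _) (le_trans (le_max_left _ _) (le_max_left _ _))
  have hrk : r.natDegree ≤ k := by
    rw [hk]; exact le_trans (le_max_right _ _) (le_max_left _ _)
  have hk1 : 1 ≤ k := by
    by_contra h
    have hsdeg : s.natDegree = 0 := by omega
    have hpdeg : p.natDegree = 0 := by omega
    obtain ⟨a, ha⟩ := natDegree_eq_zero.mp hpdeg
    obtain ⟨b, hb⟩ := natDegree_eq_zero.mp hsdeg
    apply hpw
    rw [hA, ← ha, ← hb]
    simp
  have hbound : ∀ u : ℂ[X], u.natDegree ≤ k →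
      (derivative u * s - u * derivative s).natDegree ≤ 2 * k - 1 := by
    intro u hu
    have h1 : (derivative u * s).natDegree ≤ u.natDegree - 1 + s.natDegree :=
      le_trans natDegree_mul_le (Nat.add_le_add_right (natDegree_derivative_le u) _)
    have h2 : (u * derivative s).natDegree ≤ u.natDegree + (s.natDegree - 1) :=
      le_trans natDegree_mul_le (Nat.add_le_add_left (natDegree_derivative_le s) _)
    have h3 := natDegree_sub_le (derivative u * s) (u * derivative s)
    omega
  have hdABC : d.natDegree ≤ (A * B * C).natDegree := natDegree_le_of_dvd hdvd hABC0
  have hABCdeg : (A * B * C).natDegree ≤ A.natDegree + B.natDegree + C.natDegree :=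
    le_trans natDegree_mul_le (Nat.add_le_add_right natDegree_mul_le _)
  have hAk := hbound p hpk
  have hBk := hbound q hqk
  have hCk := hbound r hrk
  rw [← hA] at hAk
  rw [← hB] at hBk
  rw [← hC] at hCk
  omega
end
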